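/- arXiv:2410.20858 — 4 statements merged into one kernel-verified Lean document; each statement's English description precedes it below -/
import Mathlib

section
/- Let ν ∈ P(E) satisfy ∫ e^{αφ} dν < ∞ for every α > 0, let F : P_φ(E) → (−∞,+∞] be measurable, and set I(μ) := H(μ|ν) + F(μ). If I is lower semi-continuous on P_φ(E) and F is bounded from below on P_φ(E), then for every c ∈ ℝ the sublevel set {μ ∈ P_φ(E) : I(μ) ≤ c} is compact in P_φ(E). -/
open MeasureTheory Filter Topology Set

noncomputable section

/-- `P_φ(E)`: Borel probability measures with finite `φ`-integral. -/
structure Pphi (E : Type*) [MeasurableSpace E] (φ : E → ℝ) where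
  toPM : MeasureTheory.ProbabilityMeasure E
  finInt : ∫⁻ x, ENNReal.ofReal (φ x) ∂(toPM : MeasureTheory.Measure E) < ⊤

namespace Pphi

variable {E : Type*} [MeasurableSpace E] {φ : E → ℝ}

/-- The underlying measure. -/
def m (μ : Pphi E φ) : Measure E := (μ.toPM : Measure E)

instance (μ : Pphi E φ) : IsProbabilityMeasure μ.m := μ.toPM.prop

/-- The topology of `P_φ(E)`: induced by weak convergence together with convergence of
the `φ`-integrals. -/
instance instTop [TopologicalSpace E] [OpensMeasurableSpace E] :
    TopologicalSpace (Pphi E φ) :=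
  TopologicalSpace.induced (fun μ => ((μ.toPM : ProbabilityMeasure E), ∫ x, φ x ∂μ.m))
    inferInstance

/-- Convex combination `(1-ε)μ + εν` in `P_φ(E)` (junk value `μ` if `ε ∉ [0,1]`). -/
def comb (μ ν : Pphi E φ) (ε : ℝ) : Pphi E φ :=
  if h : 0 ≤ ε ∧ ε ≤ 1 then
    { toPM := ⟨ENNReal.ofReal (1 - ε) • μ.m + ENNReal.ofReal ε • ν.m, by
        constructor
        rw [Measure.add_apply, Measure.smul_apply, Measure.smul_apply, measure_univ,
          measure_univ, smul_eq_mul, smul_eq_mul, mul_one, mul_one,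
          ← ENNReal.ofReal_add (by linarith [h.2]) h.1]
        norm_num⟩
      finInt := by
        show (∫⁻ x, ENNReal.ofReal (φ x)
            ∂(ENNReal.ofReal (1 - ε) • μ.m + ENNReal.ofReal ε • ν.m)) < ⊤
        rw [lintegral_add_measure, lintegral_smul_measure, lintegral_smul_measure]
        exact ENNReal.add_lt_top.mpr
          ⟨ENNReal.mul_lt_top ENNReal.ofReal_lt_top μ.finInt,
           ENNReal.mul_lt_top ENNReal.ofReal_lt_top ν.finInt⟩ }
  else μ

end Pphi

open scoped Classical in
/-- Relative entropy `H(μ|ν) = ∫ log (dμ/dν) dμ` if `μ ≪ ν` (and the integral exists),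
`+∞` otherwise. -/
def relEnt {E : Type*} [MeasurableSpace E] (μ ν : Measure E) : EReal :=
  if μ ≪ ν ∧ MeasureTheory.Integrable (fun x => Real.log ((μ.rnDeriv ν x).toReal)) μ
  then ((∫ x, Real.log ((μ.rnDeriv ν x).toReal) ∂μ : ℝ) : EReal)
  else ⊤

variable {E : Type*} [MetricSpace E] [CompleteSpace E]
  [TopologicalSpace.SeparableSpace E] [MeasurableSpace E] [BorelSpace E]


section AuxLemmas

/-- Young-type inequality: `u*v ≤ u log u - u + exp v` for `u ≥ 0`. -/
lemma young {u v : ℝ} (hu : 0 ≤ u) : u * v ≤ u * Real.log u - u + Real.exp v := by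
  rcases eq_or_lt_of_le hu with h | h
  · simp [← h]
    positivity
  · have h1 : (v - Real.log u) + 1 ≤ Real.exp (v - Real.log u) := Real.add_one_le_exp _
    have h2 : Real.exp (v - Real.log u) = Real.exp v / u := by
      rw [Real.exp_sub, Real.exp_log h]
    rw [h2] at h1
    have := mul_le_mul_of_nonneg_left h1 hu
    rw [mul_div_cancel₀ _ (ne_of_gt h)] at this
    nlinarith [this]

/-- triangle-type inequality for measures of sets. -/
lemma measDiffReal {α : Type*} [MeasurableSpace α] (μ : Measure α) [IsFiniteMeasure μ]
    {A B : Set α} (hA : MeasurableSet A) (hB : MeasurableSet B) :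
    |(μ A).toReal - (μ B).toReal| ≤ (μ (A \ B)).toReal + (μ (B \ A)).toReal := by
  have hfin : ∀ s : Set α, μ s ≠ ⊤ := fun s => measure_ne_top μ s
  have h1 : μ A ≤ μ B + μ (A \ B) := by
    calc μ A ≤ μ (B ∪ (A \ B)) := measure_mono (by intro x hx; by_cases h : x ∈ B <;> simp [h, hx])
    _ ≤ μ B + μ (A \ B) := measure_union_le _ _
  have h2 : μ B ≤ μ A + μ (B \ A) := by
    calc μ B ≤ μ (A ∪ (B \ A)) := measure_mono (by intro x hx; by_cases h : x ∈ A <;> simp [h, hx])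
    _ ≤ μ A + μ (B \ A) := measure_union_le _ _
  have t1 : (μ A).toReal ≤ (μ B).toReal + (μ (A \ B)).toReal := by
    rw [← ENNReal.toReal_add (hfin _) (hfin _)]
    exact ENNReal.toReal_mono (by finiteness) h1
  have t2 : (μ B).toReal ≤ (μ A).toReal + (μ (B \ A)).toReal := by
    rw [← ENNReal.toReal_add (hfin _) (hfin _)]
    exact ENNReal.toReal_mono (by finiteness) h2
  rw [abs_sub_le_iff]
  constructor <;> [skip; skip] <;> nlinarith [ENNReal.toReal_nonneg (a := μ (A \ B)), ENNReal.toReal_nonneg (a := μ (B \ A))]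


section MeasSpace
variable {E : Type*} [MeasurableSpace E]

/-- Key entropy inequality (Young/duality form):
`∫ g dμ ≤ M - 1 + ∫ e^g dν` when `H(μ|ν) ≤ M`, `g ≥ 0` measurable, `e^g ∈ L¹(ν)`. -/
lemma keyIneq (μ ν : Measure E) [IsProbabilityMeasure μ] [IsProbabilityMeasure ν]
    (hac : μ ≪ ν)
    (hint : Integrable (fun x => Real.log ((μ.rnDeriv ν x).toReal)) μ)
    {M : ℝ} (hent : ∫ x, Real.log ((μ.rnDeriv ν x).toReal) ∂μ ≤ M)
    {g : E → ℝ} (hg : Measurable g) (hg0 : ∀ x, 0 ≤ g x)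
    (hge : Integrable (fun x => Real.exp (g x)) ν) :
    Integrable g μ ∧ ∫ x, g x ∂μ ≤ M - 1 + ∫ x, Real.exp (g x) ∂ν := by
  set f : E → ℝ := fun x => (μ.rnDeriv ν x).toReal with hf
  have hf_meas : Measurable f := (Measure.measurable_rnDeriv μ ν).ennreal_toReal
  have hf0 : ∀ x, 0 ≤ f x := fun x => ENNReal.toReal_nonneg
  -- f * log f integrable wrt ν
  have hint1 : Integrable (fun x => f x * Real.log (f x)) ν := by
    have := (integrable_rnDeriv_smul_iff (E := ℝ)
      (f := fun x => Real.log ((μ.rnDeriv ν x).toReal)) hac).mpr hint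
    simpa [smul_eq_mul] using this
  have hint_f : Integrable f ν := Measure.integrable_toReal_rnDeriv
  -- pointwise bound
  have hpt : ∀ x, f x * g x ≤ f x * Real.log (f x) - f x + Real.exp (g x) :=
    fun x => young (hf0 x)
  -- integrability of f*g
  have hfg_meas : Measurable (fun x => f x * g x) := hf_meas.mul hg
  have hint_fg : Integrable (fun x => f x * g x) ν := by
    refine Integrable.mono' ((hint1.sub hint_f).add hge) hfg_meas.aestronglyMeasurable ?_
    filter_upwards with x
    rw [Real.norm_eq_abs, abs_of_nonneg (mul_nonneg (hf0 x) (hg0 x))]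
    simpa using hpt x
  -- integral bound over ν
  have hle : ∫ x, f x * g x ∂ν ≤ ∫ x, (f x * Real.log (f x) - f x + Real.exp (g x)) ∂ν :=
    integral_mono hint_fg ((hint1.sub hint_f).add hge) (fun x => hpt x)
  have hsplit : ∫ x, (f x * Real.log (f x) - f x + Real.exp (g x)) ∂ν
      = (∫ x, f x * Real.log (f x) ∂ν) - (∫ x, f x ∂ν) + ∫ x, Real.exp (g x) ∂ν := by
    have e1 : ∫ x, ((f x * Real.log (f x) - f x) + Real.exp (g x)) ∂ν
        = (∫ x, (f x * Real.log (f x) - f x) ∂ν) + ∫ x, Real.exp (g x) ∂ν :=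
      integral_add (hint1.sub hint_f) hge
    have e2 : ∫ x, (f x * Real.log (f x) - f x) ∂ν
        = (∫ x, f x * Real.log (f x) ∂ν) - ∫ x, f x ∂ν := integral_sub hint1 hint_f
    rw [e1, e2]
  have hEnt : ∫ x, f x * Real.log (f x) ∂ν = ∫ x, Real.log ((μ.rnDeriv ν x).toReal) ∂μ := by
    have := integral_rnDeriv_smul (E := ℝ)
      (f := fun x => Real.log ((μ.rnDeriv ν x).toReal)) hac
    simpa [smul_eq_mul] using this
  have hOne : ∫ x, f x ∂ν = 1 := by
    rw [hf]
    rw [Measure.integral_toReal_rnDeriv hac]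
    simp
  -- transfer to μ
  have hig : Integrable g μ := by
    have := (integrable_rnDeriv_smul_iff (E := ℝ) (f := g) hac).mp (by simpa [smul_eq_mul] using hint_fg)
    exact this
  have hgint : ∫ x, g x ∂μ = ∫ x, f x * g x ∂ν := by
    have := integral_rnDeriv_smul (E := ℝ) (f := g) hac
    have h2 : ∫ x, f x * g x ∂ν = ∫ x, g x ∂μ := by simpa [smul_eq_mul] using this
    exact h2.symm
  refine ⟨hig, ?_⟩
  rw [hgint]
  calc ∫ x, f x * g x ∂ν ≤ _ := hle
  _ = (∫ x, f x * Real.log (f x) ∂ν) - (∫ x, f x ∂ν) + ∫ x, Real.exp (g x) ∂ν := hsplit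
  _ ≤ M - 1 + ∫ x, Real.exp (g x) ∂ν := by
      rw [hEnt, hOne]
      linarith [hent]


/-- Absolute-continuity bound: `μ(A) ≤ (M + e^s ν(A))/s`. -/
lemma absBound (μ ν : Measure E) [IsProbabilityMeasure μ] [IsProbabilityMeasure ν]
    (hac : μ ≪ ν)
    (hint : Integrable (fun x => Real.log ((μ.rnDeriv ν x).toReal)) μ)
    {M : ℝ} (hent : ∫ x, Real.log ((μ.rnDeriv ν x).toReal) ∂μ ≤ M)
    {s : ℝ} (hs : 0 < s) {A : Set E} (hA : MeasurableSet A) :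
    (μ A).toReal ≤ (M + Real.exp s * (ν A).toReal) / s := by
  set g : E → ℝ := A.indicator (fun _ => s) with hgdef
  have hg : Measurable g := measurable_const.indicator hA
  have hg0 : ∀ x, 0 ≤ g x := fun x => by
    by_cases h : x ∈ A <;> simp [hgdef, h, hs.le]
  have hb : ∀ x, Real.exp (g x) = 1 + A.indicator (fun _ => Real.exp s - 1) x := by
    intro x; by_cases h : x ∈ A <;> simp [hgdef, h]
  have hin : Integrable (fun x => A.indicator (fun _ => Real.exp s - 1) x) ν :=
    (integrable_const (Real.exp s - 1)).indicator hA
  have hge : Integrable (fun x => Real.exp (g x)) ν := by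
    have : (fun x => Real.exp (g x)) = fun x => 1 + A.indicator (fun _ => Real.exp s - 1) x := by
      funext x; exact hb x
    rw [this]
    exact (integrable_const 1).add hin
  obtain ⟨hig, hle⟩ := keyIneq μ ν hac hint hent hg hg0 hge
  have hL : ∫ x, g x ∂μ = s * (μ A).toReal := by
    rw [hgdef, integral_indicator_const _ hA]
    simp [smul_eq_mul, mul_comm, Measure.real]
  have hR : ∫ x, Real.exp (g x) ∂ν = 1 + (Real.exp s - 1) * (ν A).toReal := by
    have : (fun x => Real.exp (g x)) = fun x => 1 + A.indicator (fun _ => Real.exp s - 1) x := by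
      funext x; exact hb x
    rw [this]
    rw [integral_add (integrable_const 1) hin]
    rw [integral_indicator_const _ hA]
    simp [smul_eq_mul, mul_comm, Measure.real]
  rw [hL] at hle
  rw [hR] at hle
  have hνA : 0 ≤ (ν A).toReal := ENNReal.toReal_nonneg
  rw [le_div_iff₀ hs]
  nlinarith [Real.exp_pos s, hle]

/-- `exp (α φ)` is `ν`-integrable. -/
lemma expIntegrable (ν : Measure E) {φ : E → ℝ} (hφm : Measurable φ)
    {α : ℝ} (hexp : ∫⁻ x, ENNReal.ofReal (Real.exp (α * φ x)) ∂ν < ⊤) :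
    Integrable (fun x => Real.exp (α * φ x)) ν := by
  refine ⟨((hφm.const_mul α).exp).aestronglyMeasurable, ?_⟩
  rw [hasFiniteIntegral_iff_norm]
  have : ∀ x, ENNReal.ofReal ‖Real.exp (α * φ x)‖ = ENNReal.ofReal (Real.exp (α * φ x)) := by
    intro x; rw [Real.norm_eq_abs, abs_of_nonneg (Real.exp_nonneg _)]
  simpa [this] using hexp

/-- Uniform integrability bound: `∫ (φ - R)⁺ dμ ≤ (M + tail)/α`. -/
lemma uiBound (μ ν : Measure E) [IsProbabilityMeasure μ] [IsProbabilityMeasure ν]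
    (hac : μ ≪ ν)
    (hint : Integrable (fun x => Real.log ((μ.rnDeriv ν x).toReal)) μ)
    {M : ℝ} (hent : ∫ x, Real.log ((μ.rnDeriv ν x).toReal) ∂μ ≤ M)
    {φ : E → ℝ} (hφm : Measurable φ) (hφ0 : ∀ x, 0 ≤ φ x)
    {α : ℝ} (hα : 0 < α)
    (hexp : ∫⁻ x, ENNReal.ofReal (Real.exp (α * φ x)) ∂ν < ⊤)
    {R : ℝ} (hR : 0 ≤ R) :
    Integrable (fun x => max (φ x - R) 0) μ ∧
    ∫ x, max (φ x - R) 0 ∂μ ≤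
      (M + ∫ x in {x | R < φ x}, Real.exp (α * φ x) ∂ν) / α := by
  have hexpInt := expIntegrable ν hφm hexp
  set g : E → ℝ := fun x => α * max (φ x - R) 0 with hgdef
  have hg : Measurable g := ((hφm.sub measurable_const).max measurable_const).const_mul α
  have hg0 : ∀ x, 0 ≤ g x := fun x => mul_nonneg hα.le (le_max_right _ _)
  -- bound exp g
  have hub : ∀ x, Real.exp (g x) ≤ 1 + ({x | R < φ x}.indicator (fun x => Real.exp (α * φ x))) x := by
    intro x
    by_cases h : R < φ x
    · have : g x = α * (φ x - R) := by rw [hgdef]; simp [max_eq_left (by linarith : (0:ℝ) ≤ φ x - R)]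
      rw [this]
      simp only [indicator_of_mem (show x ∈ {x | R < φ x} from h)]
      have : Real.exp (α * (φ x - R)) ≤ Real.exp (α * φ x) := by
        apply Real.exp_le_exp.2
        nlinarith
      linarith
    · have : g x = 0 := by rw [hgdef]; simp [max_eq_right (by linarith : φ x - R ≤ (0:ℝ))]
      rw [this]
      simp only [indicator_of_notMem (show x ∉ {x | R < φ x} from h)]
      simp
  have hSmeas : MeasurableSet {x | R < φ x} := measurableSet_lt measurable_const hφm
  have hindInt : Integrable ({x | R < φ x}.indicator (fun x => Real.exp (α * φ x))) ν :=
    hexpInt.indicator hSmeas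
  have hge : Integrable (fun x => Real.exp (g x)) ν := by
    refine Integrable.mono' ((integrable_const 1).add hindInt) (hg.exp).aestronglyMeasurable ?_
    filter_upwards with x
    rw [Real.norm_eq_abs, abs_of_nonneg (Real.exp_nonneg _)]
    exact hub x
  obtain ⟨hig, hle⟩ := keyIneq μ ν hac hint hent hg hg0 hge
  have higm : Integrable (fun x => max (φ x - R) 0) μ := by
    have : (fun x => max (φ x - R) 0) = fun x => (1/α) * g x := by
      funext x; rw [hgdef]; field_simp
    rw [this]
    exact hig.const_mul _
  refine ⟨higm, ?_⟩
  have hL : ∫ x, g x ∂μ = α * ∫ x, max (φ x - R) 0 ∂μ := by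
    rw [hgdef]; exact integral_const_mul α _
  have hR2 : ∫ x, Real.exp (g x) ∂ν ≤ 1 + ∫ x in {x | R < φ x}, Real.exp (α * φ x) ∂ν := by
    have h1 : ∫ x, Real.exp (g x) ∂ν ≤ ∫ x, (1 + ({x | R < φ x}.indicator (fun x => Real.exp (α * φ x))) x) ∂ν :=
      integral_mono hge ((integrable_const 1).add hindInt) hub
    have h2 : ∫ x, (1 + ({x | R < φ x}.indicator (fun x => Real.exp (α * φ x))) x) ∂ν
        = 1 + ∫ x in {x | R < φ x}, Real.exp (α * φ x) ∂ν := by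
      rw [integral_add (integrable_const 1) hindInt, integral_indicator hSmeas]
      simp
    linarith [h1, h2.symm.le, h2]
  rw [hL] at hle
  rw [le_div_iff₀ hα]
  nlinarith [hle, hR2]

/-- Tail integrals of `e^{αφ}` tend to zero. -/
lemma tailTendsto (ν : Measure E) [IsProbabilityMeasure ν] {φ : E → ℝ} (hφm : Measurable φ)
    {α : ℝ}
    (hexp : ∫⁻ x, ENNReal.ofReal (Real.exp (α * φ x)) ∂ν < ⊤) :
    Tendsto (fun n : ℕ => ∫ x in {x | (n:ℝ) < φ x}, Real.exp (α * φ x) ∂ν) atTop (𝓝 0) := by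
  have hexpInt := expIntegrable ν hφm hexp
  have h : ∀ n : ℕ, ∫ x in {x | (n:ℝ) < φ x}, Real.exp (α * φ x) ∂ν
      = ∫ x, ({x | (n:ℝ) < φ x}.indicator (fun x => Real.exp (α * φ x))) x ∂ν := by
    intro n
    rw [integral_indicator (measurableSet_lt measurable_const hφm)]
  simp only [h]
  have := tendsto_integral_of_dominated_convergence (μ := ν)
    (F := fun n x => ({x | (n:ℝ) < φ x}.indicator (fun x => Real.exp (α * φ x))) x)
    (f := fun _ => 0) (bound := fun x => Real.exp (α * φ x))
    (fun n => (hexpInt.aestronglyMeasurable.indicator (measurableSet_lt measurable_const hφm)))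
    hexpInt
    (fun n => by
      filter_upwards with x
      by_cases hx : x ∈ {x | (n:ℝ) < φ x} <;>
        simp [hx, Real.norm_eq_abs, abs_of_nonneg (Real.exp_nonneg _), Real.exp_nonneg])
    (by
      filter_upwards with x
      rw [tendsto_iff_forall_eventually_mem]
      intro s hs
      obtain ⟨n₀, hn₀⟩ := exists_nat_gt (φ x)
      filter_upwards [eventually_ge_atTop n₀] with n hn
      have : x ∉ {x | (n:ℝ) < φ x} := by
        simp only [mem_setOf_eq, not_lt]
        calc φ x ≤ n₀ := hn₀.le
        _ ≤ n := Nat.cast_le.2 hn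
      simp [this]
      exact mem_of_mem_nhds hs)
  simpa using this


/-- Setwise convergence implies convergence of integrals of bounded nonneg measurable functions. -/
lemma setwiseIntegralConv (μs : ℕ → Measure E) (μ : Measure E)
    [hPj : ∀ j, IsProbabilityMeasure (μs j)] [hP : IsProbabilityMeasure μ]
    (hconv : ∀ B : Set E, MeasurableSet B →
      Tendsto (fun j => ((μs j) B).toReal) atTop (𝓝 ((μ B).toReal)))
    {g : E → ℝ} (hg : Measurable g) {C : ℝ} (hg0 : ∀ x, 0 ≤ g x) (hgC : ∀ x, g x ≤ C) :
    Tendsto (fun j => ∫ x, g x ∂(μs j)) atTop (𝓝 (∫ x, g x ∂μ)) := by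
  have hne : Nonempty E := by
    by_contra h
    rw [not_nonempty_iff] at h
    have h1 : μ univ = 1 := measure_univ
    rw [Set.univ_eq_empty_iff.2 h, measure_empty] at h1
    exact zero_ne_one h1
  obtain ⟨x₀⟩ := hne
  have hC0 : 0 ≤ C := le_trans (hg0 x₀) (hgC x₀)
  have hSmeas : ∀ t : ℝ, MeasurableSet {a | t < g a} := fun t =>
    measurableSet_lt measurable_const hg
  -- layer cake for each measure
  have hlay : ∀ (m : Measure E), ∫⁻ x, ENNReal.ofReal (g x) ∂m
      = ∫⁻ t in Set.Ioi (0:ℝ), m {a | t < g a} := fun m =>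
    lintegral_eq_lintegral_meas_lt m (Filter.Eventually.of_forall hg0) hg.aemeasurable
  -- tendsto of lintegrals via dominated convergence
  set F : ℕ → ℝ → ENNReal := fun j t => (μs j) {a | t < g a} with hF
  set f : ℝ → ENNReal := fun t => μ {a | t < g a} with hfdef
  have hFmeas : ∀ j, Measurable (F j) := by
    intro j
    apply Antitone.measurable
    intro t s hts
    exact measure_mono (fun a ha => lt_of_le_of_lt hts ha)
  have hbound : ∀ j, F j ≤ᶠ[ae (volume.restrict (Set.Ioi (0:ℝ)))]
      (Set.Ioc (0:ℝ) C).indicator (fun _ => (1:ENNReal)) := by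
    intro j
    filter_upwards [ae_restrict_mem measurableSet_Ioi] with t ht
    by_cases hC : C ≤ t
    · have : {a | t < g a} = ∅ := by
        ext a; simp only [mem_setOf_eq, mem_empty_iff_false, iff_false, not_lt]
        exact le_trans (hgC a) hC
      simp [hF, this]
    · push_neg at hC
      have htmem : t ∈ Set.Ioc (0:ℝ) C := ⟨ht, hC.le⟩
      simp only [indicator_of_mem htmem]
      exact prob_le_one
  have hboundInt : ∫⁻ t in Set.Ioi (0:ℝ),
      (Set.Ioc (0:ℝ) C).indicator (fun _ => (1:ENNReal)) t ≠ ⊤ := by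
    rw [lintegral_indicator measurableSet_Ioc]
    simp only [lintegral_one]
    rw [Measure.restrict_restrict measurableSet_Ioc, Measure.restrict_apply MeasurableSet.univ]
    simp only [univ_inter]
    refine ne_of_lt ?_
    calc volume (Set.Ioc 0 C ∩ Set.Ioi 0) ≤ volume (Set.Ioc (0:ℝ) C) := measure_mono inter_subset_left
    _ < ⊤ := by simp [Real.volume_Ioc]
  have hptconv : ∀ t : ℝ, Tendsto (fun j => F j t) atTop (𝓝 (f t)) := by
    intro t
    have h1 : ∀ j, F j t = ENNReal.ofReal (((μs j) {a | t < g a}).toReal) := fun j =>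
      (ENNReal.ofReal_toReal (measure_ne_top _ _)).symm
    have h2 : f t = ENNReal.ofReal ((μ {a | t < g a}).toReal) :=
      (ENNReal.ofReal_toReal (measure_ne_top _ _)).symm
    simp only [h1, h2]
    exact (ENNReal.continuous_ofReal.tendsto _).comp (hconv _ (hSmeas t))
  have hlconv : Tendsto (fun j => ∫⁻ t in Set.Ioi (0:ℝ), F j t) atTop
      (𝓝 (∫⁻ t in Set.Ioi (0:ℝ), f t)) :=
    tendsto_lintegral_of_dominated_convergence _ hFmeas hbound hboundInt
      (Filter.Eventually.of_forall fun t => hptconv t)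
  -- the limit lintegral is finite
  have hfin : ∫⁻ t in Set.Ioi (0:ℝ), f t ≠ ⊤ := by
    rw [← hlay]
    refine ne_of_lt (lt_of_le_of_lt ?_ (show ENNReal.ofReal C * 1 < ⊤ by simp))
    calc ∫⁻ x, ENNReal.ofReal (g x) ∂μ ≤ ∫⁻ _, ENNReal.ofReal C ∂μ :=
      lintegral_mono fun x => ENNReal.ofReal_le_ofReal (hgC x)
    _ = ENNReal.ofReal C * 1 := by rw [lintegral_const]; simp
  -- convert to Bochner integrals
  have hBint : ∀ (m : Measure E) [IsProbabilityMeasure m],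
      ∫ x, g x ∂m = (∫⁻ t in Set.Ioi (0:ℝ), m {a | t < g a}).toReal := by
    intro m _
    rw [integral_eq_lintegral_of_nonneg_ae (Filter.Eventually.of_forall hg0)
      hg.aestronglyMeasurable, hlay m]
  have := (ENNReal.tendsto_toReal hfin).comp hlconv
  rw [hBint μ]
  convert this using 2 with j
  rw [hBint (μs j)]
  rfl


end MeasSpace

section MetricAux
variable {E : Type*} [MetricSpace E] [TopologicalSpace.SeparableSpace E]
  [MeasurableSpace E] [BorelSpace E]

/-- A countable family of open sets whose finite unions approximate every Borel set in
`ν`-measure. -/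
lemma existsApproxFamily (ν : Measure E) [IsFiniteMeasure ν] :
    ∃ e0 : ℕ → Set E, (∀ i, IsOpen (e0 i)) ∧
      ∀ B : Set E, MeasurableSet B → ∀ ε : ℝ, 0 < ε →
        ∃ t : Finset ℕ, (ν ((⋃ i ∈ t, e0 i) \ B)).toReal ≤ ε ∧
          (ν (B \ ⋃ i ∈ t, e0 i)).toReal ≤ ε := by
  have : SecondCountableTopology E := UniformSpace.secondCountable_of_separable E
  obtain ⟨b, hbc, -, hbasis⟩ := TopologicalSpace.exists_countable_basis E
  have hc : (insert (∅ : Set E) b).Countable := hbc.insert _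
  have hne : (insert (∅ : Set E) b).Nonempty := ⟨∅, mem_insert _ _⟩
  obtain ⟨e0, he0⟩ := hc.exists_eq_range hne
  have he0open : ∀ i, IsOpen (e0 i) := by
    intro i
    have : e0 i ∈ insert (∅ : Set E) b := he0 ▸ mem_range_self i
    rcases this with h | h
    · rw [h]; exact isOpen_empty
    · exact hbasis.isOpen h
  refine ⟨e0, he0open, ?_⟩
  intro B hB ε hε
  -- outer regularity
  obtain ⟨G, hBG, hGopen, -, hGB⟩ := hB.exists_isOpen_diff_lt (measure_ne_top ν B)
    (show ENNReal.ofReal ε ≠ 0 by simp [hε, hε.le])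
  -- G is a union of members of the family
  set I : Set ℕ := {i | e0 i ⊆ G} with hI
  have hGU : G = ⋃ i ∈ I, e0 i := by
    apply Subset.antisymm
    · intro x hx
      obtain ⟨s, hsb, hxs, hsG⟩ := hbasis.exists_subset_of_mem_open hx hGopen
      have : s ∈ insert (∅ : Set E) b := mem_insert_of_mem _ hsb
      rw [he0] at this
      obtain ⟨i, hi⟩ := this
      exact mem_biUnion (show i ∈ I by rw [hI]; rw [mem_setOf_eq, hi]; exact hsG)
        (by rw [hi]; exact hxs)
    · exact iUnion₂_subset fun i hi => hi
  set V : ℕ → Set E := fun N => ⋃ i ∈ {j ∈ I | j ≤ N}, e0 i with hV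
  have hVmono : Monotone V := by
    intro N M hNM
    apply iUnion₂_subset
    intro i hi
    exact subset_biUnion_of_mem (u := fun i => e0 i) ⟨hi.1, hi.2.trans hNM⟩
  have hVG : ⋃ N, V N = G := by
    rw [hGU]
    apply Subset.antisymm
    · exact iUnion_subset fun N => iUnion₂_subset fun i hi => subset_biUnion_of_mem hi.1
    · intro x hx
      obtain ⟨i, hi, hxi⟩ := mem_iUnion₂.1 hx
      exact mem_iUnion.2 ⟨i, mem_biUnion ⟨hi, le_refl i⟩ hxi⟩
  have hVsub : ∀ N, V N ⊆ G := fun N => by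
    rw [← hVG]; exact subset_iUnion V N
  have htend : Tendsto (fun N => (ν (V N)).toReal) atTop (𝓝 ((ν G).toReal)) := by
    have h1 : Tendsto (⇑ν ∘ V) atTop (𝓝 (ν (⋃ N, V N))) := tendsto_measure_iUnion_atTop hVmono
    rw [hVG] at h1
    exact (ENNReal.tendsto_toReal (measure_ne_top ν G)).comp h1
  have : ∀ᶠ N in atTop, (ν G).toReal - (ν (V N)).toReal ≤ ε := by
    have := Metric.tendsto_atTop.1 htend ε hε
    obtain ⟨N₀, hN₀⟩ := this
    filter_upwards [eventually_ge_atTop N₀] with N hN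
    have := hN₀ N hN
    rw [Real.dist_eq, abs_lt] at this
    linarith [this.1]
  obtain ⟨N, hN⟩ := this.exists
  have hfin : {j ∈ I | j ≤ N}.Finite := (finite_Iic N).subset fun j hj => hj.2
  refine ⟨hfin.toFinset, ?_, ?_⟩
  · -- (⋃ i ∈ t, e0 i) \ B ⊆ G \ B
    have hsub : (⋃ i ∈ hfin.toFinset, e0 i) ⊆ G := by
      apply iUnion₂_subset
      intro i hi
      rw [Set.Finite.mem_toFinset] at hi
      exact hi.1
    have h1 : ν ((⋃ i ∈ hfin.toFinset, e0 i) \ B) ≤ ν (G \ B) :=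
      measure_mono (diff_subset_diff_left hsub)
    calc (ν ((⋃ i ∈ hfin.toFinset, e0 i) \ B)).toReal
        ≤ (ν (G \ B)).toReal := ENNReal.toReal_mono (measure_ne_top _ _) h1
      _ ≤ ε := ENNReal.toReal_le_of_le_ofReal hε.le hGB.le
  · -- B \ U t ⊆ G \ V N
    have hUV : (⋃ i ∈ hfin.toFinset, e0 i) = V N := by
      rw [hV]
      ext x
      simp only [mem_iUnion, Set.Finite.mem_toFinset]
    rw [hUV]
    have h1 : ν (B \ V N) ≤ ν (G \ V N) := measure_mono (diff_subset_diff_left hBG)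
    have h2 : (ν (G \ V N)).toReal = (ν G).toReal - (ν (V N)).toReal := by
      rw [measure_diff (hVsub N) (by
        have : MeasurableSet (V N) := by
          apply MeasurableSet.biUnion (hfin.countable)
          intro i _
          exact (he0open i).measurableSet
        exact this.nullMeasurableSet) (measure_ne_top ν _)]
      exact ENNReal.toReal_sub_of_le (measure_mono (hVsub N)) (measure_ne_top ν G)
    calc (ν (B \ V N)).toReal ≤ (ν (G \ V N)).toReal :=
        ENNReal.toReal_mono (measure_ne_top _ _) h1
      _ ≤ ε := by rw [h2]; linarith [hN]


lemma mainExtraction (ν : Measure E) [IsProbabilityMeasure ν]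
    {φ : E → ℝ} (hφc : Continuous φ) (hφ0 : ∀ x, 0 ≤ φ x)
    (hexp : ∀ α : ℝ, 0 < α → ∫⁻ x, ENNReal.ofReal (Real.exp (α * φ x)) ∂ν < ⊤)
    {M : ℝ}
    (μs : ℕ → Measure E) (hprob : ∀ k, IsProbabilityMeasure (μs k))
    (hac : ∀ k, μs k ≪ ν)
    (hint : ∀ k, Integrable (fun x => Real.log (((μs k).rnDeriv ν x).toReal)) (μs k))
    (hent : ∀ k, ∫ x, Real.log (((μs k).rnDeriv ν x).toReal) ∂(μs k) ≤ M) :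
    ∃ ψ : ℕ → ℕ, StrictMono ψ ∧ ∃ μhat : Measure E, IsProbabilityMeasure μhat ∧
      (∫⁻ x, ENNReal.ofReal (φ x) ∂μhat < ⊤) ∧
      (∀ B : Set E, MeasurableSet B →
        Tendsto (fun j => ((μs (ψ j)) B).toReal) atTop (𝓝 ((μhat B).toReal))) ∧
      Tendsto (fun j => ∫ x, φ x ∂(μs (ψ j))) atTop (𝓝 (∫ x, φ x ∂μhat)) := by
  haveI := hprob
  have hφm : Measurable φ := hφc.measurable
  -- uniform absolute continuity
  have hUAC : ∀ ε : ℝ, 0 < ε → ∃ δ : ℝ, 0 < δ ∧ ∀ A : Set E, MeasurableSet A →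
      (ν A).toReal ≤ δ → ∀ k, ((μs k) A).toReal ≤ ε := by
    intro ε hε
    set s : ℝ := 2 * (|M| + 1) / ε with hs_def
    have hs : 0 < s := by positivity
    refine ⟨s * ε / (2 * Real.exp s), by positivity, ?_⟩
    intro A hA hνA k
    have h1 := absBound (μs k) ν (hac k) (hint k) (hent k) hs hA
    have h2 : (M + Real.exp s * (ν A).toReal) / s ≤ ε := by
      rw [div_le_iff₀ hs]
      have hM : M ≤ |M| := le_abs_self M
      have h3 : Real.exp s * (ν A).toReal ≤ Real.exp s * (s * ε / (2 * Real.exp s)) :=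
        mul_le_mul_of_nonneg_left hνA (Real.exp_nonneg s)
      have hexp_pos := Real.exp_pos s
      have h4 : Real.exp s * (s * ε / (2 * Real.exp s)) = s * ε / 2 := by field_simp
      have h5 : |M| + 1 = s * ε / 2 := by rw [hs_def]; field_simp
      nlinarith
    linarith
  -- uniform integrability
  have hUI : ∀ ε : ℝ, 0 < ε → ∃ R : ℝ, 0 ≤ R ∧ ∀ k,
      Integrable (fun x => max (φ x - R) 0) (μs k) ∧
      ∫ x, max (φ x - R) 0 ∂(μs k) ≤ ε := by
    intro ε hε
    set α : ℝ := (|M| + 1) / ε with hα_def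
    have hα : 0 < α := by positivity
    obtain ⟨n, hn⟩ := (Metric.tendsto_atTop.1 (tailTendsto ν hφm (hexp α hα)) 1 one_pos)
    have htail : ∫ x in {x | (n:ℝ) < φ x}, Real.exp (α * φ x) ∂ν ≤ 1 := by
      have := hn n (le_refl n)
      rw [Real.dist_eq, sub_zero] at this
      exact (le_abs_self _).trans this.le
    refine ⟨(n : ℝ), Nat.cast_nonneg n, fun k => ?_⟩
    obtain ⟨hi, hb⟩ := uiBound (μs k) ν (hac k) (hint k) (hent k) hφm hφ0 hα (hexp α hα)
      (Nat.cast_nonneg n)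
    refine ⟨hi, hb.trans ?_⟩
    have h1 : M + ∫ x in {x | (n:ℝ) < φ x}, Real.exp (α * φ x) ∂ν ≤ |M| + 1 := by
      have := le_abs_self M; linarith
    calc (M + ∫ x in {x | (n:ℝ) < φ x}, Real.exp (α * φ x) ∂ν) / α ≤ (|M| + 1) / α := by gcongr
    _ = ε := by rw [hα_def]; field_simp
  -- integrability of φ under each μs k
  have hIntφ : ∀ k, Integrable φ (μs k) := by
    intro k
    have := (uiBound (μs k) ν (hac k) (hint k) (hent k) hφm hφ0 one_pos (hexp 1 one_pos)
      (le_refl (0:ℝ))).1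
    have heq : (fun x => max (φ x - 0) 0) = φ := by
      funext x; rw [sub_zero, max_eq_left (hφ0 x)]
    rwa [heq] at this
  -- approximating family and diagonal extraction
  obtain ⟨e0, he0open, happrox⟩ := existsApproxFamily ν
  set U : Finset ℕ → Set E := fun t => ⋃ i ∈ t, e0 i with hU
  have hUmeas : ∀ t, MeasurableSet (U t) := fun t =>
    MeasurableSet.biUnion t.countable_toSet (fun i _ => (he0open i).measurableSet)
  set G : ℕ → (Finset ℕ → ℝ) := fun k t => ((μs k) (U t)).toReal with hG
  have hGmem : ∀ k, G k ∈ Set.pi univ (fun _ : Finset ℕ => Set.Icc (0:ℝ) 1) := by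
    intro k
    intro t _
    refine ⟨ENNReal.toReal_nonneg, ?_⟩
    have : (μs k) (U t) ≤ 1 := prob_le_one
    calc ((μs k) (U t)).toReal ≤ (1 : ENNReal).toReal := ENNReal.toReal_mono ENNReal.one_ne_top this
    _ = 1 := by simp
  have hseq : IsSeqCompact (Set.pi univ (fun _ : Finset ℕ => Set.Icc (0:ℝ) 1)) :=
    (isCompact_univ_pi (fun _ => isCompact_Icc)).isSeqCompact
  obtain ⟨L, -, ψ, hψmono, hψtend⟩ := hseq (fun k => hGmem k)
  have htt : ∀ t : Finset ℕ, Tendsto (fun j => ((μs (ψ j)) (U t)).toReal) atTop (𝓝 (L t)) := by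
    intro t
    exact tendsto_pi_nhds.1 hψtend t
  -- Cauchy for every Borel set
  have hCauchy : ∀ B : Set E, MeasurableSet B →
      CauchySeq (fun j => ((μs (ψ j)) B).toReal) := by
    intro B hB
    rw [Metric.cauchySeq_iff]
    intro ε hε
    obtain ⟨δ, hδ, hδ'⟩ := hUAC (ε/8) (by linarith)
    obtain ⟨t, ht1, ht2⟩ := happrox B hB δ hδ
    have hclose : ∀ k, |((μs k) B).toReal - ((μs k) (U t)).toReal| ≤ ε/4 := by
      intro k
      have h1 := measDiffReal (μs k) hB (hUmeas t)
      have h2 := hδ' (B \ U t) (hB.diff (hUmeas t)) ht2 k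
      have h3 := hδ' (U t \ B) ((hUmeas t).diff hB) ht1 k
      linarith
    obtain ⟨N, hN⟩ := (Metric.cauchySeq_iff.1 (htt t).cauchySeq) (ε/2) (by linarith)
    refine ⟨N, fun m hm n hn => ?_⟩
    have h4 := hN m hm n hn
    rw [Real.dist_eq] at h4 ⊢
    have h5 := hclose (ψ m)
    have h6 := hclose (ψ n)
    have t1 := abs_sub_le (((μs (ψ m)) B).toReal) (((μs (ψ m)) (U t)).toReal)
      (((μs (ψ n)) B).toReal)
    have t2 := abs_sub_le (((μs (ψ m)) (U t)).toReal) (((μs (ψ n)) (U t)).toReal)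
      (((μs (ψ n)) B).toReal)
    have t3 : |((μs (ψ n)) (U t)).toReal - ((μs (ψ n)) B).toReal|
        = |((μs (ψ n)) B).toReal - ((μs (ψ n)) (U t)).toReal| := abs_sub_comm _ _
    linarith
  have hlim : ∀ B : Set E, MeasurableSet B →
      ∃ l : ℝ, Tendsto (fun j => ((μs (ψ j)) B).toReal) atTop (𝓝 l) := fun B hB =>
    cauchySeq_tendsto_of_complete (hCauchy B hB)
  choose! mfun hmfun using hlim
  -- properties of the limit set function
  have hm_nonneg : ∀ B : Set E, MeasurableSet B → 0 ≤ mfun B := fun B hB =>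
    ge_of_tendsto (hmfun B hB) (Filter.Eventually.of_forall fun j => ENNReal.toReal_nonneg)
  have hm_empty : mfun ∅ = 0 := by
    have h := hmfun ∅ MeasurableSet.empty
    simp only [measure_empty, ENNReal.toReal_zero] at h
    exact tendsto_nhds_unique h tendsto_const_nhds
  have hm_univ : mfun univ = 1 := by
    have h := hmfun univ MeasurableSet.univ
    simp only [measure_univ, ENNReal.toReal_one] at h
    exact tendsto_nhds_unique h tendsto_const_nhds
  have hm_add : ∀ A B : Set E, MeasurableSet A → MeasurableSet B → Disjoint A B →
      mfun (A ∪ B) = mfun A + mfun B := by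
    intro A B hA hB hd
    have h1 : Tendsto (fun j => ((μs (ψ j)) A).toReal + ((μs (ψ j)) B).toReal) atTop
        (𝓝 (mfun A + mfun B)) := (hmfun A hA).add (hmfun B hB)
    have h2 : ∀ j, ((μs (ψ j)) (A ∪ B)).toReal
        = ((μs (ψ j)) A).toReal + ((μs (ψ j)) B).toReal := by
      intro j
      rw [measure_union hd hB, ENNReal.toReal_add (measure_ne_top _ _) (measure_ne_top _ _)]
    have h3 : Tendsto (fun j => ((μs (ψ j)) (A ∪ B)).toReal) atTop (𝓝 (mfun A + mfun B)) := by
      simp only [h2]; exact h1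
    exact tendsto_nhds_unique (hmfun _ (hA.union hB)) h3
  have hm_small : ∀ ε : ℝ, 0 < ε → ∃ δ : ℝ, 0 < δ ∧ ∀ B : Set E, MeasurableSet B →
      (ν B).toReal ≤ δ → mfun B ≤ ε := by
    intro ε hε
    obtain ⟨δ, hδ, hδ'⟩ := hUAC ε hε
    exact ⟨δ, hδ, fun B hB hνB =>
      le_of_tendsto (hmfun B hB) (Filter.Eventually.of_forall fun j => hδ' B hB hνB (ψ j))⟩
  -- countable additivity
  have hσ : ∀ f : ℕ → Set E, (∀ i, MeasurableSet (f i)) → Pairwise (Function.onFun Disjoint f) →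
      ENNReal.ofReal (mfun (⋃ i, f i)) = ∑' i, ENNReal.ofReal (mfun (f i)) := by
    intro f hfm hfd
    set S : ℕ → Set E := fun N => ⋃ i ∈ Finset.range N, f i with hS
    have hSmeas : ∀ N, MeasurableSet (S N) := fun N =>
      MeasurableSet.biUnion (Finset.range N).countable_toSet (fun i _ => hfm i)
    have hSsub : ∀ N, S N ⊆ ⋃ i, f i := fun N =>
      iUnion₂_subset fun i _ => subset_iUnion f i
    have hSdisj : ∀ N, Disjoint (S N) (f N) := by
      intro N
      rw [Set.disjoint_left]
      rintro x hx hxN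
      obtain ⟨i, hi, hxi⟩ := mem_iUnion₂.1 hx
      rw [Finset.mem_range] at hi
      exact Set.disjoint_left.1 (hfd (Nat.ne_of_lt hi)) hxi hxN
    have hSsum : ∀ N, mfun (S N) = ∑ i ∈ Finset.range N, mfun (f i) := by
      intro N
      induction N with
      | zero => simp [hS, hm_empty]
      | succ N ih =>
          have hSN1 : S (N+1) = S N ∪ f N := by
            rw [hS]
            simp only
            rw [Finset.range_add_one]
            rw [Finset.set_biUnion_insert]
            exact union_comm _ _
          rw [hSN1, hm_add _ _ (hSmeas N) (hfm N) (hSdisj N), ih, Finset.sum_range_succ]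
  -- tail tends to zero
    have hTmeas : ∀ N, MeasurableSet ((⋃ i, f i) \ S N) := fun N =>
      (MeasurableSet.iUnion hfm).diff (hSmeas N)
    have hTanti : Antitone (fun N => (⋃ i, f i) \ S N) := by
      intro N M hNM
      apply diff_subset_diff_right
      apply iUnion₂_subset
      intro i hi
      rw [Finset.mem_range] at hi
      exact subset_biUnion_of_mem (u := fun i => f i) (Finset.mem_range.2 (lt_of_lt_of_le hi hNM))
    have hTempty : ⋂ N, ((⋃ i, f i) \ S N) = ∅ := by
      rw [eq_empty_iff_forall_notMem]
      intro x hx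
      rw [mem_iInter] at hx
      obtain ⟨i, hxi⟩ := mem_iUnion.1 (hx 0).1
      exact (hx (i+1)).2 (mem_biUnion (Finset.mem_range.2 (Nat.lt_succ_self i)) hxi)
    have hνT : Tendsto (fun N => (ν ((⋃ i, f i) \ S N)).toReal) atTop (𝓝 0) := by
      have h1 : Tendsto (⇑ν ∘ (fun N => (⋃ i, f i) \ S N)) atTop
          (𝓝 (ν (⋂ N, ((⋃ i, f i) \ S N)))) :=
        tendsto_measure_iInter_atTop (fun N => (hTmeas N).nullMeasurableSet) hTanti
          ⟨0, measure_ne_top ν _⟩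
      rw [hTempty, measure_empty] at h1
      have := (ENNReal.tendsto_toReal (by simp : (0:ENNReal) ≠ ⊤)).comp h1
      exact this
    have htail : Tendsto (fun N => mfun ((⋃ i, f i) \ S N)) atTop (𝓝 0) := by
      rw [Metric.tendsto_atTop]
      intro ε hε
      obtain ⟨δ, hδ, hδ'⟩ := hm_small (ε/2) (by linarith)
      obtain ⟨N₀, hN₀⟩ := Metric.tendsto_atTop.1 hνT δ hδ
      refine ⟨N₀, fun N hN => ?_⟩
      have h1 := hN₀ N hN
      rw [Real.dist_eq, sub_zero] at h1
      have h2 : (ν ((⋃ i, f i) \ S N)).toReal ≤ δ := (le_abs_self _).trans h1.le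
      have h3 := hδ' _ (hTmeas N) h2
      have h4 := hm_nonneg _ (hTmeas N)
      rw [Real.dist_eq, sub_zero, abs_of_nonneg h4]
      linarith
    have hdecomp : ∀ N, mfun (⋃ i, f i) = mfun (S N) + mfun ((⋃ i, f i) \ S N) := by
      intro N
      rw [← hm_add _ _ (hSmeas N) (hTmeas N) disjoint_sdiff_right,
        union_diff_cancel (hSsub N)]
    have hpartial : Tendsto (fun N => ∑ i ∈ Finset.range N, mfun (f i)) atTop
        (𝓝 (mfun (⋃ i, f i))) := by
      have : (fun N => ∑ i ∈ Finset.range N, mfun (f i))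
          = fun N => mfun (⋃ i, f i) - mfun ((⋃ i, f i) \ S N) := by
        funext N
        rw [← hSsum N]
        have := hdecomp N
        linarith
      rw [this]
      have := (tendsto_const_nhds (x := mfun (⋃ i, f i)) (f := atTop (α := ℕ))).sub htail
      simpa using this
    have hhs : HasSum (fun i => mfun (f i)) (mfun (⋃ i, f i)) :=
      (hasSum_iff_tendsto_nat_of_nonneg (fun i => hm_nonneg _ (hfm i)) _).2 hpartial
    rw [← hhs.tsum_eq, ENNReal.ofReal_tsum_of_nonneg (fun i => hm_nonneg _ (hfm i)) ⟨_, hhs⟩]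
  -- build the measure
  set μhat : Measure E := Measure.ofMeasurable (fun B _ => ENNReal.ofReal (mfun B))
    (by simp [hm_empty]) (fun f hfm hfd => hσ f hfm hfd) with hμhat
  have happ : ∀ B : Set E, MeasurableSet B → μhat B = ENNReal.ofReal (mfun B) := by
    intro B hB
    rw [hμhat]
    exact Measure.ofMeasurable_apply B hB
  have hprob_hat : IsProbabilityMeasure μhat := by
    constructor
    rw [happ univ MeasurableSet.univ, hm_univ, ENNReal.ofReal_one]
  have hsetwise : ∀ B : Set E, MeasurableSet B →
      Tendsto (fun j => ((μs (ψ j)) B).toReal) atTop (𝓝 ((μhat B).toReal)) := by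
    intro B hB
    rw [happ B hB, ENNReal.toReal_ofReal (hm_nonneg B hB)]
    exact hmfun B hB
  haveI : ∀ j, IsProbabilityMeasure ((fun j => μs (ψ j)) j) := fun j => hprob _
  -- integrability of truncations
  have hIntmax : ∀ k, ∀ R : ℝ, 0 ≤ R → Integrable (fun x => max (φ x - R) 0) (μs k) := by
    intro k R hR
    refine (hIntφ k).mono'
      (((hφm.sub measurable_const).max measurable_const).aestronglyMeasurable) ?_
    filter_upwards with x
    rw [Real.norm_eq_abs, abs_of_nonneg (le_max_right _ _)]
    exact max_le (by linarith [hφ0 x]) (hφ0 x)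
  -- tail control for μhat
  have htail_hat : ∀ ε : ℝ, 0 < ε → ∀ R : ℝ, 0 ≤ R →
      (∀ k, ∫ x, max (φ x - R) 0 ∂(μs k) ≤ ε) →
      ∫⁻ x, ENNReal.ofReal (max (φ x - R) 0) ∂μhat ≤ ENNReal.ofReal ε := by
    intro ε hε R hR hbound
    have hmaxmeas : Measurable (fun x => max (φ x - R) 0) :=
      (hφm.sub measurable_const).max measurable_const
    have hgK : ∀ K : ℕ, Measurable (fun x => min (max (φ x - R) 0) (K:ℝ)) := fun K =>
      hmaxmeas.min measurable_const
    have h0 : ∀ K : ℕ, ∀ x, 0 ≤ min (max (φ x - R) 0) (K:ℝ) := fun K x =>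
      le_min (le_max_right _ _) (Nat.cast_nonneg K)
    have key : ∀ K : ℕ, ∫⁻ x, ENNReal.ofReal (min (max (φ x - R) 0) (K:ℝ)) ∂μhat
        ≤ ENNReal.ofReal ε := by
      intro K
      have hC : ∀ x, min (max (φ x - R) 0) (K:ℝ) ≤ (K:ℝ) := fun x => min_le_right _ _
      have hconv := setwiseIntegralConv (fun j => μs (ψ j)) μhat hsetwise (hgK K) (h0 K) hC
      have hIntK : ∀ (mm : Measure E) [IsProbabilityMeasure mm],
          Integrable (fun x => min (max (φ x - R) 0) (K:ℝ)) mm := by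
        intro mm _
        refine (integrable_const (K:ℝ)).mono' (hgK K).aestronglyMeasurable ?_
        filter_upwards with x
        rw [Real.norm_eq_abs, abs_of_nonneg (h0 K x)]
        exact hC x
      have hle : ∀ j, ∫ x, min (max (φ x - R) 0) (K:ℝ) ∂(μs (ψ j)) ≤ ε := by
        intro j
        refine le_trans (integral_mono (hIntK _) (hIntmax (ψ j) R hR)
          (fun x => min_le_left _ _)) (hbound (ψ j))
      have hint_hat : ∫ x, min (max (φ x - R) 0) (K:ℝ) ∂μhat ≤ ε :=
        le_of_tendsto hconv (Filter.Eventually.of_forall hle)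
      rw [← ofReal_integral_eq_lintegral_ofReal (hIntK μhat)
        (Filter.Eventually.of_forall (h0 K))]
      exact ENNReal.ofReal_le_ofReal hint_hat
    -- monotone convergence
    have hsup : ∀ x, ⨆ K : ℕ, ENNReal.ofReal (min (max (φ x - R) 0) (K:ℝ))
        = ENNReal.ofReal (max (φ x - R) 0) := by
      intro x
      apply le_antisymm
      · exact iSup_le fun K => ENNReal.ofReal_le_ofReal (min_le_left _ _)
      · obtain ⟨K, hK⟩ := exists_nat_ge (max (φ x - R) 0)
        have : min (max (φ x - R) 0) (K:ℝ) = max (φ x - R) 0 := min_eq_left hK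
        calc ENNReal.ofReal (max (φ x - R) 0)
            = ENNReal.ofReal (min (max (φ x - R) 0) (K:ℝ)) := by rw [this]
        _ ≤ ⨆ K : ℕ, ENNReal.ofReal (min (max (φ x - R) 0) (K:ℝ)) :=
              le_iSup (fun K : ℕ => ENNReal.ofReal (min (max (φ x - R) 0) (K:ℝ))) K
    have hmono : Monotone (fun K : ℕ => fun x => ENNReal.ofReal (min (max (φ x - R) 0) (K:ℝ))) := by
      intro K L hKL
      intro x
      exact ENNReal.ofReal_le_ofReal (le_min (min_le_left _ _)
        ((min_le_right _ _).trans (Nat.cast_le.2 hKL)))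
    calc ∫⁻ x, ENNReal.ofReal (max (φ x - R) 0) ∂μhat
        = ∫⁻ x, ⨆ K : ℕ, ENNReal.ofReal (min (max (φ x - R) 0) (K:ℝ)) ∂μhat := by
          apply lintegral_congr
          intro x
          exact (hsup x).symm
    _ = ⨆ K : ℕ, ∫⁻ x, ENNReal.ofReal (min (max (φ x - R) 0) (K:ℝ)) ∂μhat :=
          lintegral_iSup (fun K => (hgK K).ennreal_ofReal) hmono
    _ ≤ ENNReal.ofReal ε := iSup_le key
  -- φ decomposition
  have hφdecomp : ∀ R : ℝ, ∀ x, φ x = min (φ x) R + max (φ x - R) 0 := by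
    intro R x
    rcases le_total (φ x) R with h | h
    · rw [min_eq_left h, max_eq_right (by linarith)]; ring
    · rw [min_eq_right h, max_eq_left (by linarith)]; ring
  -- finiteness of φ-lintegral under μhat
  obtain ⟨R₁, hR₁0, hR₁⟩ := hUI 1 one_pos
  have hfinφ : ∫⁻ x, ENNReal.ofReal (φ x) ∂μhat < ⊤ := by
    have h1 := htail_hat 1 one_pos R₁ hR₁0 (fun k => (hR₁ k).2)
    have h2 : ∫⁻ x, ENNReal.ofReal (φ x) ∂μhat
        = (∫⁻ x, ENNReal.ofReal (min (φ x) R₁) ∂μhat)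
          + ∫⁻ x, ENNReal.ofReal (max (φ x - R₁) 0) ∂μhat := by
      rw [← lintegral_add_left ((hφm.min measurable_const).ennreal_ofReal)]
      apply lintegral_congr
      intro x
      rw [← ENNReal.ofReal_add (le_min (hφ0 x) hR₁0) (le_max_right _ _)]
      congr 1
      exact hφdecomp R₁ x
    rw [h2]
    have h3 : ∫⁻ x, ENNReal.ofReal (min (φ x) R₁) ∂μhat ≤ ENNReal.ofReal R₁ := by
      calc ∫⁻ x, ENNReal.ofReal (min (φ x) R₁) ∂μhat
          ≤ ∫⁻ _, ENNReal.ofReal R₁ ∂μhat :=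
            lintegral_mono fun x => ENNReal.ofReal_le_ofReal (min_le_right _ _)
      _ = ENNReal.ofReal R₁ := by rw [lintegral_const, measure_univ, mul_one]
    calc (∫⁻ x, ENNReal.ofReal (min (φ x) R₁) ∂μhat)
        + ∫⁻ x, ENNReal.ofReal (max (φ x - R₁) 0) ∂μhat
        ≤ ENNReal.ofReal R₁ + ENNReal.ofReal 1 := add_le_add h3 h1
    _ < ⊤ := by simp
  -- integrability of φ under μhat
  have hIntφhat : Integrable φ μhat := by
    refine ⟨hφm.aestronglyMeasurable, ?_⟩
    rw [hasFiniteIntegral_iff_norm]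
    refine lt_of_le_of_lt (lintegral_mono fun x => ENNReal.ofReal_le_ofReal ?_) hfinφ
    rw [Real.norm_eq_abs, abs_of_nonneg (hφ0 x)]
  have hIntmaxhat : ∀ R : ℝ, 0 ≤ R → Integrable (fun x => max (φ x - R) 0) μhat := by
    intro R hR
    refine hIntφhat.mono'
      (((hφm.sub measurable_const).max measurable_const).aestronglyMeasurable) ?_
    filter_upwards with x
    rw [Real.norm_eq_abs, abs_of_nonneg (le_max_right _ _)]
    exact max_le (by linarith [hφ0 x]) (hφ0 x)
  -- convergence of φ-integrals
  have htendφ : Tendsto (fun j => ∫ x, φ x ∂(μs (ψ j))) atTop (𝓝 (∫ x, φ x ∂μhat)) := by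
    rw [Metric.tendsto_atTop]
    intro ε hε
    obtain ⟨R, hR0, hRk⟩ := hUI (ε/4) (by linarith)
    have hhat_tail : ∫ x, max (φ x - R) 0 ∂μhat ≤ ε/4 := by
      have h1 := htail_hat (ε/4) (by linarith) R hR0 (fun k => (hRk k).2)
      have h2 : ∫ x, max (φ x - R) 0 ∂μhat
          = (∫⁻ x, ENNReal.ofReal (max (φ x - R) 0) ∂μhat).toReal :=
        integral_eq_lintegral_of_nonneg_ae
          (Filter.Eventually.of_forall fun x => le_max_right _ _)
          ((hφm.sub measurable_const).max measurable_const).aestronglyMeasurable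
      rw [h2]
      calc (∫⁻ x, ENNReal.ofReal (max (φ x - R) 0) ∂μhat).toReal
          ≤ (ENNReal.ofReal (ε/4)).toReal := ENNReal.toReal_mono ENNReal.ofReal_ne_top h1
      _ = ε/4 := ENNReal.toReal_ofReal (by linarith)
    set g : E → ℝ := fun x => min (φ x) R with hgdef
    have hgmeas : Measurable g := hφm.min measurable_const
    have hg0 : ∀ x, 0 ≤ g x := fun x => le_min (hφ0 x) hR0
    have hgR : ∀ x, g x ≤ R := fun x => min_le_right _ _
    have hIntg : ∀ (mm : Measure E) [IsProbabilityMeasure mm], Integrable g mm := by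
      intro mm _
      refine (integrable_const R).mono' hgmeas.aestronglyMeasurable ?_
      filter_upwards with x
      rw [Real.norm_eq_abs, abs_of_nonneg (hg0 x)]
      exact hgR x
    have hconvg := setwiseIntegralConv (fun j => μs (ψ j)) μhat hsetwise hgmeas hg0 hgR
    obtain ⟨N, hN⟩ := Metric.tendsto_atTop.1 hconvg (ε/4) (by linarith)
    refine ⟨N, fun j hj => ?_⟩
    have hsplit : ∀ (mm : Measure E) [IsProbabilityMeasure mm],
        Integrable (fun x => max (φ x - R) 0) mm →
        ∫ x, φ x ∂mm = (∫ x, g x ∂mm) + ∫ x, max (φ x - R) 0 ∂mm := by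
      intro mm _ hI
      rw [← integral_add (hIntg mm) hI]
      apply integral_congr_ae
      filter_upwards with x
      exact hφdecomp R x
    have hsj := hsplit (μs (ψ j)) ((hRk (ψ j)).1)
    have hsh := hsplit μhat (hIntmaxhat R hR0)
    have htj : 0 ≤ ∫ x, max (φ x - R) 0 ∂(μs (ψ j)) :=
      integral_nonneg fun x => le_max_right _ _
    have hth : 0 ≤ ∫ x, max (φ x - R) 0 ∂μhat :=
      integral_nonneg fun x => le_max_right _ _
    have htjle := (hRk (ψ j)).2
    have hgj := hN j hj
    rw [Real.dist_eq] at hgj ⊢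
    rw [hsj, hsh]
    have habs : |(∫ x, max (φ x - R) 0 ∂(μs (ψ j))) - ∫ x, max (φ x - R) 0 ∂μhat| ≤ ε/4 :=
      abs_le.2 ⟨by linarith, by linarith⟩
    calc |((∫ x, g x ∂(μs (ψ j))) + ∫ x, max (φ x - R) 0 ∂(μs (ψ j)))
          - ((∫ x, g x ∂μhat) + ∫ x, max (φ x - R) 0 ∂μhat)|
        ≤ |(∫ x, g x ∂(μs (ψ j))) - ∫ x, g x ∂μhat|
          + |(∫ x, max (φ x - R) 0 ∂(μs (ψ j))) - ∫ x, max (φ x - R) 0 ∂μhat| := by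
          have := abs_add_le ((∫ x, g x ∂(μs (ψ j))) - ∫ x, g x ∂μhat)
            ((∫ x, max (φ x - R) 0 ∂(μs (ψ j))) - ∫ x, max (φ x - R) 0 ∂μhat)
          rw [show ∀ a b c d : ℝ, a + b - (c + d) = (a - c) + (b - d) from fun a b c d => by ring]
          exact this
    _ < ε := by linarith
  exact ⟨ψ, hψmono, μhat, hprob_hat, hfinφ, hsetwise, htendφ⟩

end MetricAux

end AuxLemmas

/-- if `I = H(·|ν) + F` is lower semi-continuous and `F` is bounded from
below, then `I` has compact sublevel sets in `P_φ(E)`. -/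
theorem stmt2 (φ : E → ℝ) (hφc : Continuous φ) (hφ0 : ∀ x, 0 ≤ φ x)
    (ν : Measure E) [IsProbabilityMeasure ν]
    (hexp : ∀ α : ℝ, 0 < α → ∫⁻ x, ENNReal.ofReal (Real.exp (α * φ x)) ∂ν < ⊤)
    (F : Pphi E φ → EReal) (hFbot : ∀ μ, F μ ≠ ⊥)
    (hFmeas : @Measurable (Pphi E φ) EReal (borel (Pphi E φ)) _ F)
    (hIlsc : LowerSemicontinuous (fun μ : Pphi E φ => relEnt μ.m ν + F μ))
    (hFbdd : ∃ cF : ℝ, ∀ μ : Pphi E φ, (cF : EReal) ≤ F μ) :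
    ∀ c : ℝ, IsCompact {μ : Pphi E φ | relEnt μ.m ν + F μ ≤ (c : EReal)} := by
  intro c
  obtain ⟨cF, hcF⟩ := hFbdd
  set M : ℝ := c - cF with hM
  set S : Set (Pphi E φ) := {μ : Pphi E φ | relEnt μ.m ν + F μ ≤ (c : EReal)} with hS
  -- entropy facts for members of S
  have hSfacts : ∀ μ ∈ S, μ.m ≪ ν ∧
      Integrable (fun x => Real.log ((μ.m.rnDeriv ν x).toReal)) μ.m ∧
      ∫ x, Real.log ((μ.m.rnDeriv ν x).toReal) ∂μ.m ≤ M := by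
    intro μ hμ
    have hμ' : relEnt μ.m ν + F μ ≤ (c : EReal) := hμ
    have hne : relEnt μ.m ν ≠ ⊤ := by
      intro h
      rw [h, EReal.top_add_of_ne_bot (hFbot μ)] at hμ'
      exact absurd hμ' (by simp)
    by_cases hcond : μ.m ≪ ν ∧
        Integrable (fun x => Real.log ((μ.m.rnDeriv ν x).toReal)) μ.m
    · refine ⟨hcond.1, hcond.2, ?_⟩
      have hval : relEnt μ.m ν
          = ((∫ x, Real.log ((μ.m.rnDeriv ν x).toReal) ∂μ.m : ℝ) : EReal) := by
        unfold relEnt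
        exact if_pos hcond
      set h : ℝ := ∫ x, Real.log ((μ.m.rnDeriv ν x).toReal) ∂μ.m with hh
      have h1 : (h : EReal) + (cF : EReal) ≤ (h : EReal) + F μ := add_le_add_right (hcF μ) _
      have h2 : (h : EReal) + F μ ≤ (c : EReal) := by rw [← hval]; exact hμ'
      have h3 : ((h + cF : ℝ) : EReal) ≤ (c : EReal) := by
        rw [EReal.coe_add]; exact h1.trans h2
      have h4 : h + cF ≤ c := EReal.coe_le_coe_iff.1 h3
      rw [hM]; linarith
    · exfalso
      apply hne
      unfold relEnt
      exact if_neg hcond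
  -- S is closed
  have hSclosed : IsClosed S := by
    rw [← isOpen_compl_iff, isOpen_iff_mem_nhds]
    intro μ hμ
    have h : (c : EReal) < relEnt μ.m ν + F μ := lt_of_not_ge hμ
    filter_upwards [hIlsc μ (c : EReal) h] with y hy
    exact not_le.2 hy
  -- the embedding into ProbabilityMeasure E × ℝ
  set e : Pphi E φ → ProbabilityMeasure E × ℝ :=
    fun μ => ((μ.toPM : ProbabilityMeasure E), ∫ x, φ x ∂μ.m) with he
  have hind : Topology.IsInducing e := ⟨rfl⟩
  rw [hind.isCompact_iff]
  letI : MetricSpace (ProbabilityMeasure E) := TopologicalSpace.metrizableSpaceMetric _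
  apply IsSeqCompact.isCompact
  intro x hx
  have hchoice : ∀ n, ∃ μ : Pphi E φ, μ ∈ S ∧ e μ = x n := by
    intro n
    obtain ⟨μ, hμ, heq⟩ := hx n
    exact ⟨μ, hμ, heq⟩
  choose μseq hμS hμe using hchoice
  haveI : ∀ k, IsProbabilityMeasure ((fun k => (μseq k).m) k) := fun k => inferInstance
  obtain ⟨ψ, hψ, μhat, hphat, hfin, hsetw, hφconv⟩ :=
    mainExtraction ν hφc hφ0 hexp (M := M) (fun k => (μseq k).m)
      (fun k => inferInstance)
      (fun k => (hSfacts _ (hμS k)).1)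
      (fun k => (hSfacts _ (hμS k)).2.1)
      (fun k => (hSfacts _ (hμS k)).2.2)
  set μhatP : Pphi E φ := ⟨⟨μhat, hphat⟩, hfin⟩ with hμhatP
  -- weak convergence of the ProbabilityMeasure components
  have hweak : Tendsto (fun j => ((μseq (ψ j)).toPM : ProbabilityMeasure E)) atTop
      (𝓝 (μhatP.toPM : ProbabilityMeasure E)) := by
    rw [ProbabilityMeasure.tendsto_iff_forall_integral_tendsto]
    intro f
    have hfb : ∀ y : E, |f y| ≤ ‖f‖ := fun y => by
      have := f.norm_coe_le_norm y
      rwa [Real.norm_eq_abs] at this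
    have hf0 : ∀ y, 0 ≤ f y + ‖f‖ := fun y => by
      have := (abs_le.1 (hfb y)).1; linarith
    have hfC : ∀ y, f y + ‖f‖ ≤ 2 * ‖f‖ := fun y => by
      have := (abs_le.1 (hfb y)).2; linarith
    have hgm : Measurable (fun y => f y + ‖f‖) :=
      f.continuous.measurable.add measurable_const
    haveI : ∀ j, IsProbabilityMeasure ((fun j => (μseq (ψ j)).m) j) := fun j => inferInstance
    have hconv := setwiseIntegralConv (fun j => (μseq (ψ j)).m) μhat hsetw hgm hf0 hfC
    have hsp : ∀ (mm : Measure E) [IsProbabilityMeasure mm],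
        ∫ y, (f y + ‖f‖) ∂mm = (∫ y, f y ∂mm) + ‖f‖ := by
      intro mm _
      rw [integral_add (f.integrable mm) (integrable_const _), integral_const, probReal_univ]
      simp
    have h2 : Tendsto (fun j => (∫ y, f y ∂(μseq (ψ j)).m) + ‖f‖) atTop
        (𝓝 ((∫ y, f y ∂μhat) + ‖f‖)) := by
      have e1 : (fun j => (∫ y, f y ∂(μseq (ψ j)).m) + ‖f‖)
          = fun j => ∫ y, (f y + ‖f‖) ∂(μseq (ψ j)).m := by
        funext j; rw [hsp]
      rw [e1, show (∫ y, f y ∂μhat) + ‖f‖ = ∫ y, (f y + ‖f‖) ∂μhat from (hsp μhat).symm]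
      exact hconv
    have h3 := h2.sub (tendsto_const_nhds (x := ‖f‖))
    exact (by simpa using h3 : Tendsto (fun j => ∫ y, f y ∂(μseq (ψ j)).m) atTop (𝓝 (∫ y, f y ∂μhat)))
  -- convergence in the product space
  have hprod : Tendsto (fun j => e (μseq (ψ j))) atTop (𝓝 (e μhatP)) := by
    rw [he]
    exact hweak.prodMk_nhds hφconv
  -- convergence in Pphi
  have hPphi : Tendsto (fun j => μseq (ψ j)) atTop (𝓝 μhatP) :=
    hind.tendsto_nhds_iff.2 hprod
  have hmem : μhatP ∈ S := hSclosed.mem_of_tendsto hPphi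
    (Filter.Eventually.of_forall fun j => hμS (ψ j))
  refine ⟨e μhatP, ⟨μhatP, hmem, rfl⟩, ψ, hψ, ?_⟩
  have : (x ∘ ψ) = fun j => e (μseq (ψ j)) := by
    funext j
    exact (hμe (ψ j)).symm
  rw [this]
  exact hprod
end
end

section
/- Let μ̄ be a minimiser of I(μ) = H(μ|ν) + F(μ) over D_I ∩ A^ζ_Ψ. Assume: D_I is convex and F is differentiable at μ̄ w.r.t. the directions D_I; t ↦ Ψ_t(μ̄) is continuous; each Ψ_t is differentiable at μ̄ w.r.t. the directions P_φ(E) uniformly in t ∈ T; t ↦ δΨ_t/δμ(μ̄,x) is continuous for every x ∈ E; sup_{t∈T} |δΨ_t/δμ(μ̄,x)| ≤ D^Ψ(1+φ(x)); and there exist μ̃ ∈ D_I ∩ A^ζ and ε̃ > 0 with Ψ_t(μ̄) + ε̃⟨μ̃−μ̄, δΨ_t/δμ(μ̄)⟩ < 0 for all t ∈ T. Then: (1) every μ ∈ D_I ∩ A^ζ satisfying Ψ_t(μ̄) + ε̃⟨μ−μ̄, δΨ_t/δμ(μ̄)⟩ ≤ 0 for all t ∈ T has ∫_E |log(dμ̄/dν)|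 dμ < ∞; (2) μ̄ minimises μ ↦ ⟨μ, log(dμ̄/dν) + δF/δμ(μ̄)⟩ over all μ ∈ D_I ∩ A^ζ satisfying that family of linearised inequality constraints, and the minimum value equals H(μ̄|ν). -/
open MeasureTheory Filter Topology Set
open scoped ENNReal NNReal

noncomputable section

/-- `G : P_φ(E) → ℝ` is differentiable at `μ` w.r.t. the set of directions `C`, with linear
functional derivative `g` (normalised by `∫ g dμ = 0`). -/
def HasLFDerivWithinAt {E : Type*} [MeasurableSpace E] {φ : E → ℝ}
    (C : Set (Pphi E φ)) (G : Pphi E φ → ℝ) (μ : Pphi E φ) (g : E → ℝ) : Prop :=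
  Measurable g ∧ (∀ μ' ∈ C, Integrable g μ'.m) ∧ (∫ x, g x ∂μ.m) = 0 ∧
  ∀ μ' ∈ C, Filter.Tendsto (fun ε : ℝ => ε⁻¹ * (G (μ.comb μ' ε) - G μ)) (𝓝[>] (0:ℝ))
    (𝓝 (∫ x, g x ∂μ'.m - ∫ x, g x ∂μ.m))

/-- Variant of `HasLFDerivWithinAt` for `(−∞,+∞]`-valued functionals (finite on the
direction set). -/
def HasLFDerivWithinAtE {E : Type*} [MeasurableSpace E] {φ : E → ℝ}
    (C : Set (Pphi E φ)) (G : Pphi E φ → EReal) (μ : Pphi E φ) (g : E → ℝ) : Prop :=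
  Measurable g ∧ (∀ μ' ∈ C, Integrable g μ'.m) ∧ (∫ x, g x ∂μ.m) = 0 ∧
  ∀ μ' ∈ C, Filter.Tendsto
    (fun ε : ℝ => ε⁻¹ * ((G (μ.comb μ' ε)).toReal - (G μ).toReal)) (𝓝[>] (0:ℝ))
    (𝓝 (∫ x, g x ∂μ'.m - ∫ x, g x ∂μ.m))



private lemma cancel_aux (A p q : ℝ) (hp : p ≠ 0) : A / p * (q * p) = A * q := by
  field_simp

/-- Monotonicity of difference quotients of `x ↦ x log x` along segments. -/
lemma slope_mono_mul_log {a b : ℝ} (ha : 0 ≤ a) (hb : 0 ≤ b) {s t : ℝ}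
    (hs : 0 < s) (hst : s ≤ t) (ht1 : t ≤ 1) :
    s⁻¹ * (((1-s)*a + s*b) * Real.log ((1-s)*a + s*b) - a * Real.log a) ≤
    t⁻¹ * (((1-t)*a + t*b) * Real.log ((1-t)*a + t*b) - a * Real.log a) := by
  have ht : 0 < t := lt_of_lt_of_le hs hst
  have hs1 : s ≤ 1 := hst.trans ht1
  set v : ℝ := b - a with hv
  have hx : (1-s)*a + s*b = a + s*v := by rw [hv]; ring
  have hy : (1-t)*a + t*b = a + t*v := by rw [hv]; ring
  have hxmem : (0:ℝ) ≤ a + s*v := by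
    rw [← hx]; exact add_nonneg (mul_nonneg (by linarith) ha) (mul_nonneg hs.le hb)
  have hymem : (0:ℝ) ≤ a + t*v := by
    rw [← hy]; exact add_nonneg (mul_nonneg (by linarith) ha) (mul_nonneg ht.le hb)
  rw [hx, hy]
  rcases lt_trichotomy v 0 with hvn | hv0 | hvp
  · have key := Real.convexOn_mul_log.secant_mono (a := a) (x := a + t*v) (y := a + s*v)
      ha hymem hxmem
      (by intro h; nlinarith) (by intro h; nlinarith) (by nlinarith)
    rw [show a + t*v - a = t*v by ring, show a + s*v - a = s*v by ring] at key
    have htv : t*v < 0 := mul_neg_of_pos_of_neg ht hvn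
    have hsv : s*v < 0 := mul_neg_of_pos_of_neg hs hvn
    have hmul := mul_le_mul_of_nonneg_right key
      ((mul_pos_of_neg_of_neg hsv htv).le)
    rw [cancel_aux _ _ _ htv.ne] at hmul
    rw [mul_comm (s*v) (t*v), cancel_aux _ _ _ hsv.ne] at hmul
    rw [inv_mul_eq_div, inv_mul_eq_div, div_le_div_iff₀ hs ht]
    nlinarith [hmul, hvn]
  · rw [hv0]; simp
  · have key := Real.convexOn_mul_log.secant_mono (a := a) (x := a + s*v) (y := a + t*v)
      ha hxmem hymem
      (by intro h; nlinarith) (by intro h; nlinarith) (by nlinarith)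
    rw [show a + t*v - a = t*v by ring, show a + s*v - a = s*v by ring] at key
    have htv : 0 < t*v := mul_pos ht hvp
    have hsv : 0 < s*v := mul_pos hs hvp
    rw [div_le_div_iff₀ hsv htv] at key
    rw [inv_mul_eq_div, inv_mul_eq_div, div_le_div_iff₀ hs ht]
    nlinarith

/-- Difference quotients of `x ↦ x log x` along a segment converge to the directional
derivative, when the base point is positive. -/
lemma tendsto_slope_mul_log {a b : ℝ} (ha : 0 < a) {ε : ℕ → ℝ} (hε0 : ∀ n, ε n ≠ 0)
    (hεlim : Tendsto ε atTop (𝓝 0)) :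
    Tendsto (fun n => (ε n)⁻¹ * (((1-ε n)*a + ε n*b) * Real.log ((1-ε n)*a + ε n*b)
      - a * Real.log a)) atTop (𝓝 ((Real.log a + 1) * (b - a))) := by
  set G : ℝ → ℝ := fun u => (a + u*(b-a)) * Real.log (a + u*(b-a)) with hG
  have hinner : HasDerivAt (fun u : ℝ => a + u*(b-a)) (b-a) 0 := by
    simpa using ((hasDerivAt_id (0:ℝ)).mul_const (b-a)).const_add a
  have hd : HasDerivAt G ((Real.log a + 1) * (b-a)) 0 := by
    have h0 : a + (0:ℝ)*(b-a) = a := by ring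
    have := (Real.hasDerivAt_mul_log (x := a + (0:ℝ)*(b-a)) (by rw [h0]; exact ha.ne')).comp
      0 hinner
    simp only [h0] at this; exact this
  have hslope := hasDerivAt_iff_tendsto_slope.mp hd
  have hεt : Tendsto ε atTop (𝓝[≠] (0:ℝ)) :=
    tendsto_nhdsWithin_iff.mpr ⟨hεlim, Eventually.of_forall fun n => hε0 n⟩
  refine (hslope.comp hεt).congr fun n => ?_
  simp only [Function.comp_apply, slope_def_field]
  have h0 : a + (0:ℝ)*(b-a) = a := by ring
  have hx : (1-ε n)*a + ε n*b = a + (ε n)*(b-a) := by ring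
  rw [hx]
  simp only [hG, h0, sub_zero]
  rw [div_eq_inv_mul]

/-- Core lemma: one-sided derivative of relative entropy along a segment, given a lower
bound on the difference quotients coming from minimality. -/
lemma entropy_linearization {E : Type*} [MeasurableSpace E]
    (ν μ0 μ1 : Measure E) [IsProbabilityMeasure ν] [IsProbabilityMeasure μ0]
    [IsProbabilityMeasure μ1]
    (h0 : μ0 ≪ ν) (h1 : μ1 ≪ ν)
    (hint0 : Integrable (fun x => Real.log ((μ0.rnDeriv ν x).toReal)) μ0)
    (ε : ℕ → ℝ) (hε0 : ∀ n, 0 < ε n) (hε1 : ∀ n, ε n ≤ 1)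
    (hanti : Antitone ε) (hεlim : Tendsto ε atTop (𝓝 0))
    (με : ℕ → Measure E)
    (hμε : ∀ n, με n = ENNReal.ofReal (1 - ε n) • μ0 + ENNReal.ofReal (ε n) • μ1)
    (hprob : ∀ n, IsProbabilityMeasure (με n))
    (hεint : ∀ n, Integrable (fun x => Real.log (((με n).rnDeriv ν x).toReal)) (με n))
    (c : ℕ → ℝ) (C : ℝ) (hc : Tendsto c atTop (𝓝 C))
    (hineq : ∀ᶠ n in atTop, -(c n) ≤ (ε n)⁻¹ *
      ((∫ x, Real.log (((με n).rnDeriv ν x).toReal) ∂(με n)) -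
       ∫ x, Real.log ((μ0.rnDeriv ν x).toReal) ∂μ0)) :
    Integrable (fun x => Real.log ((μ0.rnDeriv ν x).toReal)) μ1 ∧
    -C ≤ (∫ x, Real.log ((μ0.rnDeriv ν x).toReal) ∂μ1) -
      ∫ x, Real.log ((μ0.rnDeriv ν x).toReal) ∂μ0 := by
  have hAC : ∀ n, με n ≪ ν := fun n => by
    rw [hμε n]
    exact Measure.AbsolutelyContinuous.add_left (h0.smul_left _) (h1.smul_left _)
  set f0 : E → ℝ := fun x => (μ0.rnDeriv ν x).toReal with hf0
  set f1 : E → ℝ := fun x => (μ1.rnDeriv ν x).toReal with hf1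
  have hf0m : Measurable f0 := (Measure.measurable_rnDeriv _ _).ennreal_toReal
  have hf1m : Measurable f1 := (Measure.measurable_rnDeriv _ _).ennreal_toReal
  -- a.e. identification of the density of `με n`
  have hrn : ∀ n, (fun x => ((με n).rnDeriv ν x).toReal)
      =ᵐ[ν] fun x => (1 - ε n) * f0 x + ε n * f1 x := by
    intro n
    haveI : IsFiniteMeasure (ENNReal.ofReal (1 - ε n) • μ0) := by
      constructor
      rw [Measure.smul_apply, smul_eq_mul, measure_univ, mul_one]
      exact ENNReal.ofReal_lt_top
    haveI : IsFiniteMeasure (ENNReal.ofReal (ε n) • μ1) := by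
      constructor
      rw [Measure.smul_apply, smul_eq_mul, measure_univ, mul_one]
      exact ENNReal.ofReal_lt_top
    have hadd : (με n).rnDeriv ν =ᵐ[ν]
        (ENNReal.ofReal (1 - ε n) • μ0).rnDeriv ν + (ENNReal.ofReal (ε n) • μ1).rnDeriv ν := by
      rw [hμε n]; exact Measure.rnDeriv_add' _ _ _
    have hs0 : (ENNReal.ofReal (1 - ε n) • μ0).rnDeriv ν
        =ᵐ[ν] ENNReal.ofReal (1 - ε n) • μ0.rnDeriv ν :=
      Measure.rnDeriv_smul_left_of_ne_top' _ _ ENNReal.ofReal_ne_top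
    have hs1 : (ENNReal.ofReal (ε n) • μ1).rnDeriv ν
        =ᵐ[ν] ENNReal.ofReal (ε n) • μ1.rnDeriv ν :=
      Measure.rnDeriv_smul_left_of_ne_top' _ _ ENNReal.ofReal_ne_top
    filter_upwards [hadd, hs0, hs1, μ0.rnDeriv_lt_top ν, μ1.rnDeriv_lt_top ν]
      with x hx hx0 hx1 ht0 ht1'
    rw [hx]
    simp only [Pi.add_apply, hx0, hx1, Pi.smul_apply, smul_eq_mul]
    rw [ENNReal.toReal_add (ENNReal.mul_ne_top ENNReal.ofReal_ne_top ht0.ne)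
      (ENNReal.mul_ne_top ENNReal.ofReal_ne_top ht1'.ne), ENNReal.toReal_mul,
      ENNReal.toReal_mul, ENNReal.toReal_ofReal (by linarith [hε1 n]),
      ENNReal.toReal_ofReal (hε0 n).le]
  -- entropy of `με n` as an integral against ν
  have hHn : ∀ n, ∫ x, Real.log (((με n).rnDeriv ν x).toReal) ∂(με n)
      = ∫ x, ((1 - ε n) * f0 x + ε n * f1 x) * Real.log ((1 - ε n) * f0 x + ε n * f1 x) ∂ν := by
    intro n
    haveI := hprob n
    rw [← integral_rnDeriv_smul (hAC n)
      (f := fun x => Real.log (((με n).rnDeriv ν x).toReal))]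
    refine integral_congr_ae ?_
    filter_upwards [hrn n] with x hx
    simp only [smul_eq_mul, hx]
  have hH0 : ∫ x, Real.log ((μ0.rnDeriv ν x).toReal) ∂μ0
      = ∫ x, f0 x * Real.log (f0 x) ∂ν := by
    rw [← integral_rnDeriv_smul h0 (f := fun x => Real.log ((μ0.rnDeriv ν x).toReal))]
    simp only [smul_eq_mul, hf0]
  -- integrability of the entropy densities
  have hGn_int : ∀ n, Integrable
      (fun x => ((1 - ε n) * f0 x + ε n * f1 x) * Real.log ((1 - ε n) * f0 x + ε n * f1 x)) ν := by
    intro n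
    haveI := hprob n
    have := (integrable_rnDeriv_smul_iff (hAC n)).mpr (hεint n)
    refine this.congr ?_
    filter_upwards [hrn n] with x hx
    simp only [smul_eq_mul, hx]
  have hG0_int : Integrable (fun x => f0 x * Real.log (f0 x)) ν := by
    have := (integrable_rnDeriv_smul_iff h0).mpr hint0
    exact this.congr (Eventually.of_forall fun x => by simp [smul_eq_mul, hf0])
  -- the difference quotients
  set q : ℕ → E → ℝ := fun n x => (ε n)⁻¹ *
    (((1 - ε n) * f0 x + ε n * f1 x) * Real.log ((1 - ε n) * f0 x + ε n * f1 x)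
      - f0 x * Real.log (f0 x)) with hq
  have hq_int : ∀ n, Integrable (q n) ν := fun n => ((hGn_int n).sub hG0_int).const_mul _
  have hq_meas : ∀ n, Measurable (q n) := by
    intro n
    apply Measurable.const_mul
    exact (((hf0m.const_mul _).add (hf1m.const_mul _)).mul
      (Real.measurable_log.comp ((hf0m.const_mul _).add (hf1m.const_mul _)))).sub
      (hf0m.mul (Real.measurable_log.comp hf0m))
  -- pointwise antitonicity in n
  have hq_anti : ∀ x, ∀ ⦃n m : ℕ⦄, n ≤ m → q m x ≤ q n x := by
    intro x n m hnm
    exact slope_mono_mul_log ENNReal.toReal_nonneg ENNReal.toReal_nonneg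
      (hε0 m) (hanti hnm) (hε1 n)
  -- ∫ q n expressed through the entropies
  have hq_integral : ∀ n, ∫ x, q n x ∂ν = (ε n)⁻¹ *
      ((∫ x, Real.log (((με n).rnDeriv ν x).toReal) ∂(με n)) -
       ∫ x, Real.log ((μ0.rnDeriv ν x).toReal) ∂μ0) := by
    intro n
    calc ∫ x, q n x ∂ν
        = (ε n)⁻¹ * ∫ x, (((1 - ε n) * f0 x + ε n * f1 x) *
            Real.log ((1 - ε n) * f0 x + ε n * f1 x) - f0 x * Real.log (f0 x)) ∂ν :=
          integral_const_mul _ _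
      _ = _ := by rw [integral_sub (hGn_int n) hG0_int, ← hHn n, ← hH0]
  have hineq' : ∀ᶠ n in atTop, -(c n) ≤ ∫ x, q n x ∂ν := by
    filter_upwards [hineq] with n hn
    rw [hq_integral n]; exact hn

  -- the (monotone) differences D n = q 0 - q n, and their lintegrals
  set D : ℕ → E → ℝ := fun n x => q 0 x - q n x with hD
  have hD_nonneg : ∀ n x, 0 ≤ D n x := fun n x => sub_nonneg.mpr (hq_anti x (Nat.zero_le n))
  have hD_mono : ∀ x, Monotone fun n => D n x := fun x n m hnm =>
    sub_le_sub_left (hq_anti x hnm) _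
  have hD_int : ∀ n, Integrable (D n) ν := fun n => (hq_int 0).sub (hq_int n)
  have hlin_eq : ∀ n, ∫⁻ x, ENNReal.ofReal (D n x) ∂ν
      = ENNReal.ofReal (∫ x, D n x ∂ν) :=
    fun n => (ofReal_integral_eq_lintegral_ofReal (hD_int n)
      (Eventually.of_forall fun x => hD_nonneg n x)).symm
  -- uniform bound on the lintegrals
  obtain ⟨Cb, hCb⟩ : ∃ Cb : ℝ, ∀ᶠ n in atTop, ∫ x, D n x ∂ν ≤ Cb := by
    refine ⟨∫ x, q 0 x ∂ν + (C + 1), ?_⟩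
    have hcev : ∀ᶠ n in atTop, c n ≤ C + 1 :=
      (hc.eventually (eventually_le_nhds (by linarith : C < C + 1)))
    filter_upwards [hineq', hcev] with n h1' h2'
    have : ∫ x, D n x ∂ν = ∫ x, q 0 x ∂ν - ∫ x, q n x ∂ν :=
      integral_sub (hq_int 0) (hq_int n)
    rw [this]; linarith
  set W : E → ℝ≥0∞ := fun x => ⨆ n, ENNReal.ofReal (D n x) with hW
  have hW_meas : Measurable W :=
    Measurable.iSup fun n => (hq_meas 0).sub (hq_meas n) |>.ennreal_ofReal
  have hW_lint : ∫⁻ x, W x ∂ν = ⨆ n, ∫⁻ x, ENNReal.ofReal (D n x) ∂ν := by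
    refine lintegral_iSup' (fun n => ((hq_meas 0).sub (hq_meas n)).ennreal_ofReal.aemeasurable)
      (Eventually.of_forall fun x n m hnm => ENNReal.ofReal_le_ofReal (hD_mono x hnm))
  have hW_fin : ∫⁻ x, W x ∂ν < ⊤ := by
    rw [hW_lint]
    have hmono : Monotone fun n => ∫⁻ x, ENNReal.ofReal (D n x) ∂ν := fun n m hnm =>
      lintegral_mono fun x => ENNReal.ofReal_le_ofReal (hD_mono x hnm)
    have hle : (⨆ n, ∫⁻ x, ENNReal.ofReal (D n x) ∂ν) ≤ ENNReal.ofReal Cb := by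
      refine le_of_tendsto (tendsto_atTop_iSup hmono) ?_
      filter_upwards [hCb] with n hn
      rw [hlin_eq n]
      exact ENNReal.ofReal_le_ofReal hn
    exact lt_of_le_of_lt hle ENNReal.ofReal_lt_top

  have hW_ae : ∀ᵐ x ∂ν, W x < ⊤ := ae_lt_top hW_meas hW_fin.ne
  set L : E → ℝ := fun x => (Real.log (f0 x) + 1) * (f1 x - f0 x) with hLdef
  have hL_meas : Measurable L :=
    ((Real.measurable_log.comp hf0m).add measurable_const).mul (hf1m.sub hf0m)
  -- a.e. pointwise convergence of the difference quotients
  have hq_lim : ∀ᵐ x ∂ν, Tendsto (fun n => q n x) atTop (𝓝 (L x)) := by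
    filter_upwards [hW_ae] with x hx
    rcases (ENNReal.toReal_nonneg : (0:ℝ) ≤ f0 x).lt_or_eq with hpos | hzero
    · exact tendsto_slope_mul_log hpos (fun n => (hε0 n).ne') hεlim
    · have hf1x : f1 x = 0 := by
        by_contra hne
        have hf1pos : 0 < f1 x := (ENNReal.toReal_nonneg).lt_of_ne (Ne.symm hne)
        have hqx : ∀ n, q n x = f1 x * Real.log (ε n * f1 x) := by
          intro n
          show (ε n)⁻¹ * (((1 - ε n) * f0 x + ε n * f1 x) *
              Real.log ((1 - ε n) * f0 x + ε n * f1 x) - f0 x * Real.log (f0 x)) = _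
          have hne : ε n ≠ 0 := (hε0 n).ne'
          rw [show f0 x = 0 from hzero.symm]
          field_simp
          ring
        have h1' : Tendsto (fun n => ε n * f1 x) atTop (𝓝[>] 0) := by
          refine tendsto_nhdsWithin_iff.mpr ⟨?_, Eventually.of_forall fun n =>
            mul_pos (hε0 n) hf1pos⟩
          simpa using hεlim.mul_const (f1 x)
        have htend : Tendsto (fun n => q n x) atTop atBot := by
          refine Tendsto.congr (fun n => (hqx n).symm) ?_
          exact Tendsto.const_mul_atBot hf1pos
            (Real.tendsto_log_nhdsGT_zero.comp h1')
        have hDtop : Tendsto (fun n => D n x) atTop atTop := by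
          rw [tendsto_atTop]
          intro M
          filter_upwards [htend.eventually (eventually_le_atBot (q 0 x - M))] with n hn
          show M ≤ q 0 x - q n x
          linarith
        obtain ⟨n, hn⟩ := (tendsto_atTop.mp hDtop ((W x).toReal + 1)).exists
        have hle : ENNReal.ofReal (D n x) ≤ W x := le_iSup (fun k => ENNReal.ofReal (D k x)) n
        have hcon : D n x ≤ (W x).toReal := (ENNReal.ofReal_le_iff_le_toReal hx.ne).mp hle
        linarith
      have hqz : ∀ n, q n x = 0 := by
        intro n
        show (ε n)⁻¹ * (((1 - ε n) * f0 x + ε n * f1 x) *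
            Real.log ((1 - ε n) * f0 x + ε n * f1 x) - f0 x * Real.log (f0 x)) = 0
        rw [show f0 x = 0 from hzero.symm, hf1x]
        simp
      have hLz : L x = 0 := by
        show (Real.log (f0 x) + 1) * (f1 x - f0 x) = 0
        rw [show f0 x = 0 from hzero.symm, hf1x]
        ring
      rw [hLz]
      exact Tendsto.congr (fun n => (hqz n).symm) tendsto_const_nhds

  -- monotone convergence for D n → q 0 - L
  have hq0L : ∀ᵐ x ∂ν, Tendsto (fun n => D n x) atTop (𝓝 (q 0 x - L x)) :=
    hq_lim.mono fun x hx => tendsto_const_nhds.sub hx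
  have hq0L_nonneg : ∀ᵐ x ∂ν, 0 ≤ q 0 x - L x :=
    hq_lim.mono fun x hx => sub_nonneg.mpr
      (le_of_tendsto hx (Eventually.of_forall fun n => hq_anti x (Nat.zero_le n)))
  have hWL : ∀ᵐ x ∂ν, W x = ENNReal.ofReal (q 0 x - L x) := by
    filter_upwards [hq0L] with x hx
    exact tendsto_nhds_unique
      (tendsto_atTop_iSup fun n m hnm => ENNReal.ofReal_le_ofReal (hD_mono x hnm))
      ((ENNReal.continuous_ofReal.tendsto _).comp hx)
  have hq0L_int : Integrable (fun x => q 0 x - L x) ν := by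
    refine ⟨((hq_meas 0).sub hL_meas).aestronglyMeasurable, ?_⟩
    rw [hasFiniteIntegral_iff_ofReal hq0L_nonneg]
    calc ∫⁻ x, ENNReal.ofReal (q 0 x - L x) ∂ν
        = ∫⁻ x, W x ∂ν := (lintegral_congr_ae hWL).symm
      _ < ⊤ := hW_fin
  have hL_int : Integrable L ν :=
    ((hq_int 0).sub hq0L_int).congr (Eventually.of_forall fun x => by
      simp only [Pi.sub_apply]; ring)
  have hDlim_int : Tendsto (fun n => ∫ x, D n x ∂ν) atTop (𝓝 (∫ x, (q 0 x - L x) ∂ν)) :=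
    integral_tendsto_of_tendsto_of_monotone hD_int hq0L_int
      (Eventually.of_forall hD_mono) hq0L
  have hqint_lim : Tendsto (fun n => ∫ x, q n x ∂ν) atTop (𝓝 (∫ x, L x ∂ν)) := by
    have h1' : ∀ n, ∫ x, q n x ∂ν = ∫ x, q 0 x ∂ν - ∫ x, D n x ∂ν := fun n => by
      rw [integral_sub (hq_int 0) (hq_int n)]; ring
    have h2' := (tendsto_const_nhds (x := ∫ x, q 0 x ∂ν) (f := atTop (α := ℕ))).sub hDlim_int
    have h3' : ∫ x, q 0 x ∂ν - ∫ x, (q 0 x - L x) ∂ν = ∫ x, L x ∂ν := by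
      rw [integral_sub (hq_int 0) hL_int]; ring
    rw [h3'] at h2'
    exact Tendsto.congr (fun n => (h1' n).symm) h2'
  have hLC : -C ≤ ∫ x, L x ∂ν := le_of_tendsto_of_tendsto hc.neg hqint_lim hineq'
  -- unpacking ∫ L
  have hint_f0 : Integrable (fun x => (μ0.rnDeriv ν x).toReal) ν :=
    Measure.integrable_toReal_rnDeriv
  have hint_f1 : Integrable (fun x => (μ1.rnDeriv ν x).toReal) ν :=
    Measure.integrable_toReal_rnDeriv
  have hdiff_int : Integrable (fun x => f1 x - f0 x) ν := hint_f1.sub hint_f0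
  have hdiff_zero : ∫ x, (f1 x - f0 x) ∂ν = 0 := by
    rw [integral_sub hint_f1 hint_f0, Measure.integral_toReal_rnDeriv h1,
      Measure.integral_toReal_rnDeriv h0]
    simp
  have hlogdiff_int : Integrable (fun x => Real.log (f0 x) * (f1 x - f0 x)) ν :=
    (hL_int.sub hdiff_int).congr (Eventually.of_forall fun x => by
      show (Real.log (f0 x) + 1) * (f1 x - f0 x) - (f1 x - f0 x) = _; ring)
  have hlogdiff_val : ∫ x, Real.log (f0 x) * (f1 x - f0 x) ∂ν = ∫ x, L x ∂ν := by
    have h4' : ∫ x, L x ∂ν = ∫ x, (Real.log (f0 x) * (f1 x - f0 x) + (f1 x - f0 x)) ∂ν :=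
      integral_congr_ae (Eventually.of_forall fun x => by
        show (Real.log (f0 x) + 1) * (f1 x - f0 x) = _; ring)
    rw [h4', integral_add hlogdiff_int hdiff_int, hdiff_zero, add_zero]
  have hf1log_int : Integrable (fun x => f1 x * Real.log (f0 x)) ν :=
    (hlogdiff_int.add hG0_int).congr (Eventually.of_forall fun x => by
      simp only [Pi.add_apply]; ring)
  have hconc1 : Integrable (fun x => Real.log (f0 x)) μ1 := by
    refine (integrable_rnDeriv_smul_iff h1).mp ?_
    exact hf1log_int.congr (Eventually.of_forall fun x => by
      show f1 x * Real.log (f0 x) = (μ1.rnDeriv ν x).toReal • Real.log (f0 x)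
      rw [smul_eq_mul])
  have hv1 : ∫ x, Real.log (f0 x) ∂μ1 = ∫ x, f1 x * Real.log (f0 x) ∂ν := by
    rw [← integral_rnDeriv_smul h1 (f := fun x => Real.log (f0 x))]
    refine integral_congr_ae (Eventually.of_forall fun x => ?_)
    show (μ1.rnDeriv ν x).toReal • Real.log (f0 x) = f1 x * Real.log (f0 x)
    rw [smul_eq_mul]
  refine ⟨hconc1, ?_⟩
  have h5' : ∫ x, f1 x * Real.log (f0 x) ∂ν - ∫ x, f0 x * Real.log (f0 x) ∂ν
      = ∫ x, Real.log (f0 x) * (f1 x - f0 x) ∂ν := by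
    rw [← integral_sub hf1log_int hG0_int]
    exact integral_congr_ae (Eventually.of_forall fun x => by ring)
  rw [hv1, hH0]
  rw [h5', hlogdiff_val]
  exact hLC



namespace Pphi

variable {E : Type*} [MeasurableSpace E] {φ : E → ℝ}

lemma integrable_phi (hφm : Measurable φ) (hφ0 : ∀ x, 0 ≤ φ x) (μ : Pphi E φ) :
    Integrable φ μ.m := by
  refine ⟨hφm.aestronglyMeasurable, ?_⟩
  rw [hasFiniteIntegral_iff_ofReal (Eventually.of_forall hφ0)]
  exact μ.finInt

lemma integrable_of_bound (hφm : Measurable φ) (hφ0 : ∀ x, 0 ≤ φ x) (μ : Pphi E φ)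
    {f : E → ℝ} (hf : AEStronglyMeasurable f μ.m) (C : ℝ)
    (hb : ∀ x, |f x| ≤ C * (1 + φ x)) : Integrable f μ.m := by
  have h1 : Integrable (fun x => C * (1 + φ x)) μ.m :=
    (((integrable_const (1:ℝ)).add (integrable_phi hφm hφ0 μ)).const_mul C)
  exact h1.mono' hf (Eventually.of_forall fun x => by
    simpa [Real.norm_eq_abs] using hb x)

lemma comb_m (μ ν' : Pphi E φ) {ε : ℝ} (h0 : 0 ≤ ε) (h1 : ε ≤ 1) :
    (μ.comb ν' ε).m = ENNReal.ofReal (1 - ε) • μ.m + ENNReal.ofReal ε • ν'.m := by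
  rw [Pphi.comb, dif_pos ⟨h0, h1⟩]
  rfl

lemma integral_comb (μ ν' : Pphi E φ) {ε : ℝ} (h0 : 0 ≤ ε) (h1 : ε ≤ 1) {f : E → ℝ}
    (hfμ : Integrable f μ.m) (hfν : Integrable f ν'.m) :
    ∫ x, f x ∂(μ.comb ν' ε).m = (1 - ε) * ∫ x, f x ∂μ.m + ε * ∫ x, f x ∂ν'.m := by
  rw [comb_m _ _ h0 h1,
    integral_add_measure (hfμ.smul_measure ENNReal.ofReal_ne_top)
      (hfν.smul_measure ENNReal.ofReal_ne_top),
    integral_smul_measure, integral_smul_measure,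
    ENNReal.toReal_ofReal (by linarith), ENNReal.toReal_ofReal h0, smul_eq_mul, smul_eq_mul]

end Pphi

lemma relEnt_finite {E : Type*} [MeasurableSpace E] {μ ν : Measure E}
    (h : relEnt μ ν < ⊤) :
    μ ≪ ν ∧ Integrable (fun x => Real.log ((μ.rnDeriv ν x).toReal)) μ ∧
      relEnt μ ν = ((∫ x, Real.log ((μ.rnDeriv ν x).toReal) ∂μ : ℝ) : EReal) := by
  by_cases hc : μ ≪ ν ∧ Integrable (fun x => Real.log ((μ.rnDeriv ν x).toReal)) μ
  · exact ⟨hc.1, hc.2, by rw [relEnt, if_pos hc]⟩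
  · exfalso
    rw [relEnt, if_neg hc] at h
    exact lt_irrefl _ h

/-- linearisation: the minimiser `μbar` of `I` under the constraints is
also a minimiser of the linearised problem, and `log(dμbar/dν)` is integrable against any
admissible measure satisfying the linearised inequality constraints. -/
theorem stmt9 {E : Type*} [MetricSpace E] [CompleteSpace E]
    [TopologicalSpace.SeparableSpace E] [MeasurableSpace E] [BorelSpace E]
    (φ : E → ℝ) (hφc : Continuous φ) (hφ0 : ∀ x, 0 ≤ φ x)
    (ν : Measure E) [IsProbabilityMeasure ν]
    (hexp : ∀ α : ℝ, 0 < α → ∫⁻ x, ENNReal.ofReal (Real.exp (α * φ x)) ∂ν < ⊤)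
    (F : Pphi E φ → EReal) (hFbot : ∀ μ, F μ ≠ ⊥)
    (I : Pphi E φ → EReal) (hI : I = fun μ => relEnt μ.m ν + F μ)
    (hIlsc : LowerSemicontinuous I)
    -- linear equality constraints
    (S : Type*) (ζ : S → E → ℝ) (hζc : ∀ s, Continuous (ζ s))
    (Cζ : S → ℝ) (hCζ : ∀ s, 0 ≤ Cζ s) (hζb : ∀ s x, |ζ s x| ≤ Cζ s * (1 + φ x))
    -- nonlinear inequality constraints
    (T : Type*) [MetricSpace T] [CompactSpace T] [MeasurableSpace T] [BorelSpace T]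
    (Ψ : T → Pphi E φ → ℝ) (hΨlsc : ∀ t, LowerSemicontinuous (Ψ t))
    -- constraint sets and domain
    (DI : Set (Pphi E φ)) (hDI : DI = {μ | relEnt μ.m ν < ⊤ ∧ F μ < ⊤})
    (Aζ : Set (Pphi E φ)) (hAζ : Aζ = {μ | ∀ s, (∫ x, ζ s x ∂μ.m) = 0})
    (AΨ : Set (Pphi E φ)) (hAΨ : AΨ = {μ | ∀ t, Ψ t μ ≤ 0})
    -- the minimiser
    (μbar : Pphi E φ) (hadm : μbar ∈ DI ∩ (Aζ ∩ AΨ))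
    (hmin : ∀ μ ∈ DI ∩ (Aζ ∩ AΨ), I μbar ≤ I μ)
    -- (A4): convexity of the domain and differentiability of F at μbar
    (hDIconv : ∀ μ ∈ DI, ∀ μ' ∈ DI, ∀ ε ∈ Icc (0:ℝ) 1, μ.comb μ' ε ∈ DI)
    (DF : E → ℝ) (hDF : HasLFDerivWithinAtE DI F μbar DF)
    -- (A5)-(i): continuity of t ↦ Ψ_t(μbar)
    (hΨtcont : Continuous fun t => Ψ t μbar)
    -- (A5)-(ii): differentiability of Ψ_t at μbar, uniformly in t
    (DΨ : T → E → ℝ) (hDΨmeas : ∀ t, Measurable (DΨ t))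
    (hDΨint : ∀ t, ∀ μ' : Pphi E φ, Integrable (DΨ t) μ'.m)
    (hDΨnorm : ∀ t, (∫ x, DΨ t x ∂μbar.m) = 0)
    (hΨdiff : ∀ μ' : Pphi E φ, ∀ δ > (0:ℝ), ∀ᶠ ε in 𝓝[>] (0:ℝ), ∀ t,
      |ε⁻¹ * (Ψ t (μbar.comb μ' ε) - Ψ t μbar) -
        ((∫ x, DΨ t x ∂μ'.m) - ∫ x, DΨ t x ∂μbar.m)| < δ)
    -- (A5)-(iii): continuity of t ↦ δΨ_t/δμ(μbar,x)
    (hDΨtcont : ∀ x : E, Continuous fun t => DΨ t x)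
    -- (A5)-(iv): domination
    (DΨbd : ℝ) (hDΨbd0 : 0 ≤ DΨbd) (hDΨbd : ∀ t x, |DΨ t x| ≤ DΨbd * (1 + φ x))
    -- (A5)-(v): constraint qualification
    (μtilde : Pphi E φ) (hμtilde : μtilde ∈ DI ∩ Aζ) (εt : ℝ) (hεt : 0 < εt)
    (hqual : ∀ t, Ψ t μbar +
      εt * ((∫ x, DΨ t x ∂μtilde.m) - ∫ x, DΨ t x ∂μbar.m) < 0) :
    -- (1) integrability of log(dμbar/dν)
    (∀ μ ∈ DI ∩ Aζ,
      (∀ t, Ψ t μbar + εt * ((∫ x, DΨ t x ∂μ.m) - ∫ x, DΨ t x ∂μbar.m) ≤ 0) →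
      Integrable (fun x => Real.log ((μbar.m.rnDeriv ν x).toReal)) μ.m) ∧
    -- (2) μbar minimises the linearised functional, with minimum value H(μbar|ν)
    ((((∫ x, (Real.log ((μbar.m.rnDeriv ν x).toReal) + DF x) ∂μbar.m : ℝ)) : EReal)
        = relEnt μbar.m ν ∧
      ∀ μ ∈ DI ∩ Aζ,
        (∀ t, Ψ t μbar + εt * ((∫ x, DΨ t x ∂μ.m) - ∫ x, DΨ t x ∂μbar.m) ≤ 0) →
        relEnt μbar.m ν ≤
          (((∫ x, (Real.log ((μbar.m.rnDeriv ν x).toReal) + DF x) ∂μ.m : ℝ)) : EReal)) := by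
  subst hDI hAζ hAΨ hI
  have hφm : Measurable φ := hφc.measurable
  obtain ⟨⟨hbarH, hbarF⟩, hbarζ, hbarΨ⟩ := hadm
  obtain ⟨hbarAC, hbarInt, hbarEq⟩ := relEnt_finite hbarH
  have hζint : ∀ s (μ' : Pphi E φ), Integrable (ζ s) μ'.m := fun s μ' =>
    μ'.integrable_of_bound hφm hφ0 ((hζc s).measurable.aestronglyMeasurable) _ (hζb s)
  -- The key variational step
  have key : ∀ μ' : Pphi E φ, (relEnt μ'.m ν < ⊤ ∧ F μ' < ⊤) →
      (∀ s, ∫ x, ζ s x ∂μ'.m = 0) →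
      (∃ η > 0, ∀ t, Ψ t μbar +
        εt * ((∫ x, DΨ t x ∂μ'.m) - ∫ x, DΨ t x ∂μbar.m) ≤ -η) →
      Integrable (fun x => Real.log ((μbar.m.rnDeriv ν x).toReal)) μ'.m ∧
      (∫ x, Real.log ((μbar.m.rnDeriv ν x).toReal) ∂μbar.m)
        ≤ (∫ x, Real.log ((μbar.m.rnDeriv ν x).toReal) ∂μ'.m) + ∫ x, DF x ∂μ'.m := by
    rintro μ' hDI' hAζ' ⟨η, hη, hqual'⟩
    obtain ⟨hAC', hInt', hEq'⟩ := relEnt_finite hDI'.1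
    set ε0 : ℝ := min εt 1 with hε0def
    have hε0pos : 0 < ε0 := lt_min hεt one_pos
    set εs : ℕ → ℝ := fun n => ε0 / (n + 1) with hεsdef
    have hεspos : ∀ n, 0 < εs n := fun n => div_pos hε0pos (by positivity)
    have hεsle : ∀ n, εs n ≤ ε0 := fun n =>
      div_le_self hε0pos.le (by push_cast; linarith [Nat.cast_nonneg (α := ℝ) n])
    have hεs1 : ∀ n, εs n ≤ 1 := fun n => (hεsle n).trans (min_le_right _ _)
    have hεsεt : ∀ n, εs n ≤ εt := fun n => (hεsle n).trans (min_le_left _ _)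
    have hanti : Antitone εs := by
      intro n m hnm
      rw [hεsdef]
      simp only
      rw [div_le_div_iff₀ (by positivity) (by positivity)]
      have : (n:ℝ) ≤ m := by exact_mod_cast hnm
      nlinarith [hε0pos]
    have hεslim : Tendsto εs atTop (𝓝 0) :=
      Tendsto.div_atTop tendsto_const_nhds
        (tendsto_atTop_add_const_right atTop 1 tendsto_natCast_atTop_atTop)
    have hεsgt : Tendsto εs atTop (𝓝[>] 0) :=
      tendsto_nhdsWithin_iff.mpr ⟨hεslim, Eventually.of_forall hεspos⟩
    set νn : ℕ → Pphi E φ := fun n => μbar.comb μ' (εs n) with hνndef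
    have hmemn : ∀ n, (νn n).m
        = ENNReal.ofReal (1 - εs n) • μbar.m + ENNReal.ofReal (εs n) • μ'.m :=
      fun n => Pphi.comb_m _ _ (hεspos n).le (hεs1 n)
    have hDIn : ∀ n, relEnt (νn n).m ν < ⊤ ∧ F (νn n) < ⊤ := fun n =>
      hDIconv μbar ⟨hbarH, hbarF⟩ μ' hDI' (εs n) ⟨(hεspos n).le, hεs1 n⟩
    have hAζn : ∀ n, ∀ s, ∫ x, ζ s x ∂(νn n).m = 0 := fun n s => by
      rw [Pphi.integral_comb _ _ (hεspos n).le (hεs1 n) (hζint s μbar) (hζint s μ'),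
        hbarζ s, hAζ' s]
      ring
    -- eventually the inequality constraints hold for the perturbed measures
    have hAΨn : ∀ᶠ n in atTop, ∀ t, Ψ t (νn n) ≤ 0 := by
      have hδ : (0:ℝ) < η / (2 * εt) := by positivity
      filter_upwards [hεsgt.eventually (hΨdiff μ' _ hδ)] with n hn t
      have h1 := (abs_lt.mp (hn t)).2
      set Δ := (∫ x, DΨ t x ∂μ'.m) - ∫ x, DΨ t x ∂μbar.m with hΔdef
      have h2 : Ψ t (νn n) < Ψ t μbar + εs n * (Δ + η/(2*εt)) := by
        have h3 := mul_lt_mul_of_pos_left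
          (by linarith : (εs n)⁻¹ * (Ψ t (μbar.comb μ' (εs n)) - Ψ t μbar) < Δ + η/(2*εt))
          (hεspos n)
        rw [← mul_assoc, mul_inv_cancel₀ (hεspos n).ne', one_mul] at h3
        have : Ψ t (νn n) = Ψ t (μbar.comb μ' (εs n)) := rfl
        linarith
      have h4 : Ψ t μbar + εs n * Δ ≤ -(εs n / εt) * η := by
        have hr0 : 0 < εs n / εt := div_pos (hεspos n) hεt
        have hr1 : εs n / εt ≤ 1 := (div_le_one hεt).mpr (hεsεt n)
        have hΨ0 : Ψ t μbar ≤ 0 := hbarΨ t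
        have hq' := hqual' t
        calc Ψ t μbar + εs n * Δ
            = (1 - εs n / εt) * Ψ t μbar + (εs n / εt) * (Ψ t μbar + εt * Δ) := by
              field_simp
              ring
          _ ≤ (1 - εs n / εt) * 0 + (εs n / εt) * (-η) :=
              add_le_add (mul_le_mul_of_nonneg_left hΨ0 (by linarith))
                (mul_le_mul_of_nonneg_left hq' hr0.le)
          _ = -(εs n / εt) * η := by ring
      have h5 : εs n * (η/(2*εt)) = (εs n / εt) * (η/2) := by
        field_simp
      have hr0 : 0 < εs n / εt := div_pos (hεspos n) hεt
      nlinarith [h2, h4, h5, mul_pos hr0 hη]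
    -- minimality gives the quotient lower bound
    have hminn : ∀ᶠ n in atTop,
        -((εs n)⁻¹ * ((F (νn n)).toReal - (F μbar).toReal)) ≤ (εs n)⁻¹ *
          ((∫ x, Real.log (((νn n).m.rnDeriv ν x).toReal) ∂(νn n).m) -
            ∫ x, Real.log ((μbar.m.rnDeriv ν x).toReal) ∂μbar.m) := by
      filter_upwards [hAΨn] with n hn
      have h6 := hmin (νn n) ⟨hDIn n, hAζn n, hn⟩
      dsimp only at h6
      obtain ⟨hACn, hIntn, hEqn⟩ := relEnt_finite (hDIn n).1
      set Rn := ∫ x, Real.log (((νn n).m.rnDeriv ν x).toReal) ∂(νn n).m with hRndef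
      set Rb := ∫ x, Real.log ((μbar.m.rnDeriv ν x).toReal) ∂μbar.m with hRbdef
      set fn := (F (νn n)).toReal with hfndef
      set fb := (F μbar).toReal with hfbdef
      have hFbar_eq : F μbar = ((F μbar).toReal : EReal) :=
        (EReal.coe_toReal hbarF.ne (hFbot μbar)).symm
      have hFn_eq : F (νn n) = ((F (νn n)).toReal : EReal) :=
        (EReal.coe_toReal (hDIn n).2.ne (hFbot _)).symm
      rw [hbarEq, hEqn, hFbar_eq, hFn_eq, ← EReal.coe_add, ← EReal.coe_add,
        EReal.coe_le_coe_iff] at h6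
      have h7 : (0:ℝ) ≤ (εs n)⁻¹ := (inv_pos.mpr (hεspos n)).le
      have h8 : (0:ℝ) ≤ (εs n)⁻¹ * ((Rn - Rb) + (fn - fb)) :=
        mul_nonneg h7 (by linarith)
      have hring : (εs n)⁻¹ * ((Rn - Rb) + (fn - fb))
          = (εs n)⁻¹ * (Rn - Rb) + (εs n)⁻¹ * (fn - fb) := mul_add _ _ _
      linarith
    -- the derivative of F along the segment
    have hcF : Tendsto (fun n => (εs n)⁻¹ * ((F (νn n)).toReal - (F μbar).toReal)) atTop
        (𝓝 ((∫ x, DF x ∂μ'.m) - ∫ x, DF x ∂μbar.m)) := by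
      have := (hDF.2.2.2 μ' hDI').comp hεsgt
      exact this.congr fun n => rfl
    -- apply the core entropy lemma
    have hcore := entropy_linearization ν μbar.m μ'.m hbarAC hAC' hbarInt εs hεspos hεs1
      hanti hεslim (fun n => (νn n).m) hmemn (fun n => inferInstance)
      (fun n => (relEnt_finite (hDIn n).1).2.1)
      (fun n => (εs n)⁻¹ * ((F (νn n)).toReal - (F μbar).toReal))
      ((∫ x, DF x ∂μ'.m) - ∫ x, DF x ∂μbar.m) hcF hminn
    refine ⟨hcore.1, ?_⟩
    have h9 := hDF.2.2.1
    have h10 := hcore.2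
    linarith
  -- integrability of DΨ-type integrals and continuity in t
  have hDΨcont : ∀ μ'' : Pphi E φ, Continuous fun t => ∫ x, DΨ t x ∂μ''.m := by
    intro μ''
    refine continuous_of_dominated (fun t => (hDΨmeas t).aestronglyMeasurable)
      (fun t => Eventually.of_forall fun x => ?_)
      (((integrable_const (1:ℝ)).add (Pphi.integrable_phi hφm hφ0 μ'')).const_mul DΨbd)
      (Eventually.of_forall fun x => hDΨtcont x)
    rw [Real.norm_eq_abs]
    exact hDΨbd t x
  -- uniform margin for the qualification direction
  obtain ⟨η0, hη0, hmt⟩ : ∃ η0 > (0:ℝ), ∀ t, Ψ t μbar +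
      εt * ((∫ x, DΨ t x ∂μtilde.m) - ∫ x, DΨ t x ∂μbar.m) ≤ -η0 := by
    rcases isEmpty_or_nonempty T with hT | hT
    · exact ⟨1, one_pos, fun t => (hT.false t).elim⟩
    · have hcont : Continuous fun t => Ψ t μbar +
          εt * ((∫ x, DΨ t x ∂μtilde.m) - ∫ x, DΨ t x ∂μbar.m) :=
        hΨtcont.add (continuous_const.mul ((hDΨcont μtilde).sub (hDΨcont μbar)))
      haveI := hT
      obtain ⟨t0, -, ht0⟩ := isCompact_univ.exists_isMaxOn univ_nonempty
        hcont.continuousOn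
      refine ⟨-(Ψ t0 μbar + εt * ((∫ x, DΨ t0 x ∂μtilde.m) - ∫ x, DΨ t0 x ∂μbar.m)),
        by linarith [hqual t0], fun t => ?_⟩
      have := ht0 (mem_univ t)
      simp only [Set.mem_setOf_eq] at this
      linarith
  -- main consequence for admissible μ
  have main : ∀ μ : Pphi E φ,
      μ ∈ {μ : Pphi E φ | relEnt μ.m ν < ⊤ ∧ F μ < ⊤} ∩ {μ | ∀ s, (∫ x, ζ s x ∂μ.m) = 0} →
      (∀ t, Ψ t μbar + εt * ((∫ x, DΨ t x ∂μ.m) - ∫ x, DΨ t x ∂μbar.m) ≤ 0) →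
      Integrable (fun x => Real.log ((μbar.m.rnDeriv ν x).toReal)) μ.m ∧
      (∫ x, Real.log ((μbar.m.rnDeriv ν x).toReal) ∂μbar.m)
        ≤ ∫ x, (Real.log ((μbar.m.rnDeriv ν x).toReal) + DF x) ∂μ.m := by
    rintro μ ⟨hμDI, hμAζ⟩ hcons
    obtain ⟨hmtDI, hmtAζ⟩ := hμtilde
    have happ : ∀ a : ℝ, 0 < a → a ≤ 1 →
        Integrable (fun x => Real.log ((μbar.m.rnDeriv ν x).toReal)) (μ.comb μtilde a).m ∧
        (∫ x, Real.log ((μbar.m.rnDeriv ν x).toReal) ∂μbar.m)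
          ≤ (∫ x, Real.log ((μbar.m.rnDeriv ν x).toReal) ∂(μ.comb μtilde a).m)
            + ∫ x, DF x ∂(μ.comb μtilde a).m := by
      intro a ha0 ha1
      refine key (μ.comb μtilde a) (hDIconv μ hμDI μtilde hmtDI a ⟨ha0.le, ha1⟩)
        (fun s => by
          rw [Pphi.integral_comb _ _ ha0.le ha1 (hζint s μ) (hζint s μtilde),
            hμAζ s, hmtAζ s]; ring)
        ⟨a * η0, mul_pos ha0 hη0, fun t => ?_⟩
      rw [Pphi.integral_comb _ _ ha0.le ha1 (hDΨint t μ) (hDΨint t μtilde)]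
      have h1 := hcons t
      have h2 := hmt t
      nlinarith [mul_le_mul_of_nonneg_left h1 (by linarith : (0:ℝ) ≤ 1 - a),
        mul_le_mul_of_nonneg_left h2 ha0.le]
    -- integrability of log(dμbar/dν) against μ and μtilde
    have h12 := happ (1/2) (by norm_num) (by norm_num)
    have hsplit : (μ.comb μtilde (1/2:ℝ)).m
        = ENNReal.ofReal (1 - 1/2) • μ.m + ENNReal.ofReal (1/2) • μtilde.m :=
      Pphi.comb_m _ _ (by norm_num) (by norm_num)
    have h12' := h12.1
    rw [hsplit, integrable_add_measure] at h12'
    have hIntμ : Integrable (fun x => Real.log ((μbar.m.rnDeriv ν x).toReal)) μ.m := by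
      have := h12'.1
      rwa [integrable_smul_measure (by norm_num [ENNReal.ofReal_eq_zero]) ENNReal.ofReal_ne_top] at this
    have hIntμt : Integrable (fun x => Real.log ((μbar.m.rnDeriv ν x).toReal)) μtilde.m := by
      have := h12'.2
      rwa [integrable_smul_measure (by norm_num [ENNReal.ofReal_eq_zero]) ENNReal.ofReal_ne_top] at this
    refine ⟨hIntμ, ?_⟩
    have hDFμ : Integrable DF μ.m := hDF.2.1 μ hμDI
    have hDFμt : Integrable DF μtilde.m := hDF.2.1 μtilde hmtDI
    set X := ∫ x, (Real.log ((μbar.m.rnDeriv ν x).toReal) + DF x) ∂μ.m with hXdef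
    set Y := ∫ x, (Real.log ((μbar.m.rnDeriv ν x).toReal) + DF x) ∂μtilde.m with hYdef
    set Rb := ∫ x, Real.log ((μbar.m.rnDeriv ν x).toReal) ∂μbar.m with hRbdef
    have hXsplit : X = (∫ x, Real.log ((μbar.m.rnDeriv ν x).toReal) ∂μ.m)
        + ∫ x, DF x ∂μ.m := integral_add hIntμ hDFμ
    have hYsplit : Y = (∫ x, Real.log ((μbar.m.rnDeriv ν x).toReal) ∂μtilde.m)
        + ∫ x, DF x ∂μtilde.m := integral_add hIntμt hDFμt
    -- for every a ∈ (0,1]: Rb ≤ (1-a) X + a Y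
    have hconv : ∀ a : ℝ, 0 < a → a ≤ 1 → Rb ≤ (1-a) * X + a * Y := by
      intro a ha0 ha1
      have h := (happ a ha0 ha1).2
      rw [Pphi.integral_comb _ _ ha0.le ha1 hIntμ hIntμt,
        Pphi.integral_comb _ _ ha0.le ha1 hDFμ hDFμt] at h
      rw [hXsplit, hYsplit]
      linarith
    -- let a → 0
    have hseq : Tendsto (fun k : ℕ => (1 - 1/(k+2)) * X + (1/(k+2)) * Y) atTop (𝓝 X) := by
      have h1 : Tendsto (fun k : ℕ => 1/((k:ℝ)+2)) atTop (𝓝 0) :=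
        Tendsto.div_atTop tendsto_const_nhds
          (tendsto_atTop_add_const_right atTop 2 tendsto_natCast_atTop_atTop)
      have h2 : Tendsto (fun k : ℕ => X + (1/((k:ℝ)+2)) * (Y - X)) atTop (𝓝 (X + 0 * (Y - X))) :=
        tendsto_const_nhds.add (h1.mul_const _)
      rw [zero_mul, add_zero] at h2
      exact h2.congr fun k => by ring
    refine ge_of_tendsto' hseq fun k => hconv (1/(k+2)) (by positivity) ?_
    rw [div_le_one (by positivity)]
    linarith [Nat.cast_nonneg (α := ℝ) k]
  -- assemble the three conclusions
  refine ⟨fun μ hμ hcons => (main μ hμ hcons).1, ?_, fun μ hμ hcons => ?_⟩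
  · rw [integral_add hbarInt (hDF.2.1 μbar ⟨hbarH, hbarF⟩), hDF.2.2.1, add_zero, hbarEq]
  · rw [hbarEq]
    exact EReal.coe_le_coe_iff.mpr (main μ hμ hcons).2
end
end

section
/- Assume I := H(·|ν) + F is lower semi-continuous on P_φ(E), ∫ e^{αφ} dν < ∞ for all α > 0, (ζ_s)_{s∈S} are continuous with |ζ_s| ≤ C_s(1+φ), each Ψ_t is lower semi-continuous, and F and all Ψ_t are convex on P_φ(E). Let μ̄ ∈ D_I ∩ A^ζ_Ψ satisfy: (i) F and each Ψ_t are differentiable at μ̄ w.r.t. the directions D_I ∩ A^ζ_Ψ; (ii) (t,x) ↦ δΨ_t/δμ(μ̄,x) is measurable and sup_{t∈T} |δΨ_t/δμ(μ̄,x)| ≤ D^Ψ(1+φ(x)); (iii) there exist ζ̄ in the L¹(E,dμ̄)-closure of Span(ζ_s, s∈S), a positive Radon measure λ̄ on T, and a measurable S̄ ⊆ E with μ̄(S̄) = 1 such that Z̄ := ∫ 1_{S̄} exp[−δF/δμ(μ̄,·) − ζ̄ − ∫_T δΨ_t/δμ(μ̄,·) λ̄(dt)] dν ∈ (0,∞),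 dμ̄/dν = Z̄^{-1} 1_{S̄} exp[−δF/δμ(μ̄,·) − ζ̄ − ∫_T δΨ_t/δμ(μ̄,·) λ̄(dt)], and Ψ_t(μ̄) = 0 for λ̄-a.e. t; (iv) ν(S̄) = 1, and for every μ ∈ D_I ∩ A^ζ_Ψ, ζ̄ ∈ L¹(E,dμ) with ∫ ζ̄ dμ = 0. Then μ̄ is the unique minimiser of I over D_I ∩ A^ζ_Ψ. -/
open MeasureTheory Filter Topology Set
open scoped ENNReal NNReal

noncomputable section

/-- Two elements of `P_φ(E)` with the same underlying measure are equal. -/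
lemma Pphi.ext_of_m {E : Type*} [MeasurableSpace E] {φ : E → ℝ} {μ ν : Pphi E φ}
    (h : μ.m = ν.m) : μ = ν := by
  cases μ with | mk a fa => cases ν with | mk b fb =>
  simp only [Pphi.m] at h
  congr 1
  exact Subtype.ext h

/-- A one-sided derivative at `0` of a function which is convex-dominated on a segment is
bounded by the corresponding chord slope. -/
lemma deriv_le_of_convex {a b L : ℝ} {G : ℝ → ℝ}
    (hconv : ∀ ε ∈ Set.Ioc (0:ℝ) 1, G ε ≤ (1-ε)*a + ε*b)
    (hG : Tendsto (fun ε => ε⁻¹ * (G ε - a)) (𝓝[>] (0:ℝ)) (𝓝 L)) : L ≤ b - a := by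
  refine le_of_tendsto hG ?_
  filter_upwards [Ioc_mem_nhdsGT_of_mem (⟨le_rfl, zero_lt_one⟩ : (0:ℝ) ∈ Set.Ico 0 1)] with ε hε
  have hε0 : 0 < ε := hε.1
  have h1 : G ε - a ≤ ε * (b - a) := by have := hconv ε hε; nlinarith
  calc ε⁻¹ * (G ε - a) ≤ ε⁻¹ * (ε * (b-a)) :=
        mul_le_mul_of_nonneg_left h1 (by positivity)
    _ = b - a := by field_simp

/-- Equality case of the elementary inequality `log t ≥ 1 - t⁻¹`. -/
lemma log_eq_one_sub_inv {t : ℝ} (ht : 0 < t) (h : Real.log t = 1 - t⁻¹) : t = 1 := by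
  by_contra hne
  have h2 : Real.log t⁻¹ < t⁻¹ - 1 :=
    Real.log_lt_sub_one_of_pos (by positivity) (by
      intro hh; exact hne (by field_simp at hh; linarith))
  rw [Real.log_inv] at h2
  linarith

/-- sufficient conditions in the convex case: in the convex setting, an
admissible measure with the Gibbs density, satisfying the complementary slackness
condition and the support/orthogonality conditions, is the unique minimiser. -/
theorem stmt11 {E : Type*} [MetricSpace E] [CompleteSpace E]
    [TopologicalSpace.SeparableSpace E] [MeasurableSpace E] [BorelSpace E]
    (φ : E → ℝ) (hφc : Continuous φ) (hφ0 : ∀ x, 0 ≤ φ x)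
    (ν : Measure E) [IsProbabilityMeasure ν]
    (hexp : ∀ α : ℝ, 0 < α → ∫⁻ x, ENNReal.ofReal (Real.exp (α * φ x)) ∂ν < ⊤)
    (F : Pphi E φ → EReal) (hFbot : ∀ μ, F μ ≠ ⊥)
    (I : Pphi E φ → EReal) (hI : I = fun μ => relEnt μ.m ν + F μ)
    (hIlsc : LowerSemicontinuous I)
    (S : Type*) (ζ : S → E → ℝ) (hζc : ∀ s, Continuous (ζ s))
    (Cζ : S → ℝ) (hCζ : ∀ s, 0 ≤ Cζ s) (hζb : ∀ s x, |ζ s x| ≤ Cζ s * (1 + φ x))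
    (T : Type*) [MetricSpace T] [CompactSpace T] [MeasurableSpace T] [BorelSpace T]
    (Ψ : T → Pphi E φ → ℝ) (hΨlsc : ∀ t, LowerSemicontinuous (Ψ t))
    -- (A7): convexity
    (hFconv : ∀ μ μ' : Pphi E φ, ∀ ε ∈ Icc (0:ℝ) 1,
      F (μ.comb μ' ε) ≤ ((1 - ε : ℝ) : EReal) * F μ + ((ε : ℝ) : EReal) * F μ')
    (hΨconv : ∀ t, ∀ μ μ' : Pphi E φ, ∀ ε ∈ Icc (0:ℝ) 1,
      Ψ t (μ.comb μ' ε) ≤ (1 - ε) * Ψ t μ + ε * Ψ t μ')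
    -- constraint sets and domain
    (DI : Set (Pphi E φ)) (hDI : DI = {μ | relEnt μ.m ν < ⊤ ∧ F μ < ⊤})
    (Aζ : Set (Pphi E φ)) (hAζ : Aζ = {μ | ∀ s, (∫ x, ζ s x ∂μ.m) = 0})
    (AΨ : Set (Pphi E φ)) (hAΨ : AΨ = {μ | ∀ t, Ψ t μ ≤ 0})
    -- the candidate measure
    (μbar : Pphi E φ) (hadm : μbar ∈ DI ∩ (Aζ ∩ AΨ))
    -- (i): differentiability w.r.t. the directions D_I ∩ A^ζ_Ψ
    (DF : E → ℝ) (hDF : HasLFDerivWithinAtE (DI ∩ (Aζ ∩ AΨ)) F μbar DF)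
    (DΨ : T → E → ℝ)
    (hDΨdiff : ∀ t, HasLFDerivWithinAt (DI ∩ (Aζ ∩ AΨ)) (Ψ t) μbar (DΨ t))
    -- (ii): measurability and domination of the derivatives
    (hDΨmeas : Measurable (Function.uncurry DΨ))
    (DΨbd : ℝ) (hDΨbd0 : 0 ≤ DΨbd) (hDΨbd : ∀ t x, |DΨ t x| ≤ DΨbd * (1 + φ x))
    -- (iii): the Gibbs data
    (ζbar : E → ℝ) (hζbarint : Integrable ζbar μbar.m)
    (hζbarspan : ∃ g : ℕ → E → ℝ, (∀ n, g n ∈ Submodule.span ℝ (Set.range ζ)) ∧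
      Filter.Tendsto (fun n => ∫ x, |g n x - ζbar x| ∂μbar.m) Filter.atTop (𝓝 0))
    (lam : Measure T) (hlamfin : IsFiniteMeasure lam)
    (Sbar : Set E) (hSbarmeas : MeasurableSet Sbar) (hμSbar : μbar.m Sbar = 1)
    (hZpos : 0 < ∫⁻ x in Sbar,
      ENNReal.ofReal (Real.exp (-DF x - ζbar x - ∫ t, DΨ t x ∂lam)) ∂ν)
    (hZfin : (∫⁻ x in Sbar,
      ENNReal.ofReal (Real.exp (-DF x - ζbar x - ∫ t, DΨ t x ∂lam)) ∂ν) < ⊤)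
    (hGibbs : μbar.m = ν.withDensity (fun x => Sbar.indicator (fun y =>
      (∫⁻ x' in Sbar,
        ENNReal.ofReal (Real.exp (-DF x' - ζbar x' - ∫ t, DΨ t x' ∂lam)) ∂ν)⁻¹ *
        ENNReal.ofReal (Real.exp (-DF y - ζbar y - ∫ t, DΨ t y ∂lam))) x))
    (hslack : ∀ᵐ t ∂lam, Ψ t μbar = 0)
    -- (iv): support and orthogonality conditions
    (hνSbar : ν Sbar = 1)
    (hζbarorth : ∀ μ ∈ DI ∩ (Aζ ∩ AΨ), Integrable ζbar μ.m ∧ (∫ x, ζbar x ∂μ.m) = 0) :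
    (∀ μ ∈ DI ∩ (Aζ ∩ AΨ), I μbar ≤ I μ) ∧
    (∀ μ ∈ DI ∩ (Aζ ∩ AΨ), I μ = I μbar → μ = μbar) := by
  classical
  haveI := hlamfin
  have hadm' : μbar ∈ DI ∩ (Aζ ∩ AΨ) := hadm
  have hνSbarc : ν Sbarᶜ = 0 := by
    rw [prob_compl_eq_zero_iff hSbarmeas]; exact hνSbar
  have hSae : ∀ᵐ x ∂ν, x ∈ Sbar := by
    rw [ae_iff]; exact hνSbarc
  -- Abbreviations
  set g : E → ℝ := fun x => ∫ t, DΨ t x ∂lam with hgdef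
  have hgx : ∀ x, (∫ t, DΨ t x ∂lam) = g x := fun x => by rw [hgdef]
  simp only [hgx] at hZpos hZfin hGibbs
  set Z : ℝ≥0∞ := ∫⁻ x in Sbar, ENNReal.ofReal (Real.exp (-DF x - ζbar x - g x)) ∂ν with hZdef
  have hZne : Z ≠ 0 := hZpos.ne'
  have hZnetop : Z ≠ ⊤ := hZfin.ne
  have hZt : 0 < Z.toReal := ENNReal.toReal_pos hZne hZnetop
  set f : E → ℝ≥0∞ := fun x => Sbar.indicator (fun y =>
      Z⁻¹ * ENNReal.ofReal (Real.exp (-DF y - ζbar y - g y))) x with hfdef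
  -- total mass of the Gibbs density is 1
  have hftot : ∫⁻ x, f x ∂ν = 1 := by
    have h1 : (ν.withDensity f) Set.univ = 1 := by rw [← hGibbs]; exact measure_univ
    rwa [withDensity_apply _ MeasurableSet.univ, Measure.restrict_univ] at h1
  have hofqg : ∀ a : ℝ, ENNReal.ofReal (Z.toReal⁻¹ * Real.exp a)
      = Z⁻¹ * ENNReal.ofReal (Real.exp a) := by
    intro a
    rw [ENNReal.ofReal_mul (inv_nonneg.mpr ENNReal.toReal_nonneg),
      ENNReal.ofReal_inv_of_pos hZt, ENNReal.ofReal_toReal hZnetop]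
  -- basic integrability facts
  have hφint : ∀ μ'' : Pphi E φ, Integrable φ μ''.m := by
    intro μ''
    refine ⟨hφc.aestronglyMeasurable, ?_⟩
    rw [hasFiniteIntegral_iff_ofReal (ae_of_all _ hφ0)]
    exact μ''.finInt
  have h1φint : ∀ μ'' : Pphi E φ, Integrable (fun x => 1 + φ x) μ''.m :=
    fun μ'' => (integrable_const 1).add (hφint μ'')
  have hgmeas : Measurable g := by
    rw [hgdef]
    exact (hDΨmeas.stronglyMeasurable.integral_prod_left).measurable
  have hgbd : ∀ x, |g x| ≤ DΨbd * (lam Set.univ).toReal * (1 + φ x) := by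
    intro x
    have h1 : |g x| = |∫ t, DΨ t x ∂lam| := by rw [hgdef]
    have h2 : |∫ t, DΨ t x ∂lam| ≤ ∫ t, |DΨ t x| ∂lam := by
      have := norm_integral_le_integral_norm (μ := lam) (fun t => DΨ t x)
      simpa [Real.norm_eq_abs] using this
    have h3 : ∫ t, |DΨ t x| ∂lam ≤ ∫ t, DΨbd * (1 + φ x) ∂lam :=
      integral_mono_of_nonneg (ae_of_all _ fun t => abs_nonneg _) (integrable_const _)
        (ae_of_all _ fun t => hDΨbd t x)
    have h4 : ∫ t, DΨbd * (1 + φ x) ∂lam = (lam Set.univ).toReal * (DΨbd * (1 + φ x)) := by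
      rw [integral_const]; simp [smul_eq_mul, measureReal_def]
    calc |g x| ≤ (lam Set.univ).toReal * (DΨbd * (1 + φ x)) := by
          rw [h1]; exact h2.trans (h3.trans_eq h4)
      _ = DΨbd * (lam Set.univ).toReal * (1 + φ x) := by ring
  have hgint : ∀ μ'' : Pphi E φ, Integrable g μ''.m := by
    intro μ''
    refine Integrable.mono' ((h1φint μ'').const_mul (DΨbd * (lam Set.univ).toReal))
      hgmeas.aestronglyMeasurable (ae_of_all _ fun x => ?_)
    rw [Real.norm_eq_abs]
    exact hgbd x
  -- extraction of the entropy data on `D_I`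
  have hDIdata : ∀ μ'' ∈ DI ∩ (Aζ ∩ AΨ), relEnt μ''.m ν < ⊤ ∧ F μ'' < ⊤ := by
    intro μ'' h
    have h1 := h.1
    rw [hDI] at h1
    exact h1
  have hentdata : ∀ μ'' ∈ DI ∩ (Aζ ∩ AΨ), μ''.m ≪ ν ∧
      Integrable (fun x => Real.log ((μ''.m.rnDeriv ν x).toReal)) μ''.m ∧
      relEnt μ''.m ν = ((∫ x, Real.log ((μ''.m.rnDeriv ν x).toReal) ∂μ''.m : ℝ) : EReal) := by
    intro μ'' h
    have h1 := (hDIdata μ'' h).1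
    unfold relEnt at h1 ⊢
    split_ifs at h1 ⊢ with hc
    · exact ⟨hc.1, hc.2, rfl⟩
    · exact absurd h1 (lt_irrefl _)
  -- identification of the Gibbs density against a.e.-measurable versions of ζbar
  have hfqgen : ∀ (μ'' : Pphi E φ), μ''.m ≪ ν → ∀ (z : E → ℝ), (∀ᵐ x ∂μ''.m, ζbar x = z x) →
      ∀ᵐ x ∂ν, μ''.m.rnDeriv ν x ≠ 0 →
        f x = Z⁻¹ * ENNReal.ofReal (Real.exp (-DF x - z x - g x)) := by
    intro μ'' hac z hz_ae
    have hwd : ν.withDensity (μ''.m.rnDeriv ν) = μ''.m :=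
      Measure.withDensity_rnDeriv_eq _ _ hac
    obtain ⟨N₁, hN₁sub, hN₁meas, hN₁null⟩ :=
      exists_measurable_superset_of_null (ae_iff.mp hz_ae)
    have hν0 : ∀ᵐ x ∂ν, x ∈ N₁ → μ''.m.rnDeriv ν x = 0 := by
      have h1 : ∫⁻ x in N₁, μ''.m.rnDeriv ν x ∂ν = 0 := by
        rw [← withDensity_apply _ hN₁meas, hwd]; exact hN₁null
      exact (setLIntegral_eq_zero_iff hN₁meas (Measure.measurable_rnDeriv _ _)).mp h1
    filter_upwards [hν0, hSae] with x hx1 hx2 hρx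
    have hxz : ζbar x = z x := by
      by_contra hne
      exact hρx (hx1 (hN₁sub hne))
    have hfx : f x = Z⁻¹ * ENNReal.ofReal (Real.exp (-DF x - ζbar x - g x)) := by
      simp only [hfdef]
      exact Set.indicator_of_mem hx2 _
    rw [hfx, hxz]
  -- ==== the key lower bound (per measure in the admissible set), with equality case ====
  have main : ∀ μ' ∈ DI ∩ (Aζ ∩ AΨ),
      (0 ≤ (∫ x, Real.log ((μ'.m.rnDeriv ν x).toReal) ∂μ'.m) + Real.log Z.toReal
          + ∫ x, (DF x + g x) ∂μ'.m) ∧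
      ((∫ x, Real.log ((μ'.m.rnDeriv ν x).toReal) ∂μ'.m) + Real.log Z.toReal
          + ∫ x, (DF x + g x) ∂μ'.m = 0 → μ'.m = μbar.m) := by
    intro μ' hμ'
    obtain ⟨hac, hllrint, -⟩ := hentdata μ' hμ'
    obtain ⟨hζint, hζ0⟩ := hζbarorth μ' hμ'
    obtain ⟨z, hzsm, hz_ae⟩ := hζint.1
    have hzmeas : Measurable z := hzsm.measurable
    have hzint : Integrable z μ'.m := hζint.congr hz_ae
    have hz0 : ∫ x, z x ∂μ'.m = 0 := by rw [← integral_congr_ae hz_ae]; exact hζ0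
    have hh0int : Integrable (fun x => DF x + g x) μ'.m := (hDF.2.1 μ' hμ').add (hgint μ')
    have hρmeas : Measurable (μ'.m.rnDeriv ν) := Measure.measurable_rnDeriv _ _
    have hwd : ν.withDensity (μ'.m.rnDeriv ν) = μ'.m := Measure.withDensity_rnDeriv_eq _ _ hac
    have hρpos : ∀ᵐ x ∂μ'.m, 0 < μ'.m.rnDeriv ν x := Measure.rnDeriv_pos hac
    have hρfin : ∀ᵐ x ∂μ'.m, μ'.m.rnDeriv ν x < ⊤ := hac.ae_le (Measure.rnDeriv_lt_top μ'.m ν)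
    obtain ⟨q, hqdef⟩ : ∃ q : E → ℝ,
        q = fun x => Z.toReal⁻¹ * Real.exp (-DF x - z x - g x) := ⟨_, rfl⟩
    have hqx : ∀ x, q x = Z.toReal⁻¹ * Real.exp (-DF x - z x - g x) := fun x => by rw [hqdef]
    have hqpos : ∀ x, 0 < q x := fun x => by
      rw [hqx]; exact mul_pos (inv_pos.mpr hZt) (Real.exp_pos _)
    have hqmeas : Measurable q := by
      rw [hqdef]
      exact (Real.measurable_exp.comp (((hDF.1.neg).sub hzmeas).sub hgmeas)).const_mul _
    have hlogqx : ∀ x, Real.log (q x) = -Real.log Z.toReal - (DF x + g x) - z x := by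
      intro x
      rw [hqx, Real.log_mul (ne_of_gt (inv_pos.mpr hZt)) (Real.exp_ne_zero _),
        Real.log_inv, Real.log_exp]
      ring
    have hfq : ∀ᵐ x ∂ν, μ'.m.rnDeriv ν x ≠ 0 → f x = ENNReal.ofReal (q x) := by
      filter_upwards [hfqgen μ' hac z hz_ae] with x hx hρx
      rw [hx hρx, hqx]
      exact (hofqg _).symm
    obtain ⟨r, hrdef⟩ : ∃ r : E → ℝ,
        r = fun x => q x / (μ'.m.rnDeriv ν x).toReal := ⟨_, rfl⟩
    have hrx : ∀ x, r x = q x / (μ'.m.rnDeriv ν x).toReal := fun x => by rw [hrdef]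
    have hrnonneg : ∀ x, 0 ≤ r x := fun x => by
      rw [hrx]; exact div_nonneg (hqpos x).le ENNReal.toReal_nonneg
    have hrmeas : Measurable r := by
      rw [hrdef]; exact hqmeas.div hρmeas.ennreal_toReal
    have hlintr : ∫⁻ x, ENNReal.ofReal (r x) ∂μ'.m ≤ 1 := by
      have hmeasr : Measurable fun x => ENNReal.ofReal (r x) := hrmeas.ennreal_ofReal
      have h1 : ∫⁻ x, ENNReal.ofReal (r x) ∂μ'.m
          = ∫⁻ x, μ'.m.rnDeriv ν x * ENNReal.ofReal (r x) ∂ν := by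
        conv_lhs => rw [← hwd]
        rw [lintegral_withDensity_eq_lintegral_mul ν hρmeas hmeasr]
        simp only [Pi.mul_apply]
      have h2 : ∀ᵐ x ∂ν, μ'.m.rnDeriv ν x * ENNReal.ofReal (r x) ≤ f x := by
        filter_upwards [hfq, Measure.rnDeriv_lt_top μ'.m ν] with x hx hfin
        by_cases hρx : μ'.m.rnDeriv ν x = 0
        · simp [hρx]
        · have hρt : 0 < (μ'.m.rnDeriv ν x).toReal := ENNReal.toReal_pos hρx hfin.ne
          have h3 : μ'.m.rnDeriv ν x * ENNReal.ofReal (r x)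
              = ENNReal.ofReal ((μ'.m.rnDeriv ν x).toReal * r x) := by
            rw [ENNReal.ofReal_mul ENNReal.toReal_nonneg, ENNReal.ofReal_toReal hfin.ne]
          have h4 : (μ'.m.rnDeriv ν x).toReal * r x = q x := by
            rw [hrx]; field_simp
          rw [hx hρx, h3, h4]
      calc ∫⁻ x, ENNReal.ofReal (r x) ∂μ'.m
          = ∫⁻ x, μ'.m.rnDeriv ν x * ENNReal.ofReal (r x) ∂ν := h1
        _ ≤ ∫⁻ x, f x ∂ν := lintegral_mono_ae h2
        _ = 1 := hftot
    have hrint : Integrable r μ'.m := by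
      refine ⟨hrmeas.aestronglyMeasurable, ?_⟩
      rw [hasFiniteIntegral_iff_ofReal (ae_of_all _ hrnonneg)]
      exact lt_of_le_of_lt hlintr ENNReal.one_lt_top
    have hrle : ∫ x, r x ∂μ'.m ≤ 1 := by
      rw [integral_eq_lintegral_of_nonneg_ae (ae_of_all _ hrnonneg) hrmeas.aestronglyMeasurable]
      calc (∫⁻ x, ENNReal.ofReal (r x) ∂μ'.m).toReal
          ≤ (1 : ℝ≥0∞).toReal := ENNReal.toReal_mono ENNReal.one_ne_top hlintr
        _ = 1 := by simp
    obtain ⟨U, hUdef⟩ : ∃ U : E → ℝ, U = fun x =>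
        Real.log ((μ'.m.rnDeriv ν x).toReal) + Real.log Z.toReal + (DF x + g x) + z x :=
      ⟨_, rfl⟩
    have hUx : ∀ x, U x =
        Real.log ((μ'.m.rnDeriv ν x).toReal) + Real.log Z.toReal + (DF x + g x) + z x :=
      fun x => by rw [hUdef]
    have i0 : Integrable (fun x =>
        Real.log ((μ'.m.rnDeriv ν x).toReal) + Real.log Z.toReal) μ'.m :=
      hllrint.add (integrable_const _)
    have i1 : Integrable (fun x =>
        Real.log ((μ'.m.rnDeriv ν x).toReal) + Real.log Z.toReal + (DF x + g x)) μ'.m :=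
      i0.add hh0int
    have hUint : Integrable U μ'.m := by
      rw [hUdef]
      exact i1.add hzint
    have hUeq : ∫ x, U x ∂μ'.m = (∫ x, Real.log ((μ'.m.rnDeriv ν x).toReal) ∂μ'.m)
        + Real.log Z.toReal + ∫ x, (DF x + g x) ∂μ'.m := by
      rw [hUdef, integral_add i1 hzint, integral_add i0 hh0int,
        integral_add hllrint (integrable_const _), integral_const, hz0]
      simp [measure_univ]
    have hpt : ∀ᵐ x ∂μ'.m, 1 - r x ≤ U x := by
      filter_upwards [hρpos, hρfin] with x h1 h2
      have hρt : 0 < (μ'.m.rnDeriv ν x).toReal := ENNReal.toReal_pos h1.ne' h2.ne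
      have h3 : Real.log (q x / (μ'.m.rnDeriv ν x).toReal)
          ≤ q x / (μ'.m.rnDeriv ν x).toReal - 1 :=
        Real.log_le_sub_one_of_pos (div_pos (hqpos x) hρt)
      have h5 : Real.log (q x) - Real.log ((μ'.m.rnDeriv ν x).toReal)
          ≤ q x / (μ'.m.rnDeriv ν x).toReal - 1 := by
        rw [← Real.log_div (hqpos x).ne' hρt.ne']; exact h3
      have h6 := hlogqx x
      rw [hUx, hrx]
      linarith
    have hKge : 0 ≤ ∫ x, U x ∂μ'.m := by
      have h7 : ∫ x, (1 - r x) ∂μ'.m ≤ ∫ x, U x ∂μ'.m :=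
        integral_mono_ae ((integrable_const 1).sub hrint) hUint hpt
      rw [integral_sub (integrable_const 1) hrint, integral_const] at h7
      simp only [measure_univ, ENNReal.toReal_one, probReal_univ, one_smul, smul_eq_mul] at h7
      linarith
    constructor
    · rw [← hUeq]; exact hKge
    -- equality case
    intro hzero
    have hKzero : ∫ x, U x ∂μ'.m = 0 := by rw [hUeq]; exact hzero
    obtain ⟨V, hVdef⟩ : ∃ V : E → ℝ, V = fun x => U x - (1 - r x) := ⟨_, rfl⟩
    have i2 : Integrable (fun x => 1 - r x) μ'.m := (integrable_const 1).sub hrint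
    have hVint : Integrable V μ'.m := by
      rw [hVdef]; exact hUint.sub i2
    have hVnonneg : 0 ≤ᵐ[μ'.m] V := by
      rw [hVdef]
      filter_upwards [hpt] with x hx
      simpa using sub_nonneg.mpr hx
    have hVeq : ∫ x, V x ∂μ'.m = ∫ x, r x ∂μ'.m - 1 := by
      rw [hVdef, integral_sub hUint i2,
        integral_sub (integrable_const 1) hrint, integral_const, hKzero]
      simp [measure_univ]
    have hV0 : ∫ x, V x ∂μ'.m = 0 :=
      le_antisymm (by rw [hVeq]; linarith) (integral_nonneg_of_ae hVnonneg)
    have hVae := (integral_eq_zero_iff_of_nonneg_ae hVnonneg hVint).mp hV0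
    have haeq : ∀ᵐ x ∂μ'.m, (μ'.m.rnDeriv ν x).toReal = q x := by
      filter_upwards [hVae, hρpos, hρfin] with x hx h1 h2
      have hρt : 0 < (μ'.m.rnDeriv ν x).toReal := ENNReal.toReal_pos h1.ne' h2.ne
      have hx' : U x - (1 - r x) = 0 := by rw [hVdef] at hx; simpa using hx
      rw [hUx, hrx] at hx'
      have h6 := hlogqx x
      have hlt : Real.log ((μ'.m.rnDeriv ν x).toReal / q x)
          = 1 - ((μ'.m.rnDeriv ν x).toReal / q x)⁻¹ := by
        rw [Real.log_div hρt.ne' (hqpos x).ne', inv_div]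
        linarith
      have h8 := log_eq_one_sub_inv (div_pos hρt (hqpos x)) hlt
      exact (div_eq_one_iff_eq (hqpos x).ne').mp h8
    have hbig : ∀ᵐ x ∂μ'.m,
        μ'.m.rnDeriv ν x = ENNReal.ofReal (q x) ∧ μ'.m.rnDeriv ν x ≠ 0 := by
      filter_upwards [haeq, hρpos, hρfin] with x h1 h2 h3
      exact ⟨by rw [← h1, ENNReal.ofReal_toReal h3.ne], h2.ne'⟩
    obtain ⟨N, hNsub, hNmeas, hNnull⟩ := exists_measurable_superset_of_null (ae_iff.mp hbig)
    have hoffN : ∀ x, x ∉ N →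
        μ'.m.rnDeriv ν x = ENNReal.ofReal (q x) ∧ μ'.m.rnDeriv ν x ≠ 0 := by
      intro x hx
      by_contra hcon
      exact hx (hNsub hcon)
    have hkeyA : ∀ A : Set E, MeasurableSet A → μ'.m A = μbar.m (A \ N) := by
      intro A hA
      have e0 : μ'.m A = μ'.m (A \ N) := (measure_diff_null hNnull).symm
      have e1 : μ'.m (A \ N) = ∫⁻ x in A \ N, μ'.m.rnDeriv ν x ∂ν := by
        conv_lhs => rw [← hwd]
        exact withDensity_apply _ (hA.diff hNmeas)
      have e2 : ∫⁻ x in A \ N, μ'.m.rnDeriv ν x ∂ν = ∫⁻ x in A \ N, f x ∂ν := by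
        refine setLIntegral_congr_fun_ae (hA.diff hNmeas) ?_
        filter_upwards [hfq] with x hx hmem
        obtain ⟨h4, h5⟩ := hoffN x hmem.2
        rw [h4]
        exact (hx h5).symm
      have e3 : ∫⁻ x in A \ N, f x ∂ν = μbar.m (A \ N) := by
        rw [hGibbs]
        exact (withDensity_apply _ (hA.diff hNmeas)).symm
      rw [e0, e1, e2, e3]
    have hμbarN : μbar.m N = 0 := by
      have h1 := hkeyA Set.univ MeasurableSet.univ
      rw [measure_univ, ← Set.compl_eq_univ_diff] at h1
      have h2 : μbar.m Nᶜᶜ = 0 := (prob_compl_eq_zero_iff hNmeas.compl).mpr h1.symm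
      rwa [compl_compl] at h2
    refine Measure.ext fun A hA => ?_
    rw [hkeyA A hA, measure_diff_null hμbarN]
  -- ==== exact value of the entropy of μbar ====
  have claimB : ∫ x, Real.log ((μbar.m.rnDeriv ν x).toReal) ∂μbar.m
      = -Real.log Z.toReal - ∫ x, (DF x + g x) ∂μbar.m := by
    obtain ⟨hac, hllrint, -⟩ := hentdata μbar hadm'
    obtain ⟨hζint, hζ0⟩ := hζbarorth μbar hadm'
    obtain ⟨z, hzsm, hz_ae⟩ := hζint.1
    have hzmeas : Measurable z := hzsm.measurable
    have hzint : Integrable z μbar.m := hζint.congr hz_ae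
    have hz0 : ∫ x, z x ∂μbar.m = 0 := by rw [← integral_congr_ae hz_ae]; exact hζ0
    have hh0int : Integrable (fun x => DF x + g x) μbar.m := (hDF.2.1 μbar hadm').add (hgint μbar)
    have hρmeas : Measurable (μbar.m.rnDeriv ν) := Measure.measurable_rnDeriv _ _
    have hwd : ν.withDensity (μbar.m.rnDeriv ν) = μbar.m :=
      Measure.withDensity_rnDeriv_eq _ _ hac
    obtain ⟨q, hqdef⟩ : ∃ q : E → ℝ,
        q = fun x => Z.toReal⁻¹ * Real.exp (-DF x - z x - g x) := ⟨_, rfl⟩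
    have hqx : ∀ x, q x = Z.toReal⁻¹ * Real.exp (-DF x - z x - g x) := fun x => by rw [hqdef]
    have hqpos : ∀ x, 0 < q x := fun x => by
      rw [hqx]; exact mul_pos (inv_pos.mpr hZt) (Real.exp_pos _)
    have hqmeas : Measurable q := by
      rw [hqdef]
      exact (Real.measurable_exp.comp (((hDF.1.neg).sub hzmeas).sub hgmeas)).const_mul _
    have hlogqx : ∀ x, Real.log (q x) = -Real.log Z.toReal - (DF x + g x) - z x := by
      intro x
      rw [hqx, Real.log_mul (ne_of_gt (inv_pos.mpr hZt)) (Real.exp_ne_zero _),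
        Real.log_inv, Real.log_exp]
      ring
    have hfq : ∀ᵐ x ∂ν, μbar.m.rnDeriv ν x ≠ 0 → f x = ENNReal.ofReal (q x) := by
      filter_upwards [hfqgen μbar hac z hz_ae] with x hx hρx
      rw [hx hρx, hqx]
      exact (hofqg _).symm
    obtain ⟨B, hBdef⟩ : ∃ B : Set E, B = {x | μbar.m.rnDeriv ν x ≠ 0} := ⟨_, rfl⟩
    have hBmem : ∀ x, x ∈ B ↔ μbar.m.rnDeriv ν x ≠ 0 := fun x => by rw [hBdef]; exact Iff.rfl
    have hBmeas : MeasurableSet B := by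
      rw [hBdef]
      exact (hρmeas (measurableSet_singleton 0)).compl
    have hDeq : ν.withDensity (B.indicator (μbar.m.rnDeriv ν))
        = ν.withDensity (B.indicator fun x => ENNReal.ofReal (q x)) := by
      refine Measure.ext fun A hA => ?_
      rw [withDensity_apply _ hA, withDensity_apply _ hA,
        setLIntegral_indicator hBmeas, setLIntegral_indicator hBmeas]
      have e1 : ∫⁻ x in B ∩ A, μbar.m.rnDeriv ν x ∂ν = μbar.m (B ∩ A) := by
        conv_rhs => rw [← hwd]
        exact (withDensity_apply _ (hBmeas.inter hA)).symm
      have e2 : μbar.m (B ∩ A) = ∫⁻ x in B ∩ A, f x ∂ν := by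
        rw [hGibbs]
        exact withDensity_apply _ (hBmeas.inter hA)
      have e3 : ∫⁻ x in B ∩ A, f x ∂ν = ∫⁻ x in B ∩ A, ENNReal.ofReal (q x) ∂ν := by
        refine setLIntegral_congr_fun_ae (hBmeas.inter hA) ?_
        filter_upwards [hfq] with x hx hmem
        exact hx ((hBmem x).mp hmem.1)
      rw [e1, e2, e3]
    have h1 := Measure.rnDeriv_withDensity ν (hρmeas.indicator hBmeas)
    have h2 := Measure.rnDeriv_withDensity ν
      ((ENNReal.measurable_ofReal.comp hqmeas).indicator hBmeas)
    rw [hDeq] at h1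
    have haeν : B.indicator (μbar.m.rnDeriv ν) =ᵐ[ν] B.indicator fun x => ENNReal.ofReal (q x) :=
      h1.symm.trans h2
    have haeb : ∀ᵐ x ∂μbar.m, (μbar.m.rnDeriv ν x).toReal = q x := by
      filter_upwards [hac.ae_le haeν, Measure.rnDeriv_pos hac] with x h3 h4
      have hxB : x ∈ B := (hBmem x).mpr h4.ne'
      have h5 : μbar.m.rnDeriv ν x = ENNReal.ofReal (q x) := by
        rwa [Set.indicator_of_mem hxB, Set.indicator_of_mem hxB] at h3
      rw [h5, ENNReal.toReal_ofReal (hqpos x).le]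
    have hlog : ∀ᵐ x ∂μbar.m,
        Real.log ((μbar.m.rnDeriv ν x).toReal)
          = -Real.log Z.toReal - (DF x + g x) - z x := by
      filter_upwards [haeb] with x hx
      rw [hx, hlogqx]
    have j0 : Integrable (fun x => -Real.log Z.toReal - (DF x + g x)) μbar.m :=
      (integrable_const _).sub hh0int
    rw [integral_congr_ae hlog, integral_sub j0 hzint,
      integral_sub (integrable_const _) hh0int, integral_const, hz0]
    simp [measure_univ]
  -- ==== derivative inequalities from convexity ====
  have hFne : ∀ μ'' ∈ DI ∩ (Aζ ∩ AΨ), F μ'' ≠ ⊤ := fun μ'' h => (hDIdata μ'' h).2.ne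
  have hFderiv : ∀ μ' ∈ DI ∩ (Aζ ∩ AΨ),
      (∫ x, DF x ∂μ'.m) - ∫ x, DF x ∂μbar.m ≤ (F μ').toReal - (F μbar).toReal := by
    intro μ' hμ'
    have hconv : ∀ ε ∈ Set.Ioc (0:ℝ) 1,
        (F (μbar.comb μ' ε)).toReal ≤ (1-ε) * (F μbar).toReal + ε * (F μ').toReal := by
      intro ε hε
      have h1 := hFconv μbar μ' ε ⟨hε.1.le, hε.2⟩
      have hb : F μbar = (((F μbar).toReal : ℝ) : EReal) :=
        (EReal.coe_toReal (hFne μbar hadm') (hFbot _)).symm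
      have hm : F μ' = (((F μ').toReal : ℝ) : EReal) :=
        (EReal.coe_toReal (hFne μ' hμ') (hFbot _)).symm
      rw [hb, hm, ← EReal.coe_mul, ← EReal.coe_mul, ← EReal.coe_add] at h1
      have h2 := EReal.toReal_le_toReal h1 (hFbot _) (EReal.coe_ne_top _)
      rwa [EReal.toReal_coe] at h2
    exact deriv_le_of_convex hconv (hDF.2.2.2 μ' hμ')
  have hΨderiv : ∀ t, ∀ μ' ∈ DI ∩ (Aζ ∩ AΨ),
      (∫ x, DΨ t x ∂μ'.m) - ∫ x, DΨ t x ∂μbar.m ≤ Ψ t μ' - Ψ t μbar := by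
    intro t μ' hμ'
    exact deriv_le_of_convex (fun ε hε => hΨconv t μbar μ' ε ⟨hε.1.le, hε.2⟩)
      ((hDΨdiff t).2.2.2 μ' hμ')
  -- ==== Fubini for the Ψ-part ====
  have hprodint : ∀ μ'' : Pphi E φ, Integrable (Function.uncurry DΨ) (lam.prod μ''.m) := by
    intro μ''
    refine ⟨hDΨmeas.aestronglyMeasurable, ?_⟩
    have hb : ∀ p : T × E, (‖Function.uncurry DΨ p‖₊ : ℝ≥0∞)
        ≤ ENNReal.ofReal (DΨbd * (1 + φ p.2)) := by
      intro p
      rw [← enorm_eq_nnnorm, Real.enorm_eq_ofReal_abs]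
      exact ENNReal.ofReal_le_ofReal (hDΨbd p.1 p.2)
    have hmeasb : Measurable fun p : T × E => ENNReal.ofReal (DΨbd * (1 + φ p.2)) :=
      (((hφc.measurable.comp measurable_snd).const_add 1).const_mul DΨbd).ennreal_ofReal
    have hfin : ∫⁻ x, ENNReal.ofReal (DΨbd * (1 + φ x)) ∂μ''.m < ⊤ := by
      have hc : ∀ x, ENNReal.ofReal (DΨbd * (1 + φ x))
          = ENNReal.ofReal DΨbd * ENNReal.ofReal (1 + φ x) := fun x =>
        ENNReal.ofReal_mul hDΨbd0
      have hc2 : ∀ x, ENNReal.ofReal (1 + φ x) = 1 + ENNReal.ofReal (φ x) := by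
        intro x
        rw [ENNReal.ofReal_add zero_le_one (hφ0 x), ENNReal.ofReal_one]
      calc ∫⁻ x, ENNReal.ofReal (DΨbd * (1 + φ x)) ∂μ''.m
          = ENNReal.ofReal DΨbd * ∫⁻ x, (1 + ENNReal.ofReal (φ x)) ∂μ''.m := by
            simp only [hc, hc2]
            rw [lintegral_const_mul' _ _ ENNReal.ofReal_ne_top]
        _ < ⊤ := by
            refine ENNReal.mul_lt_top ENNReal.ofReal_lt_top ?_
            rw [lintegral_add_left measurable_const, lintegral_const, measure_univ, mul_one]
            exact ENNReal.add_lt_top.mpr ⟨ENNReal.one_lt_top, μ''.finInt⟩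
    calc ∫⁻ p, (‖Function.uncurry DΨ p‖₊ : ℝ≥0∞) ∂(lam.prod μ''.m)
        ≤ ∫⁻ p : T × E, ENNReal.ofReal (DΨbd * (1 + φ p.2)) ∂(lam.prod μ''.m) :=
          lintegral_mono hb
      _ = ∫⁻ _ : T, (∫⁻ x, ENNReal.ofReal (DΨbd * (1 + φ x)) ∂μ''.m) ∂lam := by
          rw [lintegral_prod _ hmeasb.aemeasurable]
      _ = lam Set.univ * ∫⁻ x, ENNReal.ofReal (DΨbd * (1 + φ x)) ∂μ''.m := by
          rw [lintegral_const, mul_comm]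
      _ < ⊤ := ENNReal.mul_lt_top (measure_lt_top _ _) hfin
  have hswap : ∀ μ'' : Pphi E φ, ∫ x, g x ∂μ''.m = ∫ t, (∫ x, DΨ t x ∂μ''.m) ∂lam := by
    intro μ''
    rw [hgdef]
    exact (integral_integral_swap (hprodint μ'')).symm
  have hgdiff : ∀ μ' ∈ DI ∩ (Aζ ∩ AΨ), ∫ x, g x ∂μ'.m - ∫ x, g x ∂μbar.m ≤ 0 := by
    intro μ' hμ'
    have k1 : Integrable (fun t => ∫ x, DΨ t x ∂μ'.m) lam := (hprodint μ').integral_prod_left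
    have k2 : Integrable (fun t => ∫ x, DΨ t x ∂μbar.m) lam := (hprodint μbar).integral_prod_left
    rw [hswap μ', hswap μbar, ← integral_sub k1 k2]
    apply integral_nonpos_of_ae
    filter_upwards [hslack] with t ht
    have h1 := hΨderiv t μ' hμ'
    have hμAΨ := hμ'.2.2
    rw [hAΨ] at hμAΨ
    have h2 : Ψ t μ' ≤ 0 := hμAΨ t
    rw [ht] at h1
    simp only [Pi.zero_apply]
    linarith
  -- ==== representation of I as a real number on the admissible set ====
  have hIμ : ∀ μ' ∈ DI ∩ (Aζ ∩ AΨ), I μ' =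
      (((∫ x, Real.log ((μ'.m.rnDeriv ν x).toReal) ∂μ'.m) + (F μ').toReal : ℝ) : EReal) := by
    intro μ' hμ'
    obtain ⟨-, -, hre⟩ := hentdata μ' hμ'
    simp only [hI]
    rw [hre, ← EReal.coe_toReal (hFne μ' hμ') (hFbot _)]
    exact (EReal.coe_add _ _).symm
  -- ==== final assembly ====
  have hfinal : ∀ μ' ∈ DI ∩ (Aζ ∩ AΨ),
      ((∫ x, Real.log ((μbar.m.rnDeriv ν x).toReal) ∂μbar.m) + (F μbar).toReal
        ≤ (∫ x, Real.log ((μ'.m.rnDeriv ν x).toReal) ∂μ'.m) + (F μ').toReal) ∧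
      ((∫ x, Real.log ((μ'.m.rnDeriv ν x).toReal) ∂μ'.m) + (F μ').toReal
        = (∫ x, Real.log ((μbar.m.rnDeriv ν x).toReal) ∂μbar.m) + (F μbar).toReal →
        μ'.m = μbar.m) := by
    intro μ' hμ'
    obtain ⟨hK, hKimp⟩ := main μ' hμ'
    have hsum' : ∫ x, (DF x + g x) ∂μ'.m = ∫ x, DF x ∂μ'.m + ∫ x, g x ∂μ'.m :=
      integral_add (hDF.2.1 μ' hμ') (hgint μ')
    have hsumb : ∫ x, (DF x + g x) ∂μbar.m = ∫ x, DF x ∂μbar.m + ∫ x, g x ∂μbar.m :=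
      integral_add (hDF.2.1 μbar hadm') (hgint μbar)
    have hF := hFderiv μ' hμ'
    have hg := hgdiff μ' hμ'
    rw [hsum'] at hK
    rw [claimB, hsumb]
    constructor
    · linarith
    · intro heq
      apply hKimp
      rw [hsum']
      linarith
  refine ⟨?_, ?_⟩
  · intro μ' hμ'
    rw [hIμ μbar hadm', hIμ μ' hμ']
    exact EReal.coe_le_coe_iff.mpr (hfinal μ' hμ').1
  · intro μ' hμ' heq
    rw [hIμ μ' hμ', hIμ μbar hadm'] at heq
    exact Pphi.ext_of_m ((hfinal μ' hμ').2 (EReal.coe_eq_coe_iff.mp heq))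
end
end

section
/- In the setting of the quantitative stability result for relaxed inequality constraints, if moreover F ≡ 0 (so I(μ) = H(μ|ν)), then the unique minimisers μ̄_0 of H(·|ν) over D_I ∩ A^ζ_{Ψ,0} and μ̄_ε over D_I ∩ A^ζ_{Ψ,ε} satisfy H(μ̄_0 | μ̄_ε) ≤ C_stab ε for all ε ∈ [0,ε*], where C_stab is the constant from the quantitative stability estimate 0 ≤ Ī^ζ_{Ψ,0} − Ī^ζ_{Ψ,ε} ≤ C_stab ε. -/
open MeasureTheory Filter Topology Set
open scoped ENNReal NNReal

noncomputable section

section AuxStmt13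

variable {E : Type*} [MeasurableSpace E]

lemma relEnt_eq_of {μ ν : Measure E} (h1 : μ ≪ ν)
    (h2 : Integrable (fun x => Real.log ((μ.rnDeriv ν x).toReal)) μ) :
    relEnt μ ν = ((∫ x, Real.log ((μ.rnDeriv ν x).toReal) ∂μ : ℝ) : EReal) := by
  rw [relEnt, if_pos ⟨h1, h2⟩]

lemma relEnt_lt_top_elim {μ ν : Measure E} (h : relEnt μ ν < ⊤) :
    μ ≪ ν ∧ Integrable (fun x => Real.log ((μ.rnDeriv ν x).toReal)) μ := by
  by_contra hc
  rw [relEnt, if_neg hc] at h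
  exact absurd h (lt_irrefl _)

lemma Pphi.integrable_phi_s13 {φ : E → ℝ} (hφm : Measurable φ) (hφ0 : ∀ x, 0 ≤ φ x)
    (μ : Pphi E φ) : Integrable φ μ.m := by
  refine ⟨hφm.aestronglyMeasurable, ?_⟩
  rw [hasFiniteIntegral_iff_ofReal (ae_of_all _ hφ0)]
  exact μ.finInt

end AuxStmt13

/-- quantitative stability of the entropic minimisers, case `F ≡ 0`:
in the setting of the quantitative stability result with `F ≡ 0`, the unique minimisers
`μ̄_0` and `μ̄_ε` satisfy `H(μ̄_0|μ̄_ε) ≤ C_stab ε`, for the constant `C_stab` of the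
estimate `0 ≤ Ī^ζ_{Ψ,0} − Ī^ζ_{Ψ,ε} ≤ C_stab ε`. -/
theorem stmt13 {E : Type*} [MetricSpace E] [CompleteSpace E]
    [TopologicalSpace.SeparableSpace E] [MeasurableSpace E] [BorelSpace E]
    (φ : E → ℝ) (hφc : Continuous φ) (hφ0 : ∀ x, 0 ≤ φ x)
    (ν : Measure E) [IsProbabilityMeasure ν]
    (hexp : ∀ α : ℝ, 0 < α → ∫⁻ x, ENNReal.ofReal (Real.exp (α * φ x)) ∂ν < ⊤)
    (S : Type*) (ζ : S → E → ℝ) (hζc : ∀ s, Continuous (ζ s))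
    (Cζ : S → ℝ) (hCζ : ∀ s, 0 ≤ Cζ s) (hζb : ∀ s x, |ζ s x| ≤ Cζ s * (1 + φ x))
    (T : Type*) [MetricSpace T] [CompactSpace T] [MeasurableSpace T] [BorelSpace T]
    (Ψ : T → Pphi E φ → ℝ) (hΨlsc : ∀ t, LowerSemicontinuous (Ψ t))
    (hΨconv : ∀ t, ∀ μ μ' : Pphi E φ, ∀ ε ∈ Icc (0:ℝ) 1,
      Ψ t (μ.comb μ' ε) ≤ (1 - ε) * Ψ t μ + ε * Ψ t μ')
    -- here F ≡ 0, so I = H(·|ν) and D_I = {H(·|ν) < ∞}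
    (DI : Set (Pphi E φ)) (hDI : DI = {μ | relEnt μ.m ν < ⊤})
    (Aζ : Set (Pphi E φ)) (hAζ : Aζ = {μ | ∀ s, (∫ x, ζ s x ∂μ.m) = 0})
    (hΨtmeas : ∀ μ ∈ Aζ, Measurable fun t => Ψ t μ)
    (AΨε : ℝ → Set (Pphi E φ)) (hAΨε : ∀ ε : ℝ, AΨε ε = {μ | ∀ t, Ψ t μ ≤ ε})
    (Ibar : ℝ → EReal) (hIbar : ∀ ε : ℝ, Ibar ε = ⨅ μ ∈ DI ∩ (Aζ ∩ AΨε ε), relEnt μ.m ν)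
    (εstar : ℝ) (hεstar : 0 < εstar)
    -- regularity of the constraints at every admissible point of the ε*-relaxed problem
    (DΨ : T → Pphi E φ → E → ℝ)
    (hΨtcont : ∀ μbar ∈ DI ∩ (Aζ ∩ AΨε εstar), Continuous fun t => Ψ t μbar)
    (hDΨmeas : ∀ t, ∀ μbar ∈ DI ∩ (Aζ ∩ AΨε εstar), Measurable (DΨ t μbar))
    (hDΨint : ∀ t, ∀ μbar ∈ DI ∩ (Aζ ∩ AΨε εstar), ∀ μ' : Pphi E φ,
      Integrable (DΨ t μbar) μ'.m)
    (hDΨnorm : ∀ t, ∀ μbar ∈ DI ∩ (Aζ ∩ AΨε εstar), (∫ x, DΨ t μbar x ∂μbar.m) = 0)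
    (hΨdiff : ∀ μbar ∈ DI ∩ (Aζ ∩ AΨε εstar), ∀ μ' : Pphi E φ, ∀ δ > (0:ℝ),
      ∀ᶠ ε in 𝓝[>] (0:ℝ), ∀ t,
      |ε⁻¹ * (Ψ t (μbar.comb μ' ε) - Ψ t μbar) -
        ((∫ x, DΨ t μbar x ∂μ'.m) - ∫ x, DΨ t μbar x ∂μbar.m)| < δ)
    (hDΨtcont : ∀ μbar ∈ DI ∩ (Aζ ∩ AΨε εstar), ∀ x : E,
      Continuous fun t => DΨ t μbar x)
    (hDΨbd : ∀ μbar ∈ DI ∩ (Aζ ∩ AΨε εstar), ∃ D : ℝ, 0 ≤ D ∧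
      ∀ t x, |DΨ t μbar x| ≤ D * (1 + φ x))
    -- qualification
    (μtilde : Pphi E φ) (hμtilde : μtilde ∈ DI ∩ Aζ) (hμtneg : ∀ t, Ψ t μtilde < 0)
    -- the family of unique minimisers and the Gibbs data
    (μbar : ℝ → Pphi E φ) (ζbar : ℝ → E → ℝ) (lam : ℝ → Measure T) (Sbar : ℝ → Set E)
    (hminim : ∀ ε ∈ Icc (0:ℝ) εstar,
      μbar ε ∈ DI ∩ (Aζ ∩ AΨε ε) ∧
      (∀ μ ∈ DI ∩ (Aζ ∩ AΨε ε), relEnt (μbar ε).m ν ≤ relEnt μ.m ν) ∧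
      (∀ μ ∈ DI ∩ (Aζ ∩ AΨε ε), relEnt μ.m ν = relEnt (μbar ε).m ν → μ = μbar ε))
    (hGibbsData : ∀ ε ∈ Icc (0:ℝ) εstar,
      IsFiniteMeasure (lam ε) ∧ MeasurableSet (Sbar ε) ∧ (μbar ε).m (Sbar ε) = 1 ∧
      Integrable (ζbar ε) (μbar ε).m ∧
      (μbar ε).m = ν.withDensity (fun x => (Sbar ε).indicator (fun y =>
        (∫⁻ x' in Sbar ε, ENNReal.ofReal (Real.exp (- ζbar ε x' -
          ∫ t, DΨ t (μbar ε) x' ∂(lam ε))) ∂ν)⁻¹ *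
        ENNReal.ofReal (Real.exp (- ζbar ε y -
          ∫ t, DΨ t (μbar ε) y ∂(lam ε)))) x) ∧
      (∀ᵐ t ∂(lam ε), Ψ t (μbar ε) = ε) ∧
      -- the Gibbs-form support and orthogonality conditions
      ν (Sbar ε) = 1 ∧ (∀ μ ∈ Aζ, Integrable (ζbar ε) μ.m ∧ (∫ x, ζbar ε x ∂μ.m) = 0)) :
    -- conclusion: for any constant C_stab realising the stability estimate,
    -- `H(μ̄_0 | μ̄_ε) ≤ C_stab ε`.
    ∀ Cstab : ℝ, 0 ≤ Cstab →
      (∀ ε ∈ Icc (0:ℝ) εstar,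
        (0 : EReal) ≤ Ibar 0 - Ibar ε ∧ Ibar 0 - Ibar ε ≤ ((Cstab * ε : ℝ) : EReal)) →
      ∀ ε ∈ Icc (0:ℝ) εstar,
        relEnt (μbar 0).m (μbar ε).m ≤ ((Cstab * ε : ℝ) : EReal) := by
  intro Cstab hC hstab ε hε
  have hε0 : 0 ≤ ε := hε.1
  have hεs : ε ≤ εstar := hε.2
  have h0Icc : (0:ℝ) ∈ Icc (0:ℝ) εstar := ⟨le_refl 0, hεstar.le⟩
  obtain ⟨h0mem, h0min, -⟩ := hminim 0 h0Icc
  obtain ⟨hεmem, hεmin, -⟩ := hminim ε hε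
  obtain ⟨hlamfin, hSmeas, hμεS, hζintε, hdens, hΨae, hνS, hζAζ⟩ := hGibbsData ε hε
  haveI : IsFiniteMeasure (lam ε) := hlamfin
  have h0Aζ : μbar 0 ∈ Aζ := h0mem.2.1
  have hεAζ : μbar ε ∈ Aζ := hεmem.2.1
  have hΨ0le : ∀ t, Ψ t (μbar 0) ≤ 0 := by
    have h := h0mem.2.2; rw [hAΨε 0] at h; exact h
  have hΨεle : ∀ t, Ψ t (μbar ε) ≤ ε := by
    have h := hεmem.2.2; rw [hAΨε ε] at h; exact h
  have hstarε : μbar ε ∈ DI ∩ (Aζ ∩ AΨε εstar) :=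
    ⟨hεmem.1, hεAζ, by rw [hAΨε εstar]; exact fun t => (hΨεle t).trans hεs⟩
  -- derivative data at `μbar ε`
  obtain ⟨D, hD0, hDb⟩ := hDΨbd (μbar ε) hstarε
  have hFmeas : Measurable (Function.uncurry fun t x => DΨ t (μbar ε) x) :=
    measurable_uncurry_of_continuous_of_measurable
      (fun x => hDΨtcont (μbar ε) hstarε x) (fun t => hDΨmeas t (μbar ε) hstarε)
  have hφint : ∀ μ : Pphi E φ, Integrable φ μ.m :=
    Pphi.integrable_phi_s13 hφc.measurable hφ0
  have hFint : ∀ μ : Pphi E φ,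
      Integrable (Function.uncurry fun t x => DΨ t (μbar ε) x) ((lam ε).prod μ.m) := by
    intro μ
    have h1 : Integrable (fun x => D * (1 + φ x)) μ.m :=
      (((integrable_const (1:ℝ)).add (hφint μ)).const_mul D)
    have hb : Integrable (fun z : T × E => (1:ℝ) * (D * (1 + φ z.2)))
        ((lam ε).prod μ.m) := (integrable_const (1:ℝ)).mul_prod h1
    have hb' : Integrable (fun z : T × E => D * (1 + φ z.2)) ((lam ε).prod μ.m) := by
      simpa using hb
    refine hb'.mono' hFmeas.aestronglyMeasurable (Eventually.of_forall fun p => ?_)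
    have := hDb p.1 p.2
    simpa [Function.uncurry, Real.norm_eq_abs] using this
  have hswap : ∀ μ : Pphi E φ,
      ∫ x, (∫ t, DΨ t (μbar ε) x ∂(lam ε)) ∂μ.m
        = ∫ t, (∫ x, DΨ t (μbar ε) x ∂μ.m) ∂(lam ε) :=
    fun μ => (integral_integral_swap (f := fun t x => DΨ t (μbar ε) x) (hFint μ)).symm
  have hgint : ∀ μ : Pphi E φ,
      Integrable (fun x => ∫ t, DΨ t (μbar ε) x ∂(lam ε)) μ.m :=
    fun μ => (hFint μ).integral_prod_right
  have hgε0 : ∫ x, (∫ t, DΨ t (μbar ε) x ∂(lam ε)) ∂(μbar ε).m = 0 := by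
    rw [hswap (μbar ε)]
    have h1 : ∀ t, ∫ x, DΨ t (μbar ε) x ∂(μbar ε).m = 0 :=
      fun t => hDΨnorm t (μbar ε) hstarε
    simp [h1]
  -- key inequality from convexity and differentiability
  have hkey : ∀ t, Ψ t (μbar ε) = ε → ∫ x, DΨ t (μbar ε) x ∂(μbar 0).m ≤ 0 := by
    intro t hΨt
    have hle : ∫ x, DΨ t (μbar ε) x ∂(μbar 0).m ≤ Ψ t (μbar 0) - Ψ t (μbar ε) := by
      by_contra hgt
      push_neg at hgt
      have hδ : 0 < ∫ x, DΨ t (μbar ε) x ∂(μbar 0).m - (Ψ t (μbar 0) - Ψ t (μbar ε)) := by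
        linarith
      have hev := hΨdiff (μbar ε) hstarε (μbar 0) _ hδ
      have hev2 : ∀ᶠ x in 𝓝[>] (0:ℝ), x ∈ Ioc (0:ℝ) 1 := Ioc_mem_nhdsGT one_pos
      obtain ⟨e, he1, he2⟩ := (hev.and hev2).exists
      have h3 := he1 t
      rw [hDΨnorm t (μbar ε) hstarε] at h3
      have h4 := hΨconv t (μbar ε) (μbar 0) e ⟨he2.1.le, he2.2⟩
      have h5 : e⁻¹ * (Ψ t ((μbar ε).comb (μbar 0) e) - Ψ t (μbar ε))
          ≤ Ψ t (μbar 0) - Ψ t (μbar ε) := by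
        rw [inv_mul_le_iff₀ he2.1]
        nlinarith
      rw [abs_lt] at h3
      linarith [h3.1]
    rw [hΨt] at hle
    linarith [hΨ0le t]
  have hg0le : ∫ x, (∫ t, DΨ t (μbar ε) x ∂(lam ε)) ∂(μbar 0).m ≤ 0 := by
    rw [hswap (μbar 0)]
    apply integral_nonpos_of_ae
    filter_upwards [hΨae] with t ht using hkey t ht
  -- entropy data of `μbar 0` w.r.t. `ν`
  have h0DI : relEnt (μbar 0).m ν < ⊤ := by
    have h := h0mem.1; rwa [hDI, mem_setOf_eq] at h
  obtain ⟨hac0, hint0⟩ := relEnt_lt_top_elim h0DI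
  -- normalisation constant
  set Zε : ℝ≥0∞ := ∫⁻ x' in Sbar ε, ENNReal.ofReal (Real.exp (- ζbar ε x' -
      ∫ t, DΨ t (μbar ε) x' ∂(lam ε))) ∂ν with hZdef
  have hνScompl : ν (Sbar ε)ᶜ = 0 := by
    rw [measure_compl hSmeas (measure_ne_top ν _), hνS, measure_univ]
    simp
  have hμε_ac : (μbar ε).m ≪ ν := by
    rw [hdens]; exact withDensity_absolutelyContinuous ν _
  have hZ_ne_top : Zε ≠ ⊤ := by
    intro htop
    have h0 : (fun x => (Sbar ε).indicator (fun y => Zε⁻¹ *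
        ENNReal.ofReal (Real.exp (- ζbar ε y - ∫ t, DΨ t (μbar ε) y ∂(lam ε)))) x)
        = fun _ => (0:ℝ≥0∞) := by
      funext y
      simp [Set.indicator_apply, htop]
    have h1 := hdens
    rw [h0] at h1
    have h2 : (μbar ε).m univ = 1 := measure_univ
    rw [h1] at h2
    simp at h2
  have hZ_ne_zero : Zε ≠ 0 := by
    intro h0
    have hge : ∀ x, (Sbar ε).indicator (fun _ => (⊤:ℝ≥0∞)) x ≤
        (Sbar ε).indicator (fun y => Zε⁻¹ *
          ENNReal.ofReal (Real.exp (- ζbar ε y - ∫ t, DΨ t (μbar ε) y ∂(lam ε)))) x := by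
      intro x
      by_cases hx : x ∈ Sbar ε
      · rw [Set.indicator_of_mem hx, Set.indicator_of_mem hx, h0, ENNReal.inv_zero,
          ENNReal.top_mul ((ENNReal.ofReal_pos.mpr (Real.exp_pos _)).ne')]
      · simp [hx]
    have h1 : (1:ℝ≥0∞) = (μbar ε).m univ := measure_univ.symm
    rw [hdens, withDensity_apply _ MeasurableSet.univ, Measure.restrict_univ] at h1
    have h2 : ∫⁻ x, (Sbar ε).indicator (fun _ => (⊤:ℝ≥0∞)) x ∂ν ≤ (1:ℝ≥0∞) := by
      rw [h1]; exact lintegral_mono hge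
    rw [lintegral_indicator hSmeas, setLIntegral_const, hνS, mul_one] at h2
    simp at h2
  have hZtR : 0 < Zε.toReal := ENNReal.toReal_pos hZ_ne_zero hZ_ne_top
  -- measurable modification of `ζbar ε`
  have hζms : AEStronglyMeasurable (ζbar ε) ((μbar 0).m + (μbar ε).m) :=
    ((hζAζ (μbar 0) h0Aζ).1.aestronglyMeasurable).add_measure
      ((hζAζ (μbar ε) hεAζ).1.aestronglyMeasurable)
  obtain ⟨N, hNsub, hNmeas, hNnull⟩ :=
    exists_measurable_superset_of_null (ae_iff.mp hζms.ae_eq_mk)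
  have hN0 : (μbar 0).m N = 0 := by
    rw [Measure.add_apply] at hNnull
    exact (add_eq_zero.mp hNnull).1
  have hNε0 : (μbar ε).m N = 0 := by
    rw [Measure.add_apply] at hNnull
    exact (add_eq_zero.mp hNnull).2
  have hζeqN : ∀ x, x ∉ N → ζbar ε x = hζms.mk (ζbar ε) x := by
    intro x hx
    by_contra hne
    exact hx (hNsub hne)
  set A : Set E := Sbar ε \ N with hAdef
  have hAmeas : MeasurableSet A := hSmeas.diff hNmeas
  have hgsm : StronglyMeasurable (fun x => ∫ t, DΨ t (μbar ε) x ∂(lam ε)) :=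
    hFmeas.stronglyMeasurable.integral_prod_left'
  set fp : E → ℝ≥0∞ := fun y => Zε⁻¹ *
      ENNReal.ofReal (Real.exp (- hζms.mk (ζbar ε) y - ∫ t, DΨ t (μbar ε) y ∂(lam ε)))
    with hfpdef
  have hfpm : Measurable fp := by
    apply Measurable.const_mul
    exact (Real.measurable_exp.comp
      ((hζms.stronglyMeasurable_mk.measurable.neg).sub hgsm.measurable)).ennreal_ofReal
  have hfp_ne_zero : ∀ y, fp y ≠ 0 := fun y =>
    mul_ne_zero (ENNReal.inv_ne_zero.mpr hZ_ne_top)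
      (ENNReal.ofReal_pos.mpr (Real.exp_pos _)).ne'
  have hfp_ne_top : ∀ y, fp y ≠ ⊤ := fun y =>
    ENNReal.mul_ne_top (ENNReal.inv_ne_top.mpr hZ_ne_zero) ENNReal.ofReal_ne_top
  -- rewriting the Gibbs measure with a measurable density
  have hμεm_eq : (μbar ε).m = ν.withDensity (A.indicator fp) := by
    ext s hs
    rw [hdens, withDensity_apply _ hs, withDensity_apply _ hs]
    have hsplit : ν.restrict s = ν.restrict (s ∩ N) + ν.restrict (s \ N) := by
      rw [← Measure.restrict_union (Set.disjoint_of_subset_left inter_subset_right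
        disjoint_sdiff_right) (hs.diff hNmeas), Set.inter_union_diff]
    rw [hsplit, lintegral_add_measure, lintegral_add_measure]
    congr 1
    · have hz1 : ∫⁻ x in s ∩ N, (fun x => (Sbar ε).indicator (fun y => Zε⁻¹ *
          ENNReal.ofReal (Real.exp (- ζbar ε y - ∫ t, DΨ t (μbar ε) y ∂(lam ε)))) x) x ∂ν
          = 0 := by
        have hN : ∫⁻ x in N, (fun x => (Sbar ε).indicator (fun y => Zε⁻¹ *
            ENNReal.ofReal (Real.exp (- ζbar ε y - ∫ t, DΨ t (μbar ε) y ∂(lam ε)))) x) x ∂ν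
            = 0 := by
          rw [← withDensity_apply _ hNmeas, ← hdens]
          exact hNε0
        exact le_antisymm ((lintegral_mono_set inter_subset_right).trans hN.le) zero_le
      have hz2 : ∫⁻ x in s ∩ N, A.indicator fp x ∂ν = 0 := by
        have hae : ∀ᵐ x ∂ν.restrict (s ∩ N), A.indicator fp x = 0 := by
          rw [ae_restrict_iff' (hs.inter hNmeas)]
          exact ae_of_all _ fun x hx =>
            Set.indicator_of_notMem (fun hA => hA.2 hx.2) fp
        rw [lintegral_congr_ae hae, lintegral_zero]
      rw [hz1, hz2]
    · apply lintegral_congr_ae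
      refine (ae_restrict_iff' (hs.diff hNmeas)).mpr (ae_of_all _ fun x hx => ?_)
      have hxN : x ∉ N := hx.2
      by_cases hxS : x ∈ Sbar ε
      · have hxA : x ∈ A := ⟨hxS, hxN⟩
        simp only [Set.indicator_of_mem hxS, Set.indicator_of_mem hxA, hfpdef,
          hζeqN x hxN]
      · have hxA : x ∉ A := fun hA => hxS hA.1
        simp only [Set.indicator_of_notMem hxS, Set.indicator_of_notMem hxA]
  have hμεm_eq' : (μbar ε).m = (ν.restrict A).withDensity fp := by
    rw [hμεm_eq, withDensity_indicator hAmeas]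
  -- null sets
  have hμ0S : (μbar 0).m (Sbar ε)ᶜ = 0 := hac0 hνScompl
  have hμ0Ac : (μbar 0).m Aᶜ = 0 := by
    have hsub : Aᶜ ⊆ (Sbar ε)ᶜ ∪ N := by
      intro x hx
      by_cases hxS : x ∈ Sbar ε
      · right
        by_contra hxN
        exact hx ⟨hxS, hxN⟩
      · left; exact hxS
    exact measure_mono_null hsub (measure_union_null hμ0S hN0)
  have hμεAc : (μbar ε).m Aᶜ = 0 := by
    have hsub : Aᶜ ⊆ (Sbar ε)ᶜ ∪ N := by
      intro x hx
      by_cases hxS : x ∈ Sbar ε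
      · right
        by_contra hxN
        exact hx ⟨hxS, hxN⟩
      · left; exact hxS
    exact measure_mono_null hsub (measure_union_null (hμε_ac hνScompl) hNε0)
  -- absolute continuity
  have hν'_ac_με : ν.restrict A ≪ (μbar ε).m := by
    rw [hμεm_eq']
    exact withDensity_absolutelyContinuous' hfpm.aemeasurable (ae_of_all _ hfp_ne_zero)
  have hμ0_ac_ν' : (μbar 0).m ≪ ν.restrict A := by
    refine Measure.AbsolutelyContinuous.mk fun s hs hs0 => ?_
    rw [Measure.restrict_apply hs] at hs0
    have h1 : (μbar 0).m (s ∩ A) = 0 := hac0 hs0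
    have h2 : s ⊆ (s ∩ A) ∪ Aᶜ := by
      intro x hx
      by_cases hxA : x ∈ A
      exacts [Or.inl ⟨hx, hxA⟩, Or.inr hxA]
    exact measure_mono_null h2 (measure_union_null h1 hμ0Ac)
  have hμ0_ac_με : (μbar 0).m ≪ (μbar ε).m := hμ0_ac_ν'.trans hν'_ac_με
  -- identification of the Radon–Nikodym derivatives
  have hrn_με_ν : (μbar ε).m.rnDeriv ν =ᵐ[ν] A.indicator fp := by
    have h := Measure.rnDeriv_withDensity ν (hfpm.indicator hAmeas)
    rw [← hμεm_eq] at h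
    exact h
  have hrn1 : (μbar 0).m.rnDeriv (μbar ε).m =ᵐ[(μbar 0).m]
      fun x => (fp x)⁻¹ * (μbar 0).m.rnDeriv (ν.restrict A) x := by
    have h := Measure.rnDeriv_withDensity_right_of_absolutelyContinuous hμ0_ac_ν'
      hfpm.aemeasurable (ae_of_all _ hfp_ne_zero) (ae_of_all _ hfp_ne_top)
    rw [← hμεm_eq'] at h
    exact hμ0_ac_ν'.ae_eq h
  have hrn2 : (μbar 0).m.rnDeriv (ν.restrict A) =ᵐ[(μbar 0).m] (μbar 0).m.rnDeriv ν := by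
    have e1 : ν.withDensity (A.indicator ((μbar 0).m.rnDeriv (ν.restrict A)))
        = (μbar 0).m := by
      rw [withDensity_indicator hAmeas, Measure.withDensity_rnDeriv_eq _ _ hμ0_ac_ν']
    have e2 := Measure.rnDeriv_withDensity ν
      ((Measure.measurable_rnDeriv (μbar 0).m (ν.restrict A)).indicator hAmeas)
    rw [e1] at e2
    have e3 := hac0.ae_eq e2
    have e4 : ∀ᵐ x ∂(μbar 0).m, x ∈ A := by
      rw [ae_iff]
      exact hμ0Ac
    filter_upwards [e3, e4] with x hx1 hx2
    rw [hx1, Set.indicator_of_mem hx2]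
  have hrn3 : (μbar 0).m.rnDeriv (μbar ε).m =ᵐ[(μbar 0).m]
      fun x => (fp x)⁻¹ * (μbar 0).m.rnDeriv ν x := by
    filter_upwards [hrn1, hrn2] with x h1 h2
    rw [h1, h2]
  have hpos0 : ∀ᵐ x ∂(μbar 0).m, 0 < (μbar 0).m.rnDeriv ν x := Measure.rnDeriv_pos hac0
  have hlt0 : ∀ᵐ x ∂(μbar 0).m, (μbar 0).m.rnDeriv ν x < ⊤ :=
    hac0.ae_le (Measure.rnDeriv_lt_top _ _)
  have hζ0 : ζbar ε =ᵐ[(μbar 0).m] hζms.mk (ζbar ε) :=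
    hζms.ae_eq_mk.filter_mono (ae_mono (Measure.le_add_right (le_refl _)))
  have hζε : ζbar ε =ᵐ[(μbar ε).m] hζms.mk (ζbar ε) :=
    hζms.ae_eq_mk.filter_mono (ae_mono (Measure.le_add_left (le_refl _)))
  -- the pointwise logarithmic identity for `H(μ̄₀ | μ̄_ε)`
  have hlog0 : (fun x => Real.log (((μbar 0).m.rnDeriv (μbar ε).m x).toReal))
      =ᵐ[(μbar 0).m] fun x => ((Real.log Zε.toReal + ζbar ε x)
        + ∫ t, DΨ t (μbar ε) x ∂(lam ε))
        + Real.log (((μbar 0).m.rnDeriv ν x).toReal) := by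
    filter_upwards [hrn3, hpos0, hlt0, hζ0] with x h1 h2 h3 h4
    rw [h1]
    have hfpinv : ((fp x)⁻¹).toReal
        = Zε.toReal * Real.exp (hζms.mk (ζbar ε) x + ∫ t, DΨ t (μbar ε) x ∂(lam ε)) := by
      rw [hfpdef]
      rw [ENNReal.mul_inv (Or.inl (ENNReal.inv_ne_zero.mpr hZ_ne_top))
        (Or.inl (ENNReal.inv_ne_top.mpr hZ_ne_zero)), inv_inv, ENNReal.toReal_mul,
        ENNReal.toReal_inv, ENNReal.toReal_ofReal (Real.exp_pos _).le, ← Real.exp_neg]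
      congr 2
      ring
    rw [ENNReal.toReal_mul, hfpinv,
      Real.log_mul (by positivity) (ENNReal.toReal_pos h2.ne' h3.ne).ne',
      Real.log_mul hZtR.ne' (Real.exp_ne_zero _), Real.log_exp, h4]
    ring
  -- integrability facts
  have hζ0int : Integrable (ζbar ε) (μbar 0).m := (hζAζ (μbar 0) h0Aζ).1
  have hζ0zero : ∫ x, ζbar ε x ∂(μbar 0).m = 0 := (hζAζ (μbar 0) h0Aζ).2
  have hg0int : Integrable (fun x => ∫ t, DΨ t (μbar ε) x ∂(lam ε)) (μbar 0).m :=
    hgint (μbar 0)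
  have hrhs0int : Integrable (fun x => ((Real.log Zε.toReal + ζbar ε x)
      + ∫ t, DΨ t (μbar ε) x ∂(lam ε))
      + Real.log (((μbar 0).m.rnDeriv ν x).toReal)) (μbar 0).m :=
    (((integrable_const _).add hζ0int).add hg0int).add hint0
  have hlog0int : Integrable
      (fun x => Real.log (((μbar 0).m.rnDeriv (μbar ε).m x).toReal)) (μbar 0).m :=
    (integrable_congr hlog0).mpr hrhs0int
  have hrelEnt0ε : relEnt (μbar 0).m (μbar ε).m
      = (((Real.log Zε.toReal + ∫ x, (∫ t, DΨ t (μbar ε) x ∂(lam ε)) ∂(μbar 0).m)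
        + ∫ x, Real.log (((μbar 0).m.rnDeriv ν x).toReal) ∂(μbar 0).m : ℝ) : EReal) := by
    rw [relEnt_eq_of hμ0_ac_με hlog0int]
    congr 1
    have i1 : Integrable (fun x => Real.log Zε.toReal + ζbar ε x) (μbar 0).m :=
      (integrable_const _).add hζ0int
    have i2 : Integrable (fun x => (Real.log Zε.toReal + ζbar ε x)
        + ∫ t, DΨ t (μbar ε) x ∂(lam ε)) (μbar 0).m := i1.add hg0int
    rw [integral_congr_ae hlog0, integral_add i2 hint0, integral_add i1 hg0int,
      integral_add (integrable_const _) hζ0int, integral_const, hζ0zero]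
    simp [measure_univ]
  -- the value of `H(μ̄_ε | ν)`
  have hμεA_ae : ∀ᵐ x ∂(μbar ε).m, x ∈ A := by
    rw [ae_iff]
    exact hμεAc
  have hlogε : (fun x => Real.log (((μbar ε).m.rnDeriv ν x).toReal))
      =ᵐ[(μbar ε).m] fun x => ((- Real.log Zε.toReal) - ζbar ε x)
        - ∫ t, DΨ t (μbar ε) x ∂(lam ε) := by
    filter_upwards [hμε_ac.ae_eq hrn_με_ν, hμεA_ae, hζε] with x h1 h2 h3
    rw [h1, Set.indicator_of_mem h2, hfpdef]
    rw [ENNReal.toReal_mul, ENNReal.toReal_inv, ENNReal.toReal_ofReal (Real.exp_pos _).le,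
      Real.log_mul (inv_ne_zero hZtR.ne') (Real.exp_ne_zero _), Real.log_inv, Real.log_exp,
      ← h3]
    ring
  have hζεint : Integrable (ζbar ε) (μbar ε).m := (hζAζ (μbar ε) hεAζ).1
  have hζεzero : ∫ x, ζbar ε x ∂(μbar ε).m = 0 := (hζAζ (μbar ε) hεAζ).2
  have hgεint : Integrable (fun x => ∫ t, DΨ t (μbar ε) x ∂(lam ε)) (μbar ε).m :=
    hgint (μbar ε)
  have hrhsεint : Integrable (fun x => ((- Real.log Zε.toReal) - ζbar ε x)
      - ∫ t, DΨ t (μbar ε) x ∂(lam ε)) (μbar ε).m :=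
    ((integrable_const _).sub hζεint).sub hgεint
  have hlogεint : Integrable
      (fun x => Real.log (((μbar ε).m.rnDeriv ν x).toReal)) (μbar ε).m :=
    (integrable_congr hlogε).mpr hrhsεint
  have hrelEntε : relEnt (μbar ε).m ν = ((- Real.log Zε.toReal : ℝ) : EReal) := by
    rw [relEnt_eq_of hμε_ac hlogεint]
    congr 1
    have j1 : Integrable (fun x => - Real.log Zε.toReal - ζbar ε x) (μbar ε).m :=
      (integrable_const _).sub hζεint
    rw [integral_congr_ae hlogε, integral_sub j1 hgεint,
      integral_sub (integrable_const _) hζεint, integral_const, hζεzero, hgε0]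
    simp [measure_univ]
  -- identification of the infima
  have hrel0eq : relEnt (μbar 0).m ν
      = ((∫ x, Real.log (((μbar 0).m.rnDeriv ν x).toReal) ∂(μbar 0).m : ℝ) : EReal) :=
    relEnt_eq_of hac0 hint0
  have hIbar0 : Ibar 0 = relEnt (μbar 0).m ν := by
    rw [hIbar 0]
    exact le_antisymm (iInf₂_le (μbar 0) h0mem) (le_iInf₂ fun μ hμ => h0min μ hμ)
  have hIbarε : Ibar ε = relEnt (μbar ε).m ν := by
    rw [hIbar ε]
    exact le_antisymm (iInf₂_le (μbar ε) hεmem) (le_iInf₂ fun μ hμ => hεmin μ hμ)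
  have hsub := (hstab ε hε).2
  rw [hIbar0, hIbarε, hrel0eq, hrelEntε, ← EReal.coe_sub] at hsub
  have hsubR : (∫ x, Real.log (((μbar 0).m.rnDeriv ν x).toReal) ∂(μbar 0).m)
      - (- Real.log Zε.toReal) ≤ Cstab * ε := EReal.coe_le_coe_iff.mp hsub
  rw [hrelEnt0ε]
  exact EReal.coe_le_coe_iff.mpr (by linarith [hg0le, hsubR])
end
end
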